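/- arXiv:1502.07557 — 6 statements merged into one kernel-verified Lean document; each statement's English description precedes it below -/
import Mathlib

section
/- For all real scalar sequences (a_i) and (b_i) with only finitely many nonzero terms, one has (1/2)·∑_i |a_i| + (1/8)·‖∑_i b_i h_i‖_{L1} ≤ ‖∑_i a_i (2·1_{(π(i)−1,π(i))} + |h_i|) + ∑_i b_i h_i‖_{L1} ≤ 3·∑_i |a_i| + ‖∑_i b_i h_i‖_{L1}. -/
open MeasureTheory Filter Topology

/-- Index set for the Haar system: triples `(j, n, i)` with `1 ≤ i ≤ 2 ^ n`;
`j` (0-based) labels the interval `(j, j+1)`. -/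
def HaarIdx : Type := {x : ℕ × ℕ × ℕ // 1 ≤ x.2.2 ∧ x.2.2 ≤ 2 ^ x.2.1}

/-- The mean zero `L₁`-normalized Haar function `h_{n,i}` on the interval `(j, j+1)`. -/
noncomputable def haarFun (j n i : ℕ) : ℝ → ℝ := fun t =>
  if (j : ℝ) + (2 * i - 2) / 2 ^ (n + 1) < t ∧ t < (j : ℝ) + (2 * i - 1) / 2 ^ (n + 1) then
    2 ^ n
  else if (j : ℝ) + (2 * i - 1) / 2 ^ (n + 1) < t ∧ t < (j : ℝ) + (2 * i) / 2 ^ (n + 1) then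
    -(2 ^ n)
  else 0

/-- An enumeration of the whole Haar system given by a bijection `e : ℕ ≃ HaarIdx`. -/
noncomputable def haarSeq (e : ℕ ≃ HaarIdx) (k : ℕ) : ℝ → ℝ :=
  haarFun (e k).1.1 (e k).1.2.1 (e k).1.2.2

section aux
open Set

noncomputable def χ (c d : ℝ) : ℝ → ℝ := (Set.Ioo c d).indicator 1

lemma χ_apply (c d t : ℝ) : χ c d t = if c < t ∧ t < d then 1 else 0 := by
  simp [χ, Set.indicator_apply, Set.mem_Ioo]

lemma χ_nonneg (c d t : ℝ) : 0 ≤ χ c d t := by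
  rw [χ_apply]; split_ifs <;> norm_num

lemma χ_le_one (c d t : ℝ) : χ c d t ≤ 1 := by
  rw [χ_apply]; split_ifs <;> norm_num

lemma χ_meas (c d : ℝ) : Measurable (χ c d) :=
  measurable_const.indicator measurableSet_Ioo

lemma χ_integrable (c d : ℝ) : IntegrableOn (χ c d) (Set.Ioi 0) := by
  refine (Integrable.integrableOn ?_)
  rw [χ]
  exact (integrable_indicator_iff measurableSet_Ioo).2
    (integrableOn_const measure_Ioo_lt_top.ne)

lemma χ_int (c d : ℝ) (h0 : 0 ≤ c) (hcd : c ≤ d) :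
    ∫ t in Set.Ioi (0:ℝ), χ c d t = d - c := by
  rw [χ, integral_indicator measurableSet_Ioo]
  rw [Measure.restrict_restrict measurableSet_Ioo]
  have hss : Set.Ioo c d ∩ Set.Ioi 0 = Set.Ioo c d :=
    Set.inter_eq_left.2 (fun t ht => lt_of_le_of_lt h0 ht.1)
  rw [hss]
  simp [Real.volume_Ioo, ENNReal.toReal_ofReal (by linarith : (0:ℝ) ≤ d - c), hcd]

noncomputable def hA (j n i : ℕ) : ℝ := j + (2*i-2)/2^(n+1)
noncomputable def hB (j n i : ℕ) : ℝ := j + (2*i-1)/2^(n+1)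
noncomputable def hC (j n i : ℕ) : ℝ := j + (2*i)/2^(n+1)

lemma haar_eq (j n i : ℕ) : haarFun j n i
    = fun t => (2^n : ℝ) * χ (hA j n i) (hB j n i) t - 2^n * χ (hB j n i) (hC j n i) t := by
  funext t
  simp only [haarFun, χ_apply, hA, hB, hC]
  split_ifs with h1 h2 h2 <;> try ring
  exfalso; linarith [h1.2, h2.1]

variable {j n i : ℕ}

lemma hj_le_hA (hi1 : 1 ≤ i) : (j:ℝ) ≤ hA j n i := by
  have : (1:ℝ) ≤ i := by exact_mod_cast hi1
  have h2 : (0:ℝ) < 2^(n+1) := by positivity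
  have : (0:ℝ) ≤ (2*i-2)/2^(n+1) := div_nonneg (by linarith) h2.le
  simp [hA]; linarith

lemma hA_nonneg (hi1 : 1 ≤ i) : (0:ℝ) ≤ hA j n i :=
  le_trans (Nat.cast_nonneg j) (hj_le_hA hi1)

lemma hAB : hA j n i ≤ hB j n i := by
  simp only [hA, hB]
  gcongr <;> norm_num

lemma hBC : hB j n i ≤ hC j n i := by
  simp only [hB, hC]
  gcongr <;> norm_num

lemma hC_le (hi2 : i ≤ 2 ^ n) : hC j n i ≤ (j:ℝ) + 1 := by
  have h2 : (0:ℝ) < 2^(n+1) := by positivity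
  have hcast : (i:ℝ) ≤ 2^n := by exact_mod_cast hi2
  have : (2*(i:ℝ))/2^(n+1) ≤ 1 := by
    rw [div_le_one h2]
    rw [pow_succ]
    linarith
  simp only [hC]; linarith

lemma hB_sub_hA : hB j n i - hA j n i = 1/2^(n+1) := by
  simp only [hA, hB]; ring

lemma hC_sub_hB : hC j n i - hB j n i = 1/2^(n+1) := by
  simp only [hB, hC]; ring

lemma haar_abs (t : ℝ) :
    |haarFun j n i t| = 2^n * (χ (hA j n i) (hB j n i) t + χ (hB j n i) (hC j n i) t) := by
  rw [haar_eq]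
  simp only [χ_apply]
  split_ifs with h1 h2 h2
  · exfalso; linarith [h1.2, h2.1]
  · rw [mul_one, mul_zero, sub_zero, abs_of_nonneg (by positivity)]; ring
  · rw [mul_zero, mul_one, zero_sub, abs_neg, abs_of_nonneg (by positivity)]; ring
  · simp

lemma chi_mul_chi_subset {c d c' d' : ℝ} (h1 : c' ≤ c) (h2 : d ≤ d') (t : ℝ) :
    χ c d t * χ c' d' t = χ c d t := by
  simp only [χ_apply]
  split_ifs with ha hb hb <;> try ring
  exact absurd ⟨lt_of_le_of_lt h1 ha.1, lt_of_lt_of_le ha.2 h2⟩ hb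

lemma chi_mul_chi_disj {c d c' d' : ℝ} (h : d ≤ c' ∨ d' ≤ c) (t : ℝ) :
    χ c d t * χ c' d' t = 0 := by
  simp only [χ_apply]
  split_ifs with ha hb <;> try ring
  exfalso; rcases h with h|h
  · linarith [ha.2, hb.1]
  · linarith [hb.2, ha.1]

lemma mul_bdd_integrable {f : ℝ → ℝ} (hf : IntegrableOn f (Set.Ioi 0)) (g : ℝ → ℝ)
    (hg : Measurable g) (hb : ∀ t, |g t| ≤ 1) :
    IntegrableOn (fun t => f t * g t) (Set.Ioi 0) := by
  have he : (fun t => f t * g t) = fun t => g t * f t := by funext t; ring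
  rw [he]
  exact hf.bdd_mul (hg.aestronglyMeasurable)
    (ae_of_all _ fun x => (by rw [Real.norm_eq_abs]; exact hb x : ‖g x‖ ≤ 1))

lemma integrableOn_mul_chi {f : ℝ → ℝ} (hf : IntegrableOn f (Set.Ioi 0)) (c d : ℝ) :
    IntegrableOn (fun t => f t * χ c d t) (Set.Ioi 0) :=
  mul_bdd_integrable hf _ (χ_meas c d)
    (fun t => by rw [abs_of_nonneg (χ_nonneg c d t)]; exact χ_le_one c d t)

lemma haar_integrable (j n i : ℕ) : IntegrableOn (haarFun j n i) (Set.Ioi 0) := by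
  rw [haar_eq]
  exact (((χ_integrable _ _).const_mul _).sub ((χ_integrable _ _).const_mul _))

lemma haar_abs_integrable (j n i : ℕ) :
    IntegrableOn (fun t => |haarFun j n i t|) (Set.Ioi 0) :=
  (haar_integrable j n i).abs

lemma haar_mul_chi (hi1 : 1 ≤ i) (hi2 : i ≤ 2 ^ n) (k : ℕ) (t : ℝ) :
    haarFun j n i t * χ (k : ℝ) (k + 1) t = if k = j then haarFun j n i t else 0 := by
  have hAn := hj_le_hA (j := j) (n := n) hi1
  have hab := hAB (j := j) (n := n) (i := i)
  have hbc := hBC (j := j) (n := n) (i := i)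
  have hc1 := hC_le (j := j) (n := n) hi2
  by_cases hk : k = j
  · subst hk
    rw [haar_eq, if_pos rfl]
    simp only
    rw [sub_mul, mul_assoc, mul_assoc,
      chi_mul_chi_subset hAn (by linarith),
      chi_mul_chi_subset (by linarith) (by linarith)]
  · rw [if_neg hk, haar_eq]
    simp only
    have hdisj : ((k:ℝ) + 1 ≤ hA j n i) ∨ ((j:ℝ) + 1 ≤ k) := by
      rcases lt_or_gt_of_ne hk with h | h
      · left
        have : (k:ℝ) + 1 ≤ j := by exact_mod_cast Nat.succ_le_of_lt h
        linarith
      · right; exact_mod_cast Nat.succ_le_of_lt h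
    rw [sub_mul, mul_assoc, mul_assoc]
    rcases hdisj with h | h
    · rw [chi_mul_chi_disj (Or.inr h), chi_mul_chi_disj (Or.inr (by linarith))]; ring
    · rw [chi_mul_chi_disj (Or.inl (by linarith)), chi_mul_chi_disj (Or.inl (by linarith))]; ring

lemma haar_abs_mul_chi (hi1 : 1 ≤ i) (hi2 : i ≤ 2 ^ n) (k : ℕ) (t : ℝ) :
    |haarFun j n i t| * χ (k : ℝ) (k + 1) t = if k = j then |haarFun j n i t| else 0 := by
  have h1 : |haarFun j n i t| * χ (k : ℝ) (k + 1) t = |haarFun j n i t * χ (k : ℝ) (k + 1) t| := by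
    rw [abs_mul, abs_of_nonneg (χ_nonneg _ _ _)]
  rw [h1, haar_mul_chi hi1 hi2 k t]
  split_ifs <;> simp

lemma chi_unit_int (k : ℕ) : ∫ t in Set.Ioi (0:ℝ), χ (k : ℝ) (k + 1) t = 1 := by
  rw [χ_int _ _ (Nat.cast_nonneg k) (by linarith)]; ring

lemma chi_unit_mul_chi_unit (k l : ℕ) (t : ℝ) :
    χ (k : ℝ) (k + 1) t * χ (l : ℝ) (l + 1) t = if k = l then χ (k : ℝ) (k + 1) t else 0 := by
  by_cases hk : k = l
  · subst hk; rw [if_pos rfl, chi_mul_chi_subset le_rfl le_rfl]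
  · rw [if_neg hk]
    rcases lt_or_gt_of_ne hk with h | h
    · exact chi_mul_chi_disj (Or.inl (by exact_mod_cast Nat.succ_le_of_lt h)) t
    · exact chi_mul_chi_disj (Or.inr (by exact_mod_cast Nat.succ_le_of_lt h)) t

lemma haar_int_zero (hi1 : 1 ≤ i) (hi2 : i ≤ 2 ^ n) :
    ∫ t in Set.Ioi (0:ℝ), haarFun j n i t = 0 := by
  rw [haar_eq]
  rw [integral_sub ((χ_integrable _ _).const_mul _) ((χ_integrable _ _).const_mul _),
    integral_const_mul, integral_const_mul,
    χ_int _ _ (hA_nonneg hi1) (hAB), χ_int _ _ (le_trans (hA_nonneg hi1) hAB) hBC]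
  rw [hB_sub_hA, hC_sub_hB]
  ring

lemma haar_abs_int_one (hi1 : 1 ≤ i) (hi2 : i ≤ 2 ^ n) :
    ∫ t in Set.Ioi (0:ℝ), |haarFun j n i t| = 1 := by
  simp_rw [haar_abs]
  rw [integral_const_mul,
    integral_add (χ_integrable _ _) (χ_integrable _ _),
    χ_int _ _ (hA_nonneg hi1) (hAB), χ_int _ _ (le_trans (hA_nonneg hi1) hAB) hBC,
    hB_sub_hA, hC_sub_hB]
  rw [pow_succ]
  field_simp
  norm_num

-- haarSeq versions
lemma hs_integrable (e : ℕ ≃ HaarIdx) (i : ℕ) : IntegrableOn (haarSeq e i) (Set.Ioi 0) :=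
  haar_integrable _ _ _

lemma hs_abs_integrable (e : ℕ ≃ HaarIdx) (i : ℕ) :
    IntegrableOn (fun t => |haarSeq e i t|) (Set.Ioi 0) :=
  (hs_integrable e i).abs

lemma hs_abs_int_one (e : ℕ ≃ HaarIdx) (i : ℕ) :
    ∫ t in Set.Ioi (0:ℝ), |haarSeq e i t| = 1 :=
  haar_abs_int_one (e i).2.1 (e i).2.2

lemma hs_int_zero (e : ℕ ≃ HaarIdx) (i : ℕ) :
    ∫ t in Set.Ioi (0:ℝ), haarSeq e i t = 0 :=
  haar_int_zero (e i).2.1 (e i).2.2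

lemma hs_mul_chi (e : ℕ ≃ HaarIdx) (i k : ℕ) (t : ℝ) :
    haarSeq e i t * χ (k : ℝ) (k + 1) t = if k = (e i).1.1 then haarSeq e i t else 0 :=
  haar_mul_chi (e i).2.1 (e i).2.2 k t

lemma hs_abs_mul_chi (e : ℕ ≃ HaarIdx) (i k : ℕ) (t : ℝ) :
    |haarSeq e i t| * χ (k : ℝ) (k + 1) t = if k = (e i).1.1 then |haarSeq e i t| else 0 :=
  haar_abs_mul_chi (e i).2.1 (e i).2.2 k t

section main
variable (e : ℕ ≃ HaarIdx) (π : Equiv.Perm ℕ) (s : Finset ℕ) (a b : ℕ → ℝ)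

lemma φ_integrable (i : ℕ) :
    IntegrableOn (fun t => 2 * χ (π i : ℝ) (π i + 1) t + |haarSeq e i t|) (Set.Ioi 0) :=
  ((χ_integrable _ _).const_mul 2).add (hs_abs_integrable e i)

lemma φ_nonneg (i : ℕ) (t : ℝ) : 0 ≤ 2 * χ (π i : ℝ) (π i + 1) t + |haarSeq e i t| :=
  add_nonneg (mul_nonneg (by norm_num) (χ_nonneg _ _ _)) (abs_nonneg _)

lemma φ_int_three (i : ℕ) :
    ∫ t in Set.Ioi (0:ℝ), (2 * χ (π i : ℝ) (π i + 1) t + |haarSeq e i t|) = 3 := by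
  rw [integral_add ((χ_integrable _ _).const_mul 2) (hs_abs_integrable e i),
    integral_const_mul, chi_unit_int (π i), hs_abs_int_one]
  norm_num

lemma f_integrable :
    IntegrableOn (fun t => ∑ i ∈ s, a i * (2 * χ (π i : ℝ) (π i + 1) t + |haarSeq e i t|))
      (Set.Ioi 0) :=
  integrable_finset_sum s (fun i _ => (φ_integrable e π i).const_mul _)

lemma g_integrable :
    IntegrableOn (fun t => ∑ i ∈ s, b i * haarSeq e i t) (Set.Ioi 0) :=
  integrable_finset_sum s (fun i _ => (hs_integrable e i).const_mul _)

lemma Q_integrable :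
    IntegrableOn (fun t => ∑ i ∈ s, |a i| * (2 * χ (π i : ℝ) (π i + 1) t + |haarSeq e i t|))
      (Set.Ioi 0) :=
  f_integrable e π s (fun i => |a i|)

lemma Q_int_val :
    ∫ t in Set.Ioi (0:ℝ), (∑ i ∈ s, |a i| * (2 * χ (π i : ℝ) (π i + 1) t + |haarSeq e i t|))
      = 3 * ∑ i ∈ s, |a i| := by
  rw [integral_finset_sum s (fun i _ => (φ_integrable e π i).const_mul _)]
  have : ∀ i ∈ s, (∫ t in Set.Ioi (0:ℝ), |a i| * (2 * χ (π i : ℝ) (π i + 1) t + |haarSeq e i t|))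
      = |a i| * 3 := by
    intro i _
    rw [integral_const_mul, φ_int_three]
  rw [Finset.sum_congr rfl this, ← Finset.sum_mul]
  ring

lemma fabs_le (t : ℝ) :
    |∑ i ∈ s, a i * (2 * χ (π i : ℝ) (π i + 1) t + |haarSeq e i t|)|
      ≤ ∑ i ∈ s, |a i| * (2 * χ (π i : ℝ) (π i + 1) t + |haarSeq e i t|) := by
  refine le_trans (Finset.abs_sum_le_sum_abs _ _) (le_of_eq ?_)
  refine Finset.sum_congr rfl (fun i _ => ?_)
  rw [abs_mul, abs_of_nonneg (φ_nonneg e π i t)]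

end main

section main2
variable (e : ℕ ≃ HaarIdx) (π : Equiv.Perm ℕ) (s : Finset ℕ) (a b : ℕ → ℝ)

lemma F_integrable :
    IntegrableOn (fun t => ∑ i ∈ s, a i * (2 * χ (π i : ℝ) (π i + 1) t + |haarSeq e i t|)
      + ∑ i ∈ s, b i * haarSeq e i t) (Set.Ioi 0) :=
  (f_integrable e π s a).add (g_integrable e s b)

lemma key_upper :
    (∫ t in Set.Ioi (0:ℝ), |∑ i ∈ s, a i * (2 * χ (π i : ℝ) (π i + 1) t + |haarSeq e i t|)
        + ∑ i ∈ s, b i * haarSeq e i t|)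
      ≤ 3 * ∑ i ∈ s, |a i| + ∫ t in Set.Ioi (0:ℝ), |∑ i ∈ s, b i * haarSeq e i t| := by
  have h1 : (∫ t in Set.Ioi (0:ℝ), |∑ i ∈ s, a i * (2 * χ (π i : ℝ) (π i + 1) t + |haarSeq e i t|)
        + ∑ i ∈ s, b i * haarSeq e i t|)
      ≤ ∫ t in Set.Ioi (0:ℝ),
          ((∑ i ∈ s, |a i| * (2 * χ (π i : ℝ) (π i + 1) t + |haarSeq e i t|))
            + |∑ i ∈ s, b i * haarSeq e i t|) := by
    refine integral_mono ((F_integrable e π s a b).abs)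
      ((Q_integrable e π s a).add ((g_integrable e s b).abs)) (fun t => ?_)
    exact le_trans (abs_add_le _ _) (add_le_add_left (fabs_le e π s a t) _)
  rwa [integral_add (Q_integrable e π s a) ((g_integrable e s b).abs),
    Q_int_val e π s a] at h1

lemma key_g :
    (∫ t in Set.Ioi (0:ℝ), |∑ i ∈ s, b i * haarSeq e i t|)
      ≤ (∫ t in Set.Ioi (0:ℝ), |∑ i ∈ s, a i * (2 * χ (π i : ℝ) (π i + 1) t + |haarSeq e i t|)
        + ∑ i ∈ s, b i * haarSeq e i t|) + 3 * ∑ i ∈ s, |a i| := by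
  have h1 : (∫ t in Set.Ioi (0:ℝ), |∑ i ∈ s, b i * haarSeq e i t|)
      ≤ ∫ t in Set.Ioi (0:ℝ),
          (|∑ i ∈ s, a i * (2 * χ (π i : ℝ) (π i + 1) t + |haarSeq e i t|)
            + ∑ i ∈ s, b i * haarSeq e i t|
          + ∑ i ∈ s, |a i| * (2 * χ (π i : ℝ) (π i + 1) t + |haarSeq e i t|)) := by
    refine integral_mono ((g_integrable e s b).abs)
      (((F_integrable e π s a b).abs).add (Q_integrable e π s a)) (fun t => ?_)
    have h3 := fabs_le e π s a t
    set x := ∑ i ∈ s, a i * (2 * χ (π i : ℝ) (π i + 1) t + |haarSeq e i t|) with hx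
    set y := ∑ i ∈ s, b i * haarSeq e i t with hy
    set q := ∑ i ∈ s, |a i| * (2 * χ (π i : ℝ) (π i + 1) t + |haarSeq e i t|) with hq
    calc |y| = |(x + y) - x| := by rw [add_sub_cancel_left]
      _ ≤ |x + y| + |x| := by
          rw [sub_eq_add_neg]
          exact le_trans (abs_add_le _ _) (le_of_eq (by rw [abs_neg]))
      _ ≤ |x + y| + q := add_le_add_right h3 _
  rwa [integral_add ((F_integrable e π s a b).abs) (Q_integrable e π s a),
    Q_int_val e π s a] at h1

end main2

section lower
variable (e : ℕ ≃ HaarIdx) (π : Equiv.Perm ℕ) (s : Finset ℕ) (a b : ℕ → ℝ)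

lemma φχ_int (i m : ℕ) :
    (∫ t in Set.Ioi (0:ℝ),
        (2 * χ (π i : ℝ) (π i + 1) t + |haarSeq e i t|) * χ (π m : ℝ) (π m + 1) t)
      = 2 * (if i = m then 1 else 0) + (if π m = (e i).1.1 then 1 else 0) := by
  have hpt : ∀ t, (2 * χ (π i : ℝ) (π i + 1) t + |haarSeq e i t|) * χ (π m : ℝ) (π m + 1) t
      = 2 * (if i = m then χ (π i : ℝ) (π i + 1) t else 0)
        + (if π m = (e i).1.1 then |haarSeq e i t| else 0) := by
    intro t
    rw [add_mul, mul_assoc, chi_unit_mul_chi_unit (π i) (π m) t, hs_abs_mul_chi e i (π m) t]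
    simp only [π.apply_eq_iff_eq]
  simp_rw [hpt]
  by_cases h1 : i = m <;> by_cases h2 : π m = (e i).1.1
  · simp only [if_pos h1, if_pos h2]
    rw [φ_int_three e π i]; norm_num
  · simp only [if_pos h1, if_neg h2, add_zero]
    rw [integral_const_mul, chi_unit_int]
  · simp only [if_neg h1, if_pos h2, mul_zero, zero_add]
    rw [hs_abs_int_one]
  · simp only [if_neg h1, if_neg h2, mul_zero, add_zero, integral_zero]

lemma hχ_int (i m : ℕ) :
    ∫ t in Set.Ioi (0:ℝ), haarSeq e i t * χ (π m : ℝ) (π m + 1) t = 0 := by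
  simp_rw [hs_mul_chi e i (π m)]
  by_cases h : π m = (e i).1.1
  · simp only [if_pos h]; exact hs_int_zero e i
  · simp only [if_neg h, integral_zero]

lemma Fχ_int (m : ℕ) (hm : m ∈ s) :
    (∫ t in Set.Ioi (0:ℝ),
        (∑ i ∈ s, a i * (2 * χ (π i : ℝ) (π i + 1) t + |haarSeq e i t|)
          + ∑ i ∈ s, b i * haarSeq e i t) * χ (π m : ℝ) (π m + 1) t)
      = 2 * a m + ∑ i ∈ s, a i * (if π m = (e i).1.1 then 1 else 0) := by
  have hpt : ∀ t,
      (∑ i ∈ s, a i * (2 * χ (π i : ℝ) (π i + 1) t + |haarSeq e i t|)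
        + ∑ i ∈ s, b i * haarSeq e i t) * χ (π m : ℝ) (π m + 1) t
      = ∑ i ∈ s, a i * ((2 * χ (π i : ℝ) (π i + 1) t + |haarSeq e i t|)
            * χ (π m : ℝ) (π m + 1) t)
        + ∑ i ∈ s, b i * (haarSeq e i t * χ (π m : ℝ) (π m + 1) t) := by
    intro t
    rw [add_mul, Finset.sum_mul, Finset.sum_mul]
    congr 1 <;> exact Finset.sum_congr rfl (fun i _ => by ring)
  simp_rw [hpt]
  rw [integral_add
      (integrable_finset_sum s (fun i _ =>
        (integrableOn_mul_chi (φ_integrable e π i) _ _).const_mul _))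
      (integrable_finset_sum s (fun i _ =>
        (integrableOn_mul_chi (hs_integrable e i) _ _).const_mul _)),
    integral_finset_sum s (fun i _ =>
        (integrableOn_mul_chi (φ_integrable e π i) _ _).const_mul _),
    integral_finset_sum s (fun i _ =>
        (integrableOn_mul_chi (hs_integrable e i) _ _).const_mul _)]
  simp_rw [integral_const_mul]
  have h2 : ∀ i ∈ s, b i * ∫ t in Set.Ioi (0:ℝ), haarSeq e i t * χ (π m : ℝ) (π m + 1) t = 0 := by
    intro i _; rw [hχ_int]; ring
  rw [Finset.sum_congr rfl h2, Finset.sum_const_zero, add_zero]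
  have h3 : ∀ i ∈ s, a i * (∫ t in Set.Ioi (0:ℝ),
      (2 * χ (π i : ℝ) (π i + 1) t + |haarSeq e i t|) * χ (π m : ℝ) (π m + 1) t)
      = (if i = m then 2 * a i else 0) + a i * (if π m = (e i).1.1 then 1 else 0) := by
    intro i _
    rw [φχ_int e π i m]
    split_ifs <;> ring
  rw [Finset.sum_congr rfl h3, Finset.sum_add_distrib, Finset.sum_ite_eq' s m, if_pos hm]

end lower

noncomputable def sgn (a : ℕ → ℝ) (m : ℕ) : ℝ := if 0 ≤ a m then 1 else -1

lemma sgn_abs (a : ℕ → ℝ) (m : ℕ) : |sgn a m| = 1 := by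
  rw [sgn]; by_cases h : 0 ≤ a m <;> simp [h]

lemma sgn_mul (a : ℕ → ℝ) (m : ℕ) : sgn a m * a m = |a m| := by
  rw [sgn]; by_cases h : 0 ≤ a m
  · rw [if_pos h, one_mul, abs_of_nonneg h]
  · rw [if_neg h, neg_one_mul, abs_of_neg (lt_of_not_ge h)]

section lower2
variable (e : ℕ ≃ HaarIdx) (π : Equiv.Perm ℕ) (s : Finset ℕ) (a b : ℕ → ℝ)

lemma psi_meas : Measurable (fun t => ∑ m ∈ s, sgn a m * χ (π m : ℝ) (π m + 1) t) :=
  Finset.measurable_sum s (fun m _ => (χ_meas _ _).const_mul _)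

lemma psi_bdd (t : ℝ) : |∑ m ∈ s, sgn a m * χ (π m : ℝ) (π m + 1) t| ≤ 1 := by
  classical
  have h1 : ∀ m ∈ s, sgn a m * χ (π m : ℝ) (π m + 1) t
      = if m = π.symm ((⌊t⌋).toNat) then sgn a m * χ (π m : ℝ) (π m + 1) t else 0 := by
    intro m _
    by_cases h : m = π.symm ((⌊t⌋).toNat)
    · rw [if_pos h]
    · rw [if_neg h]
      have hc : ¬((π m : ℝ) < t ∧ t < (π m : ℝ) + 1) := by
        rintro ⟨hl, hr⟩
        apply h
        have hfl : ⌊t⌋ = (π m : ℤ) := by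
          rw [Int.floor_eq_iff]
          constructor
          · push_cast; linarith
          · push_cast; linarith
        rw [hfl]
        simp
      rw [χ_apply, if_neg hc, mul_zero]
  rw [Finset.sum_congr rfl h1, Finset.sum_ite_eq' s _ _]
  split_ifs with h
  · rw [abs_mul, sgn_abs, one_mul, abs_of_nonneg (χ_nonneg _ _ _)]
    exact χ_le_one _ _ _
  · simp

lemma tau_bdd (i : ℕ) :
    |∑ m ∈ s, sgn a m * (if π m = (e i).1.1 then (1:ℝ) else 0)| ≤ 1 := by
  classical
  have h1 : ∀ m ∈ s, sgn a m * (if π m = (e i).1.1 then (1:ℝ) else 0)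
      = if m = π.symm (e i).1.1 then sgn a m else 0 := by
    intro m _
    by_cases h : π m = (e i).1.1
    · rw [if_pos h, if_pos (by rw [← h]; simp), mul_one]
    · rw [if_neg h, if_neg (fun hc => h (by rw [hc]; simp)), mul_zero]
  rw [Finset.sum_congr rfl h1, Finset.sum_ite_eq' s _ _]
  split_ifs with h
  · exact le_of_eq (sgn_abs a _)
  · simp

lemma key_lower :
    ∑ i ∈ s, |a i| ≤ ∫ t in Set.Ioi (0:ℝ),
      |∑ i ∈ s, a i * (2 * χ (π i : ℝ) (π i + 1) t + |haarSeq e i t|)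
        + ∑ i ∈ s, b i * haarSeq e i t| := by
  classical
  have hFint := F_integrable e π s a b
  have hpt : ∀ t : ℝ,
      (∑ i ∈ s, a i * (2 * χ (π i : ℝ) (π i + 1) t + |haarSeq e i t|)
        + ∑ i ∈ s, b i * haarSeq e i t) * (∑ m ∈ s, sgn a m * χ (π m : ℝ) (π m + 1) t)
      = ∑ m ∈ s, sgn a m *
          ((∑ i ∈ s, a i * (2 * χ (π i : ℝ) (π i + 1) t + |haarSeq e i t|)
            + ∑ i ∈ s, b i * haarSeq e i t) * χ (π m : ℝ) (π m + 1) t) := by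
    intro t
    rw [Finset.mul_sum]
    exact Finset.sum_congr rfl (fun m _ => by ring)
  have step1 : (∫ t in Set.Ioi (0:ℝ),
      (∑ i ∈ s, a i * (2 * χ (π i : ℝ) (π i + 1) t + |haarSeq e i t|)
        + ∑ i ∈ s, b i * haarSeq e i t) * (∑ m ∈ s, sgn a m * χ (π m : ℝ) (π m + 1) t))
      = ∑ m ∈ s, sgn a m * (2 * a m
          + ∑ i ∈ s, a i * (if π m = (e i).1.1 then (1:ℝ) else 0)) := by
    simp_rw [hpt]
    rw [integral_finset_sum s (fun m _ => (integrableOn_mul_chi hFint _ _).const_mul _)]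
    refine Finset.sum_congr rfl (fun m hm => ?_)
    rw [integral_const_mul, Fχ_int e π s a b m hm]
  have step2 : ∑ m ∈ s, sgn a m * (2 * a m
          + ∑ i ∈ s, a i * (if π m = (e i).1.1 then (1:ℝ) else 0))
      = 2 * (∑ m ∈ s, |a m|)
        + ∑ i ∈ s, a i * (∑ m ∈ s, sgn a m * (if π m = (e i).1.1 then (1:ℝ) else 0)) := by
    have h2 : ∀ m ∈ s, sgn a m * (2 * a m
          + ∑ i ∈ s, a i * (if π m = (e i).1.1 then (1:ℝ) else 0))
        = 2 * (sgn a m * a m)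
          + ∑ i ∈ s, sgn a m * (a i * (if π m = (e i).1.1 then (1:ℝ) else 0)) := by
      intro m _
      rw [mul_add, Finset.mul_sum]
      congr 1
      ring
    rw [Finset.sum_congr rfl h2, Finset.sum_add_distrib]
    congr 1
    · rw [← Finset.mul_sum]
      congr 1
      exact Finset.sum_congr rfl (fun m _ => sgn_mul a m)
    · rw [Finset.sum_comm]
      refine Finset.sum_congr rfl (fun i _ => ?_)
      rw [Finset.mul_sum]
      exact Finset.sum_congr rfl (fun m _ => by ring)
  have hT : |∑ i ∈ s, a i * (∑ m ∈ s, sgn a m * (if π m = (e i).1.1 then (1:ℝ) else 0))|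
      ≤ ∑ i ∈ s, |a i| := by
    refine (Finset.abs_sum_le_sum_abs _ _).trans (Finset.sum_le_sum (fun i _ => ?_))
    rw [abs_mul]
    exact mul_le_of_le_one_right (abs_nonneg _) (tau_bdd e π s a i)
  have hle : (∫ t in Set.Ioi (0:ℝ),
      (∑ i ∈ s, a i * (2 * χ (π i : ℝ) (π i + 1) t + |haarSeq e i t|)
        + ∑ i ∈ s, b i * haarSeq e i t) * (∑ m ∈ s, sgn a m * χ (π m : ℝ) (π m + 1) t))
      ≤ ∫ t in Set.Ioi (0:ℝ),
        |∑ i ∈ s, a i * (2 * χ (π i : ℝ) (π i + 1) t + |haarSeq e i t|)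
          + ∑ i ∈ s, b i * haarSeq e i t| := by
    refine integral_mono (mul_bdd_integrable hFint _ (psi_meas π s a) (psi_bdd π s a))
      hFint.abs (fun t => ?_)
    calc (∑ i ∈ s, a i * (2 * χ (π i : ℝ) (π i + 1) t + |haarSeq e i t|)
          + ∑ i ∈ s, b i * haarSeq e i t) * (∑ m ∈ s, sgn a m * χ (π m : ℝ) (π m + 1) t)
        ≤ |(∑ i ∈ s, a i * (2 * χ (π i : ℝ) (π i + 1) t + |haarSeq e i t|)
          + ∑ i ∈ s, b i * haarSeq e i t) * (∑ m ∈ s, sgn a m * χ (π m : ℝ) (π m + 1) t)| :=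
          le_abs_self _
      _ = |∑ i ∈ s, a i * (2 * χ (π i : ℝ) (π i + 1) t + |haarSeq e i t|)
          + ∑ i ∈ s, b i * haarSeq e i t| * |∑ m ∈ s, sgn a m * χ (π m : ℝ) (π m + 1) t| :=
          abs_mul _ _
      _ ≤ |∑ i ∈ s, a i * (2 * χ (π i : ℝ) (π i + 1) t + |haarSeq e i t|)
          + ∑ i ∈ s, b i * haarSeq e i t| :=
          mul_le_of_le_one_right (abs_nonneg _) (psi_bdd π s a t)
  rw [step1, step2] at hle
  have := neg_abs_le (∑ i ∈ s, a i * (∑ m ∈ s, sgn a m * (if π m = (e i).1.1 then (1:ℝ) else 0)))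
  linarith

end lower2

end aux

/-- for all finitely supported scalar sequences `(a_i)`, `(b_i)`,
`(1/2) ∑ |a_i| + (1/8) ‖∑ b_i h_i‖₁ ≤ ‖∑ a_i (2·1_{(π i, π i + 1)} + |h_i|) + ∑ b_i h_i‖₁
  ≤ 3 ∑ |a_i| + ‖∑ b_i h_i‖₁`, the norms being in `L₁(0,∞)`. -/

theorem stmt0 (e : ℕ ≃ HaarIdx) (π : Equiv.Perm ℕ) (s : Finset ℕ) (a b : ℕ → ℝ) :
    (1 / 2) * ∑ i ∈ s, |a i| +
        (1 / 8) * ∫ t in Set.Ioi (0 : ℝ), |∑ i ∈ s, b i * haarSeq e i t| ≤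
      ∫ t in Set.Ioi (0 : ℝ),
        |∑ i ∈ s, a i * (2 * Set.indicator (Set.Ioo (π i : ℝ) (π i + 1)) 1 t + |haarSeq e i t|)
          + ∑ i ∈ s, b i * haarSeq e i t| ∧
    (∫ t in Set.Ioi (0 : ℝ),
        |∑ i ∈ s, a i * (2 * Set.indicator (Set.Ioo (π i : ℝ) (π i + 1)) 1 t + |haarSeq e i t|)
          + ∑ i ∈ s, b i * haarSeq e i t|) ≤
      3 * ∑ i ∈ s, |a i| + ∫ t in Set.Ioi (0 : ℝ), |∑ i ∈ s, b i * haarSeq e i t| := by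
  have hχdef : ∀ (c d t : ℝ), Set.indicator (Set.Ioo c d) (1 : ℝ → ℝ) t = χ c d t :=
    fun _ _ _ => rfl
  simp only [hχdef]
  have hupper := key_upper e π s a b
  have hlower := key_lower e π s a b
  have hg := key_g e π s a b
  have hA0 : 0 ≤ ∑ i ∈ s, |a i| := Finset.sum_nonneg fun i _ => abs_nonneg _
  have hB0 : 0 ≤ ∫ t in Set.Ioi (0:ℝ), |∑ i ∈ s, b i * haarSeq e i t| :=
    integral_nonneg fun t => abs_nonneg _
  constructor <;> linarith
end

section
/- Suppose the enumeration {h_i} satisfies h_1 = h_{0,1}^1 (the first mean-zero Haar function on (0,1)), and the permutation π of ℕ satisfies π(1) = 1 and, for every i > 1, if h_i = h_{n,k}^j then π(i) > j (so that for i > 1 the support of h_i is disjoint from (π(i)−1, π(i))). Set x_i = 2·1_{(π(i)−1,π(i))} + |h_i| + h_i and y_i = 2·1_{(π(i)−1,π(i))} + |h_i| − h_i. Then the closed linear span of {x_i, y_i : i ∈ ℕ} is all of L1(0,∞). -/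
open MeasureTheory Filter Topology
open Set
open scoped ENNReal symmDiff
namespace Stmt5Aux


noncomputable abbrev μ0 : Measure ℝ := volume.restrict (Set.Ioi (0:ℝ))

lemma mu0_Ioo_ne_top (a b : ℝ) : μ0 (Set.Ioo a b) ≠ ∞ := by
  rw [Measure.restrict_apply measurableSet_Ioo]
  exact ne_top_of_le_ne_top (by simp [Real.volume_Ioo]) (measure_mono Set.inter_subset_left)

noncomputable def indI (a b : ℝ) : Lp ℝ 1 μ0 :=
  indicatorConstLp 1 measurableSet_Ioo (mu0_Ioo_ne_top a b) 1

lemma indI_coe (a b : ℝ) : ⇑(indI a b) =ᵐ[μ0] (Set.Ioo a b).indicator (fun _ => (1:ℝ)) := by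
  unfold indI; exact indicatorConstLp_coeFn

lemma ae_ne (x : ℝ) : ∀ᵐ t ∂μ0, t ≠ x := by
  have h : μ0 {x} = 0 := by
    rw [Measure.restrict_apply (measurableSet_singleton x)]
    exact measure_mono_null Set.inter_subset_left Real.volume_singleton
  rw [ae_iff]
  push_neg
  simpa [Set.setOf_eq_eq_singleton] using h

lemma indI_of_ge {a b : ℝ} (h : b ≤ a) : indI a b = 0 := by
  apply Lp.ext
  filter_upwards [indI_coe a b, Lp.coeFn_zero (E := ℝ) (p := 1) (μ := μ0)] with t h1 h2
  rw [h1, h2, Set.Ioo_eq_empty (fun hab => absurd h (not_le.2 hab))]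
  simp

lemma indI_split {a b c : ℝ} (hab : a ≤ b) (hbc : b ≤ c) : indI a c = indI a b + indI b c := by
  apply Lp.ext
  filter_upwards [indI_coe a c, indI_coe a b, indI_coe b c,
    Lp.coeFn_add (indI a b) (indI b c), ae_ne b] with t h1 h4 h3 h2 h5
  rw [h1, h2, Pi.add_apply, h4, h3]
  simp only [Set.indicator_apply, Set.mem_Ioo]
  by_cases h6 : a < t ∧ t < c
  · rcases h5.lt_or_gt with hl | hr
    · rw [if_pos h6, if_pos ⟨h6.1, hl⟩,
        if_neg (by rintro ⟨u, -⟩; exact absurd u (not_lt.2 hl.le))]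
      norm_num
    · rw [if_pos h6, if_neg (by rintro ⟨-, v⟩; exact absurd v (not_lt.2 hr.le)),
        if_pos ⟨hr, h6.2⟩]
      norm_num
  · rw [if_neg h6, if_neg (by rintro ⟨u, v⟩; exact h6 ⟨u, lt_of_lt_of_le v hbc⟩),
      if_neg (by rintro ⟨u, v⟩; exact h6 ⟨lt_of_le_of_lt hab u, v⟩)]
    norm_num

lemma norm_indicator' {s : Set ℝ} (hs : MeasurableSet s) (hμs : μ0 s ≠ ∞) :
    ‖indicatorConstLp 1 hs hμs (1:ℝ)‖ = (μ0 s).toReal := by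
  rw [norm_indicatorConstLp one_ne_zero ENNReal.one_ne_top]
  simp
  rfl

lemma dist_indicator' {s t : Set ℝ} (hs : MeasurableSet s) (hμs : μ0 s ≠ ∞)
    (ht : MeasurableSet t) (hμt : μ0 t ≠ ∞) :
    dist (indicatorConstLp 1 hs hμs (1:ℝ)) (indicatorConstLp 1 ht hμt (1:ℝ))
      = (μ0 (s ∆ t)).toReal := by
  rw [dist_indicatorConstLp_eq_norm, norm_indicator']

lemma indI_congr {s : Set ℝ} (hs : MeasurableSet s) (hμs : μ0 s ≠ ∞) {a b : ℝ}
    (h : s =ᵐ[μ0] Set.Ioo a b) :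
    indicatorConstLp 1 hs hμs (1:ℝ) = indI a b :=
  (indicatorConstLp_inj hs hμs measurableSet_Ioo (mu0_Ioo_ne_top a b) one_ne_zero).2 h




noncomputable def hL (j n k : ℕ) : ℝ := (j:ℝ) + (2 * k - 2) / 2 ^ (n + 1)
noncomputable def hM (j n k : ℕ) : ℝ := (j:ℝ) + (2 * k - 1) / 2 ^ (n + 1)
noncomputable def hR (j n k : ℕ) : ℝ := (j:ℝ) + (2 * k) / 2 ^ (n + 1)

lemma hL_eq (j n k : ℕ) : hL j n k = (j:ℝ) + ((k:ℝ) - 1) / 2 ^ n := by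
  unfold hL; rw [pow_succ]; field_simp

lemma hR_eq (j n k : ℕ) : hR j n k = (j:ℝ) + (k:ℝ) / 2 ^ n := by
  unfold hR; rw [pow_succ]; field_simp

lemma hLM (j n k : ℕ) : hL j n k ≤ hM j n k := by
  unfold hL hM
  have : (0:ℝ) < 2 ^ (n+1) := by positivity
  gcongr
  linarith

lemma hMR (j n k : ℕ) : hM j n k ≤ hR j n k := by
  unfold hM hR
  have : (0:ℝ) < 2 ^ (n+1) := by positivity
  gcongr
  linarith

/-- The Haar function as an element of `Lp`. -/
noncomputable def haarLp (j n k : ℕ) : Lp ℝ 1 μ0 :=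
  (2^n : ℝ) • indI (hL j n k) (hM j n k) - (2^n : ℝ) • indI (hM j n k) (hR j n k)

lemma haarFun_eq (j n k : ℕ) (t : ℝ) :
    haarFun j n k t = (2^n : ℝ) * (Set.Ioo (hL j n k) (hM j n k)).indicator (fun _ => (1:ℝ)) t
      - (2^n : ℝ) * (Set.Ioo (hM j n k) (hR j n k)).indicator (fun _ => (1:ℝ)) t := by
  unfold haarFun hL hM hR
  simp only [Set.indicator_apply, Set.mem_Ioo]
  split_ifs with g1 g2 g3 <;> first | ring1 | (exfalso; linarith [g1.2, g2.1])

lemma haarLp_coe (j n k : ℕ) : ⇑(haarLp j n k) =ᵐ[μ0] haarFun j n k := by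
  unfold haarLp
  filter_upwards [Lp.coeFn_sub ((2^n : ℝ) • indI (hL j n k) (hM j n k))
      ((2^n : ℝ) • indI (hM j n k) (hR j n k)),
    Lp.coeFn_smul (2^n : ℝ) (indI (hL j n k) (hM j n k)),
    Lp.coeFn_smul (2^n : ℝ) (indI (hM j n k) (hR j n k)),
    indI_coe (hL j n k) (hM j n k), indI_coe (hM j n k) (hR j n k)] with t h1 h2 h3 h4 h5
  rw [h1, Pi.sub_apply, h2, h3, Pi.smul_apply, Pi.smul_apply, h4, h5, haarFun_eq j n k t,
    smul_eq_mul, smul_eq_mul]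

lemma haarFun_abs (j n k : ℕ) {t : ℝ} (hM' : t ≠ hM j n k) :
    |haarFun j n k t| = (2^n : ℝ) * (Set.Ioo (hL j n k) (hR j n k)).indicator (fun _ => (1:ℝ)) t := by
  have h2 : (0:ℝ) < 2^n := by positivity
  unfold haarFun
  have eL : (j : ℝ) + (2 * k - 2) / 2 ^ (n + 1) = hL j n k := rfl
  have eM : (j : ℝ) + (2 * k - 1) / 2 ^ (n + 1) = hM j n k := rfl
  have eR : (j : ℝ) + (2 * k) / 2 ^ (n + 1) = hR j n k := rfl
  rw [eL, eM, eR]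
  simp only [Set.indicator_apply, Set.mem_Ioo]
  by_cases hC : hL j n k < t ∧ t < hR j n k
  · rcases hM'.lt_or_gt with hl | hr
    · rw [if_pos ⟨hC.1, hl⟩, if_pos hC, abs_of_pos h2]; ring
    · rw [if_neg (fun g => absurd g.2 (not_lt.2 hr.le)), if_pos ⟨hr, hC.2⟩, if_pos hC,
        abs_neg, abs_of_pos h2]
      ring
  · rw [if_neg (fun g => hC ⟨g.1, lt_of_lt_of_le g.2 (hMR j n k)⟩),
      if_neg (fun g => hC ⟨lt_of_le_of_lt (hLM j n k) g.1, g.2⟩), if_neg hC, abs_zero]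
    ring

lemma haarFun_zero_outside (j n k : ℕ) {t : ℝ} (ht : t ∉ Set.Ioo (hL j n k) (hR j n k)) :
    haarFun j n k t = 0 := by
  rw [haarFun_eq,
    Set.indicator_of_notMem (fun g => ht ⟨g.1, lt_of_lt_of_le g.2 (hMR j n k)⟩),
    Set.indicator_of_notMem (fun g => ht ⟨lt_of_le_of_lt (hLM j n k) g.1, g.2⟩)]
  ring



lemma norm_indI (a b : ℝ) : ‖indI a b‖ = (μ0 (Set.Ioo a b)).toReal := by
  unfold indI; exact norm_indicator' _ _

lemma dist_indI (a b c d : ℝ) :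
    dist (indI a b) (indI c d) = (μ0 (Set.Ioo a b ∆ Set.Ioo c d)).toReal := by
  unfold indI; exact dist_indicator' _ _ _ _

lemma mu0_le (s : Set ℝ) : μ0 s ≤ volume s := Measure.restrict_le_self s

lemma indI_sum (n p : ℕ) : ∀ d : ℕ,
    indI ((p:ℝ)/2^n) (((p:ℝ)+d)/2^n)
      = ∑ i ∈ Finset.range d, indI (((p:ℝ)+i)/2^n) (((p:ℝ)+i+1)/2^n) := by
  have h2n : (0:ℝ) < 2^n := by positivity
  intro d
  induction d with
  | zero => simp [indI_of_ge le_rfl]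
  | succ d ih =>
      have h1 : (p:ℝ)/2^n ≤ ((p:ℝ)+d)/2^n := by
        rw [div_le_div_iff₀ h2n h2n]
        nlinarith [show (0:ℝ) ≤ d from Nat.cast_nonneg d]
      have h2 : ((p:ℝ)+d)/2^n ≤ ((p:ℝ)+d+1)/2^n := by
        rw [div_le_div_iff₀ h2n h2n]
        nlinarith
      have hc : ((p:ℝ)+((d+1:ℕ):ℝ)) = (p:ℝ)+d+1 := by push_cast; ring
      rw [Finset.sum_range_succ, ← ih, hc, ← indI_split h1 h2]

lemma Ioo_mem_of_dyadic (V : Submodule ℝ (Lp ℝ 1 μ0)) (hV : IsClosed (V : Set (Lp ℝ 1 μ0)))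
    (hd : ∀ p n : ℕ, indI ((p:ℝ)/2^n) (((p:ℝ)+1)/2^n) ∈ V)
    (a b : ℝ) (ha : 0 ≤ a) (hab : a ≤ b) : indI a b ∈ V := by
  have hcl : indI a b ∈ closure (V : Set (Lp ℝ 1 μ0)) := by
    rw [SeminormedAddCommGroup.mem_closure_iff]
    intro ε hε
    obtain ⟨n, hn⟩ : ∃ n : ℕ, 2/2^n < ε := by
      obtain ⟨n, hn⟩ := pow_unbounded_of_one_lt (2/ε) one_lt_two
      exact ⟨n, by rw [div_lt_iff₀ (by positivity)]; rw [div_lt_iff₀ hε] at hn; linarith⟩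
    have h2n : (0:ℝ) < 2^n := by positivity
    set N1 := ⌈a * 2^n⌉₊ with hN1
    set N2 := ⌊b * 2^n⌋₊ with hN2
    have hb0 : 0 ≤ b := le_trans ha hab
    have haN1 : a * 2^n ≤ N1 := Nat.le_ceil _
    have hN1a : (N1:ℝ) < a * 2^n + 1 := Nat.ceil_lt_add_one (by positivity)
    have hN2b : (N2:ℝ) ≤ b * 2^n := Nat.floor_le (by positivity)
    have hbN2 : b * 2^n < (N2:ℝ) + 1 := Nat.lt_floor_add_one _
    by_cases hcmp : N2 ≤ N1
    · refine ⟨0, Submodule.zero_mem V, ?_⟩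
      rw [sub_zero, norm_indI]
      have h1 : μ0 (Set.Ioo a b) ≤ ENNReal.ofReal (b - a) := by
        refine le_trans (mu0_le _) ?_
        rw [Real.volume_Ioo]
      have h2 : (μ0 (Set.Ioo a b)).toReal ≤ b - a := by
        refine le_trans (ENNReal.toReal_mono ENNReal.ofReal_ne_top h1) ?_
        rw [ENNReal.toReal_ofReal (by linarith)]
      have hN2N1 : (N2:ℝ) ≤ N1 := by exact_mod_cast hcmp
      have : b - a < 2/2^n := by
        rw [lt_div_iff₀ h2n, sub_mul]
        linarith
      linarith
    · push_neg at hcmp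
      set aa : ℝ := (N1:ℝ)/2^n with haa
      set bb : ℝ := (N2:ℝ)/2^n with hbb
      have hN1N2 : (N1:ℝ) ≤ N2 := by exact_mod_cast hcmp.le
      have e1 : a ≤ aa := by rw [haa, le_div_iff₀ h2n]; linarith
      have e2 : aa ≤ a + 1/2^n := by rw [haa, div_le_iff₀ h2n]; rw [add_mul]; field_simp; linarith
      have e3 : bb ≤ b := by rw [hbb, div_le_iff₀ h2n]; linarith
      have e4 : b ≤ bb + 1/2^n := by
        rw [hbb]; rw [← sub_le_iff_le_add]
        rw [sub_le_iff_le_add, ← add_div, le_div_iff₀ h2n]; linarith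
      have e5 : aa ≤ bb := by rw [haa, hbb]; gcongr
      refine ⟨∑ i ∈ Finset.range (N2 - N1),
        indI (((N1:ℝ)+i)/2^n) (((N1:ℝ)+i+1)/2^n), ?_, ?_⟩
      · exact Submodule.sum_mem V fun i _ => by
          have := hd (N1 + i) n
          push_cast at this ⊢
          convert this using 3 <;> ring
      · rw [← indI_sum n N1 (N2 - N1)]
        have hcast : ((N1:ℝ) + ((N2 - N1 : ℕ):ℝ)) = (N2:ℝ) := by
          push_cast [Nat.cast_sub hcmp.le]; ring
        rw [hcast, ← dist_eq_norm, dist_indI]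
        have hsub : Set.Ioo aa bb ⊆ Set.Ioo a b := Set.Ioo_subset_Ioo e1 e3
        have hΔ : Set.Ioo a b ∆ Set.Ioo aa bb ⊆ Set.Ioc a aa ∪ Set.Ico bb b := by
          rw [Set.symmDiff_def]
          rintro x (⟨⟨hx1, hx2⟩, hx3⟩ | ⟨hx1, hx2⟩)
          · simp only [Set.mem_Ioo, not_and_or, not_lt] at hx3
            rcases hx3 with h | h
            · exact Or.inl ⟨hx1, h⟩
            · exact Or.inr ⟨h, hx2⟩
          · exact absurd (hsub hx1) hx2
        have hμΔ : μ0 (Set.Ioo a b ∆ Set.Ioo aa bb) ≤ ENNReal.ofReal (1/2^n) + ENNReal.ofReal (1/2^n) := by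
          refine le_trans (mu0_le _) (le_trans (measure_mono hΔ) ?_)
          refine le_trans (measure_union_le _ _) ?_
          gcongr
          · rw [Real.volume_Ioc]; exact ENNReal.ofReal_le_ofReal (by linarith)
          · rw [Real.volume_Ico]; exact ENNReal.ofReal_le_ofReal (by linarith)
        have : (μ0 (Set.Ioo a b ∆ Set.Ioo aa bb)).toReal ≤ 2/2^n := by
          refine le_trans (ENNReal.toReal_mono (by finiteness) hμΔ) ?_
          rw [ENNReal.toReal_add ENNReal.ofReal_ne_top ENNReal.ofReal_ne_top,
            ENNReal.toReal_ofReal (by positivity)]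
          linarith [show 1/(2:ℝ)^n + 1/2^n = 2/2^n from by ring]
        linarith
  rwa [hV.closure_eq] at hcl



lemma ind_set_congr {s t : Set ℝ} (hs : MeasurableSet s) (hμs : μ0 s ≠ ∞)
    (ht : MeasurableSet t) (hμt : μ0 t ≠ ∞) (h : s =ᵐ[μ0] t) :
    indicatorConstLp 1 hs hμs (1:ℝ) = indicatorConstLp 1 ht hμt 1 :=
  (indicatorConstLp_inj hs hμs ht hμt one_ne_zero).2 h

/-- The algebra of finite unions of intervals. -/
def SA : Set (Set ℝ) := {t | ∃ S : Finset (Set ℝ), (∀ s ∈ S, s.OrdConnected) ∧ t = ⋃₀ ↑S}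

lemma SA_meas : ∀ t ∈ SA, MeasurableSet t := by
  rintro t ⟨S, hS, rfl⟩
  exact MeasurableSet.sUnion S.countable_toSet fun s hs => (hS s hs).measurableSet

lemma SA_inter {u v : Set ℝ} (hu : u ∈ SA) (hv : v ∈ SA) : u ∩ v ∈ SA := by
  classical
  obtain ⟨S, hS, rfl⟩ := hu; obtain ⟨T, hT, rfl⟩ := hv
  refine ⟨(S ×ˢ T).image (fun p => p.1 ∩ p.2), ?_, ?_⟩
  · intro s hs
    simp only [Finset.mem_image, Finset.mem_product] at hs
    obtain ⟨⟨p1, p2⟩, ⟨h1, h2⟩, rfl⟩ := hs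
    exact (hS _ h1).inter (hT _ h2)
  · ext x
    simp only [Set.mem_inter_iff, Set.mem_sUnion, Finset.coe_image, Set.mem_image,
      Finset.mem_coe, Finset.mem_product, Prod.exists]
    constructor
    · rintro ⟨⟨s, hs, hxs⟩, ⟨t, ht, hxt⟩⟩
      exact ⟨s ∩ t, ⟨s, t, ⟨hs, ht⟩, rfl⟩, hxs, hxt⟩
    · rintro ⟨w, ⟨s, t, ⟨hs, ht⟩, rfl⟩, hx1, hx2⟩
      exact ⟨⟨s, hs, hx1⟩, ⟨t, ht, hx2⟩⟩

lemma compl_ordConnected {s : Set ℝ} (hs : s.OrdConnected) :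
    sᶜ = {x | ∀ y ∈ s, x < y} ∪ {x | ∀ y ∈ s, y < x} := by
  ext x
  simp only [Set.mem_compl_iff, Set.mem_union, Set.mem_setOf_eq]
  constructor
  · intro hx
    by_contra h
    push_neg at h
    obtain ⟨⟨y1, hy1, hy1'⟩, ⟨y2, hy2, hy2'⟩⟩ := h
    exact hx (hs.out hy1 hy2 ⟨hy1', hy2'⟩)
  · rintro (h | h) hx
    · exact lt_irrefl x (h x hx)
    · exact lt_irrefl x (h x hx)

lemma lower_ordConnected (s : Set ℝ) : Set.OrdConnected {x | ∀ y ∈ s, x < y} :=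
  Set.ordConnected_def.mpr fun _x _hx _y hy _z hz w hw => lt_of_le_of_lt hz.2 (hy w hw)

lemma upper_ordConnected (s : Set ℝ) : Set.OrdConnected {x | ∀ y ∈ s, y < x} :=
  Set.ordConnected_def.mpr fun _x hx _y _hy _z hz w hw => lt_of_lt_of_le (hx w hw) hz.1

lemma SA_compl_ord {s : Set ℝ} (hs : s.OrdConnected) : sᶜ ∈ SA := by
  classical
  refine ⟨{{x | ∀ y ∈ s, x < y}, {x | ∀ y ∈ s, y < x}}, ?_, ?_⟩
  · intro t ht
    simp only [Finset.mem_insert, Finset.mem_singleton] at ht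
    rcases ht with rfl | rfl
    · exact lower_ordConnected s
    · exact upper_ordConnected s
  · rw [compl_ordConnected hs]
    simp

lemma SA_compl_sUnion : ∀ (S : Finset (Set ℝ)), (∀ s ∈ S, s.OrdConnected) →
    (⋃₀ ↑S)ᶜ ∈ SA := by
  classical
  intro S
  induction S using Finset.induction_on with
  | empty =>
      intro _
      rw [Finset.coe_empty, Set.sUnion_empty, Set.compl_empty]
      exact ⟨{Set.univ}, by simp [Set.ordConnected_univ], by simp⟩
  | @insert a S haS ih =>
      intro hS
      rw [Finset.coe_insert, Set.sUnion_insert, Set.compl_union]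
      exact SA_inter (SA_compl_ord (hS a (Finset.mem_insert_self a S)))
        (ih fun s hs => hS s (Finset.mem_insert_of_mem hs))

lemma SA_isSetAlgebra : IsSetAlgebra SA where
  empty_mem := ⟨∅, by simp, by simp⟩
  compl_mem := by rintro t ⟨S, hS, rfl⟩; exact SA_compl_sUnion S hS
  union_mem := by
    classical
    rintro s t ⟨S, hS, rfl⟩ ⟨T, hT, rfl⟩
    refine ⟨S ∪ T, fun u hu => ?_, ?_⟩
    · rcases Finset.mem_union.1 hu with h | h
      · exact hS u h
      · exact hT u h
    · rw [Finset.coe_union, Set.sUnion_union]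

noncomputable def SA_spanning : μ0.FiniteSpanningSetsIn SA where
  set n := Set.Iio n
  set_mem n := ⟨{Set.Iio (n:ℝ)}, by simp [Set.ordConnected_Iio], by simp⟩
  finite n := by
    rw [Measure.restrict_apply measurableSet_Iio]
    refine lt_of_le_of_lt (measure_mono (fun x hx => ?_))
      (show volume (Set.Ioo (0:ℝ) n) < ∞ by rw [Real.volume_Ioo]; exact ENNReal.ofReal_lt_top)
    exact ⟨hx.2, hx.1⟩
  spanning := by
    apply Set.eq_univ_of_forall
    intro x
    obtain ⟨n, hn⟩ := exists_nat_gt x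
    exact Set.mem_iUnion.2 ⟨n, hn⟩

lemma SA_gen : (inferInstance : MeasurableSpace ℝ) = MeasurableSpace.generateFrom SA := by
  apply le_antisymm
  · rw [BorelSpace.measurable_eq (α := ℝ), borel_eq_generateFrom_Iio]
    apply MeasurableSpace.generateFrom_mono
    rintro s ⟨b, rfl⟩
    exact ⟨{Set.Iio b}, by simp [Set.ordConnected_Iio], by simp⟩
  · rw [MeasurableSpace.generateFrom_le_iff]
    exact SA_meas

lemma SA_dense : μ0.MeasureDense SA :=
  Measure.MeasureDense.of_generateFrom_isSetAlgebra_sigmaFinite SA_isSetAlgebra SA_spanning SA_gen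



lemma mu0_compl_Ioi : μ0 (Set.Ioi (0:ℝ))ᶜ = 0 := by
  rw [Measure.restrict_apply measurableSet_Ioi.compl, Set.compl_inter_self]
  simp

/-- Lemma F : the indicator of a finite-measure interval belongs to any closed submodule
containing all the `indI a b`. -/
lemma ord_mem (V : Submodule ℝ (Lp ℝ 1 μ0))
    (h : ∀ a b : ℝ, 0 ≤ a → a ≤ b → indI a b ∈ V)
    {s : Set ℝ} (hs : s.OrdConnected) (hμs : μ0 s ≠ ∞) :
    indicatorConstLp 1 hs.measurableSet hμs (1:ℝ) ∈ V := by
  set u := s ∩ Set.Ioi 0 with hu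
  have hsu : μ0 (s ∆ u) = 0 := by
    refine measure_mono_null (fun x hx => ?_) mu0_compl_Ioi
    rcases hx with ⟨hx1, hx2⟩ | ⟨hx1, hx2⟩
    · intro hx0; exact hx2 ⟨hx1, hx0⟩
    · exact (hx2 hx1.1).elim
  rcases u.eq_empty_or_nonempty with hne | hne
  · have heq : s =ᵐ[μ0] Set.Ioo (0:ℝ) 0 := by
      rw [Set.Ioo_self]
      rw [MeasureTheory.ae_eq_set]
      constructor
      · refine measure_mono_null (fun x hx => ?_) mu0_compl_Ioi
        intro hx0
        exact (Set.eq_empty_iff_forall_notMem.1 hne x) ⟨hx.1, hx0⟩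
      · simp
    rw [show indicatorConstLp 1 hs.measurableSet hμs (1:ℝ) = indI 0 0 from
      ind_set_congr _ _ _ _ heq, indI_of_ge le_rfl]
    exact V.zero_mem
  · have hu_ord : u.OrdConnected := hs.inter Set.ordConnected_Ioi
    have hbdd : BddAbove u := by
      by_contra hb
      obtain ⟨x0, hx0⟩ := hne
      have hIci : Set.Ici x0 ⊆ u := by
        intro y hy
        obtain ⟨z, hz, hyz⟩ := not_bddAbove_iff.1 hb y
        exact hu_ord.out hx0 hz ⟨hy, hyz.le⟩
      have : μ0 (Set.Ici x0) ≤ μ0 s := measure_mono (fun x hx => (hIci hx).1)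
      have h2 : Set.Ici x0 ∩ Set.Ioi 0 = Set.Ici x0 :=
        Set.inter_eq_self_of_subset_left (fun x hx => Set.mem_Ioi.2 (lt_of_lt_of_le hx0.2 hx))
      rw [Measure.restrict_apply measurableSet_Ici, h2, Real.volume_Ici] at this
      exact hμs (top_le_iff.1 this)
    have hbdd' : BddBelow u := ⟨0, fun x hx => hx.2.le⟩
    set a := sInf u with ha
    set b := sSup u with hb
    have ha0 : 0 ≤ a := le_csInf hne fun x hx => hx.2.le
    have hab : a ≤ b := csInf_le_csSup hne hbdd' hbdd
    have hIoo : Set.Ioo a b ⊆ u := by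
      intro x hx
      obtain ⟨y1, hy1, hy1'⟩ := exists_lt_of_csInf_lt hne hx.1
      obtain ⟨y2, hy2, hy2'⟩ := exists_lt_of_lt_csSup hne hx.2
      exact hu_ord.out hy1 hy2 ⟨hy1'.le, hy2'.le⟩
    have hIcc : u ⊆ Set.Icc a b := fun x hx => ⟨csInf_le hbdd' hx, le_csSup hbdd hx⟩
    have heq : s =ᵐ[μ0] Set.Ioo a b := by
      rw [MeasureTheory.ae_eq_set]
      constructor
      · have hsub : s \ Set.Ioo a b ⊆ (Set.Ioi (0:ℝ))ᶜ ∪ {a, b} := by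
          rintro x ⟨hx1, hx2⟩
          by_cases hx0 : x ∈ Set.Ioi (0:ℝ)
          · have hxu : x ∈ u := ⟨hx1, hx0⟩
            have := hIcc hxu
            right
            rcases lt_or_eq_of_le this.1 with h1 | h1
            · rcases lt_or_eq_of_le this.2 with h2 | h2
              · exact absurd ⟨h1, h2⟩ hx2
              · right; exact h2
            · left; exact h1.symm
          · left; exact hx0
        refine measure_mono_null hsub (measure_union_null mu0_compl_Ioi ?_)
        refine le_antisymm (le_trans (mu0_le _) (le_of_eq ?_)) (by simp)
        exact Set.Countable.measure_zero ((Set.countable_singleton _).insert _) _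
      · have : Set.Ioo a b \ s = ∅ := by
          rw [Set.diff_eq_empty]
          exact fun x hx => (hIoo hx).1
        rw [this]; simp
    rw [ind_set_congr hs.measurableSet hμs measurableSet_Ioo (mu0_Ioo_ne_top a b) heq]
    exact h a b ha0 hab



lemma ind_union {s t : Set ℝ} (hs : MeasurableSet s) (hμs : μ0 s ≠ ∞)
    (ht : MeasurableSet t) (hμt : μ0 t ≠ ∞) (hμst : μ0 (s ∪ t) ≠ ∞) :
    indicatorConstLp 1 (hs.union ht) hμst (1:ℝ)
      = indicatorConstLp 1 hs hμs 1 + indicatorConstLp 1 ht hμt 1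
        - indicatorConstLp 1 (hs.inter ht) (by
            exact ne_top_of_le_ne_top hμs (measure_mono Set.inter_subset_left)) 1 := by
  apply Lp.ext
  have hc1 := indicatorConstLp_coeFn (p := 1) (μ := μ0) (s := s ∪ t) (hs := hs.union ht)
    (hμs := hμst) (c := (1:ℝ))
  have hc2 := indicatorConstLp_coeFn (p := 1) (μ := μ0) (s := s) (hs := hs) (hμs := hμs) (c := (1:ℝ))
  have hc3 := indicatorConstLp_coeFn (p := 1) (μ := μ0) (s := t) (hs := ht) (hμs := hμt) (c := (1:ℝ))
  have hc4 := indicatorConstLp_coeFn (p := 1) (μ := μ0) (s := s ∩ t) (hs := hs.inter ht)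
    (hμs := by exact ne_top_of_le_ne_top hμs (measure_mono Set.inter_subset_left)) (c := (1:ℝ))
  filter_upwards [hc1, hc2, hc3, hc4,
    Lp.coeFn_sub (indicatorConstLp 1 hs hμs (1:ℝ) + indicatorConstLp 1 ht hμt 1) _,
    Lp.coeFn_add (indicatorConstLp 1 hs hμs (1:ℝ)) (indicatorConstLp 1 ht hμt 1)]
    with x h1 h2 h3 h4 h5 h6
  rw [h1, h5, Pi.sub_apply, h6, Pi.add_apply, h2, h3, h4]
  by_cases hxs : x ∈ s <;> by_cases hxt : x ∈ t <;>
    simp [Set.indicator_apply, hxs, hxt]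

/-- Lemma G : indicator of a finite union of intervals. -/
lemma sUnion_mem (V : Submodule ℝ (Lp ℝ 1 μ0))
    (h : ∀ a b : ℝ, 0 ≤ a → a ≤ b → indI a b ∈ V) :
    ∀ (N : ℕ) (S : Finset (Set ℝ)), S.card ≤ N → (∀ s ∈ S, s.OrdConnected) →
      ∀ (hm : MeasurableSet (⋃₀ ↑S)) (hμ : μ0 (⋃₀ ↑S) ≠ ∞),
        indicatorConstLp 1 hm hμ (1:ℝ) ∈ V := by
  classical
  intro N
  induction N with
  | zero =>
      intro S hcard _ hm hμ
      have hS : S = ∅ := Finset.card_eq_zero.1 (Nat.le_zero.1 hcard)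
      have he : (⋃₀ ↑S : Set ℝ) =ᵐ[μ0] Set.Ioo (0:ℝ) 0 := by
        rw [hS, Set.Ioo_self]
        simp
        exact Filter.EventuallyEq.rfl
      rw [show indicatorConstLp 1 hm hμ (1:ℝ) = indI 0 0 from ind_set_congr _ _ _ _ he,
        indI_of_ge le_rfl]
      exact V.zero_mem
  | succ N IH =>
      intro S hcard hord hm hμ
      rcases S.eq_empty_or_nonempty with hS | ⟨I, hIS⟩
      · have he : (⋃₀ ↑S : Set ℝ) =ᵐ[μ0] Set.Ioo (0:ℝ) 0 := by
          rw [hS, Set.Ioo_self]; simp; exact Filter.EventuallyEq.rfl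
        rw [show indicatorConstLp 1 hm hμ (1:ℝ) = indI 0 0 from ind_set_congr _ _ _ _ he,
          indI_of_ge le_rfl]
        exact V.zero_mem
      · set S' := S.erase I with hS'
        have hins : S = insert I S' := (Finset.insert_erase hIS).symm
        have hcard' : S'.card ≤ N := by
          have h1 : S'.card = S.card - 1 := by
            rw [hS']; exact Finset.card_erase_of_mem hIS
          have h2 : 0 < S.card := Finset.card_pos.2 ⟨I, hIS⟩
          omega
        have hord' : ∀ s ∈ S', s.OrdConnected := fun s hs => hord s (Finset.erase_subset _ _ hs)
        have hIord : I.OrdConnected := hord I hIS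
        have hu_sub : (⋃₀ ↑S' : Set ℝ) ⊆ ⋃₀ ↑S :=
          Set.sUnion_subset_sUnion (by exact_mod_cast Finset.erase_subset I S)
        have hI_sub : I ⊆ ⋃₀ ↑S := fun x hx => ⟨I, by exact_mod_cast hIS, hx⟩
        have hmu : MeasurableSet (⋃₀ ↑S' : Set ℝ) :=
          MeasurableSet.sUnion S'.countable_toSet fun s hs => (hord' s hs).measurableSet
        have hμu : μ0 (⋃₀ ↑S' : Set ℝ) ≠ ∞ := ne_top_of_le_ne_top hμ (measure_mono hu_sub)
        have hμI : μ0 I ≠ ∞ := ne_top_of_le_ne_top hμ (measure_mono hI_sub)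
        have hunion : (⋃₀ ↑S : Set ℝ) = I ∪ ⋃₀ ↑S' := by
          rw [hins]; push_cast [Finset.coe_insert]; rw [Set.sUnion_insert]
        -- the intersection is a union of at most N intervals
        set T := S'.image (fun s => I ∩ s) with hT
        have hordT : ∀ s ∈ T, s.OrdConnected := by
          intro s hs
          simp only [hT, Finset.mem_image] at hs
          obtain ⟨w, hw, rfl⟩ := hs
          exact hIord.inter (hord' w hw)
        have hcardT : T.card ≤ N := le_trans (Finset.card_image_le) hcard'
        have hTeq : (⋃₀ ↑T : Set ℝ) = I ∩ ⋃₀ ↑S' := by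
          ext x
          simp only [hT, Set.mem_sUnion, Finset.coe_image, Set.mem_image, Finset.mem_coe,
            Set.mem_inter_iff]
          constructor
          · rintro ⟨w, ⟨v, hv, rfl⟩, hx1, hx2⟩
            exact ⟨hx1, v, hv, hx2⟩
          · rintro ⟨hx1, v, hv, hx2⟩
            exact ⟨I ∩ v, ⟨v, hv, rfl⟩, hx1, hx2⟩
        have hmT : MeasurableSet (⋃₀ ↑T : Set ℝ) := by
          rw [hTeq]; exact hIord.measurableSet.inter hmu
        have hμT : μ0 (⋃₀ ↑T : Set ℝ) ≠ ∞ := by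
          rw [hTeq]
          exact ne_top_of_le_ne_top hμI (measure_mono Set.inter_subset_left)
        have hIV : indicatorConstLp 1 hIord.measurableSet hμI (1:ℝ) ∈ V := ord_mem V h hIord hμI
        have huV : indicatorConstLp 1 hmu hμu (1:ℝ) ∈ V := IH S' hcard' hord' hmu hμu
        have hTV : indicatorConstLp 1 hmT hμT (1:ℝ) ∈ V := IH T hcardT hordT hmT hμT
        have hkey : indicatorConstLp 1 hm hμ (1:ℝ)
            = indicatorConstLp 1 hIord.measurableSet hμI 1 + indicatorConstLp 1 hmu hμu 1
              - indicatorConstLp 1 hmT hμT 1 := by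
          have e1 : indicatorConstLp 1 hm hμ (1:ℝ)
              = indicatorConstLp 1 (hIord.measurableSet.union hmu) (hunion ▸ hμ) 1 :=
            ind_set_congr _ _ _ _ (by rw [hunion]; exact Filter.EventuallyEq.rfl)
          rw [e1, ind_union hIord.measurableSet hμI hmu hμu (hunion ▸ hμ)]
          congr 1
          exact ind_set_congr _ _ _ _ (by rw [hTeq]; exact Filter.EventuallyEq.rfl)
        rw [hkey]
        exact V.sub_mem (V.add_mem hIV huV) hTV

lemma ind_smul {s : Set ℝ} (hs : MeasurableSet s) (hμs : μ0 s ≠ ∞) (c : ℝ) :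
    indicatorConstLp 1 hs hμs c = c • indicatorConstLp 1 hs hμs (1:ℝ) := by
  apply Lp.ext
  have hc1 := indicatorConstLp_coeFn (p := 1) (μ := μ0) (s := s) (hs := hs) (hμs := hμs) (c := c)
  have hc2 := indicatorConstLp_coeFn (p := 1) (μ := μ0) (s := s) (hs := hs) (hμs := hμs) (c := (1:ℝ))
  filter_upwards [hc1, hc2, Lp.coeFn_smul c (indicatorConstLp 1 hs hμs (1:ℝ))] with x h1 h2 h3
  rw [h1, h3, Pi.smul_apply, h2]
  by_cases hx : x ∈ s <;> simp [Set.indicator_apply, hx]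

/-- Main criterion: a closed submodule containing all `indI a b` (`0 ≤ a ≤ b`) is everything. -/
lemma span_criterion (V : Submodule ℝ (Lp ℝ 1 μ0)) (hV : IsClosed (V : Set (Lp ℝ 1 μ0)))
    (h : ∀ a b : ℝ, 0 ≤ a → a ≤ b → indI a b ∈ V) : V = ⊤ := by
  rw [Submodule.eq_top_iff']
  have key : ∀ (s : Set ℝ) (hm : MeasurableSet s) (hμ : μ0 s ≠ ∞),
      indicatorConstLp 1 hm hμ (1:ℝ) ∈ V := by
    intro s hm hμ
    have hcl : indicatorConstLp 1 hm hμ (1:ℝ) ∈ closure (V : Set (Lp ℝ 1 μ0)) := by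
      rw [SeminormedAddCommGroup.mem_closure_iff]
      intro ε hε
      obtain ⟨t, ht𝒜, hμt, hst⟩ := SA_dense.fin_meas_approx hm hμ ε hε
      obtain ⟨S, hS, rfl⟩ := ht𝒜
      refine ⟨indicatorConstLp 1 (SA_meas _ ⟨S, hS, rfl⟩) hμt 1,
        sUnion_mem V h S.card S le_rfl hS _ hμt, ?_⟩
      rw [← dist_eq_norm, dist_indicator']
      calc (μ0 (s ∆ ⋃₀ ↑S)).toReal < (ENNReal.ofReal ε).toReal := by
            exact ENNReal.toReal_strict_mono ENNReal.ofReal_ne_top hst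
        _ = ε := ENNReal.toReal_ofReal hε.le
    rwa [hV.closure_eq] at hcl
  intro f
  refine Lp.induction (E := ℝ) (μ := μ0) ENNReal.one_ne_top (fun g => g ∈ V) ?_ ?_ ?_ f
  · intro c s hs hμs
    rw [Lp.simpleFunc.coe_indicatorConst, ind_smul]
    exact V.smul_mem c (key s hs hμs.ne)
  · intro f g _ _ _ hfV hgV
    exact V.add_mem hfV hgV
  · exact hV


lemma child_left (j n m : ℕ) : indI (hL j n m) (hM j n m)
    = (2:ℝ)⁻¹ • indI (hL j n m) (hR j n m) + ((2:ℝ)^(n+1))⁻¹ • haarLp j n m := by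
  rw [haarLp, indI_split (hLM j n m) (hMR j n m)]
  have h2 : ((2:ℝ)^(n+1))⁻¹ * 2^n = 2⁻¹ := by
    rw [pow_succ]; field_simp
  rw [smul_add, smul_sub, smul_smul, smul_smul, h2]
  module

lemma child_right (j n m : ℕ) : indI (hM j n m) (hR j n m)
    = (2:ℝ)⁻¹ • indI (hL j n m) (hR j n m) - ((2:ℝ)^(n+1))⁻¹ • haarLp j n m := by
  rw [haarLp, indI_split (hLM j n m) (hMR j n m)]
  have h2 : ((2:ℝ)^(n+1))⁻¹ * 2^n = 2⁻¹ := by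
    rw [pow_succ]; field_simp
  rw [smul_sub, smul_add, smul_smul, smul_smul, h2]
  module

lemma claimB (V : Submodule ℝ (Lp ℝ 1 μ0))
    (hH : ∀ j n k : ℕ, 1 ≤ k → k ≤ 2^n → haarLp j n k ∈ V) :
    ∀ (n k j : ℕ), 1 ≤ k → k ≤ 2^n → indI (j:ℝ) ((j:ℝ)+1) ∈ V →
      indI ((j:ℝ) + ((k:ℝ)-1)/2^n) ((j:ℝ) + (k:ℝ)/2^n) ∈ V := by
  intro n
  induction n with
  | zero =>
      intro k j hk1 hk2 hbase
      have hk : k = 1 := le_antisymm (by simpa using hk2) hk1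
      subst hk
      have e1 : (j:ℝ) + (((1:ℕ):ℝ)-1)/2^0 = (j:ℝ) := by norm_num
      have e2 : (j:ℝ) + ((1:ℕ):ℝ)/2^0 = (j:ℝ)+1 := by norm_num
      rw [e1, e2]
      exact hbase
  | succ n IH =>
      intro k j hk1 hk2 hbase
      rcases Nat.even_or_odd k with ⟨m, hm⟩ | ⟨m, hm⟩
      · -- k = m + m, right child of parent m
        have hm1 : 1 ≤ m := by omega
        have hm2 : m ≤ 2^n := by
          have : 2^(n+1) = 2^n + 2^n := by rw [pow_succ]; ring
          omega
        have hP : indI ((j:ℝ) + ((m:ℝ)-1)/2^n) ((j:ℝ) + (m:ℝ)/2^n) ∈ V := IH m j hm1 hm2 hbase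
        have e1 : (j:ℝ) + ((k:ℝ)-1)/2^(n+1) = hM j n m := by
          rw [hM, hm]; push_cast; ring
        have e2 : (j:ℝ) + (k:ℝ)/2^(n+1) = hR j n m := by
          rw [hR, hm]; push_cast; ring
        rw [e1, e2, child_right j n m]
        refine V.sub_mem (V.smul_mem _ ?_) (V.smul_mem _ (hH j n m hm1 hm2))
        rw [hL_eq, hR_eq]
        exact hP
      · -- k = 2m+1, left child of parent m+1
        have hm2 : m + 1 ≤ 2^n := by
          have : 2^(n+1) = 2^n + 2^n := by rw [pow_succ]; ring
          omega
        have hP : indI ((j:ℝ) + (((m+1:ℕ):ℝ)-1)/2^n) ((j:ℝ) + ((m+1:ℕ):ℝ)/2^n) ∈ V :=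
          IH (m+1) j (by omega) hm2 hbase
        have e1 : (j:ℝ) + ((k:ℝ)-1)/2^(n+1) = hL j n (m+1) := by
          rw [hL, hm]; push_cast; ring
        have e2 : (j:ℝ) + (k:ℝ)/2^(n+1) = hM j n (m+1) := by
          rw [hM, hm]; push_cast; ring
        rw [e1, e2, child_left j n (m+1)]
        refine V.add_mem (V.smul_mem _ ?_) (V.smul_mem _ (hH j n (m+1) (by omega) hm2))
        rw [hL_eq, hR_eq]
        exact hP

end Stmt5Aux
open Stmt5Aux

/-- suppose the enumeration starts with the first mean zero Haar function on
`(0,1)` (i.e. `e 0 = (0, 0, 1)`), the permutation `π` satisfies `π 0 = 0` and, for `i > 0`,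
if `h_i` lives on the interval `(j, j+1)` then `π i > j` (so the support of `h_i` is disjoint
from `(π i, π i + 1)`).  With `x_i = 2·1_{(π i, π i + 1)} + |h_i| + h_i` and
`y_i = 2·1_{(π i, π i + 1)} + |h_i| - h_i` (as elements `X i`, `Y i` of `L₁(0,∞)`), the
closed linear span of `{x_i, y_i}` is all of `L₁(0,∞)`. -/
theorem stmt5 (e : ℕ ≃ HaarIdx) (π : Equiv.Perm ℕ)
    (he : (e 0).1 = (0, 0, 1))
    (hπ0 : π 0 = 0)
    (hπ : ∀ i : ℕ, 0 < i → (e i).1.1 < π i)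
    (X Y : ℕ → Lp ℝ 1 (volume.restrict (Set.Ioi (0 : ℝ))))
    (hX : ∀ i, ⇑(X i) =ᵐ[volume.restrict (Set.Ioi (0 : ℝ))] fun t =>
      2 * Set.indicator (Set.Ioo (π i : ℝ) (π i + 1)) 1 t + |haarSeq e i t| + haarSeq e i t)
    (hY : ∀ i, ⇑(Y i) =ᵐ[volume.restrict (Set.Ioi (0 : ℝ))] fun t =>
      2 * Set.indicator (Set.Ioo (π i : ℝ) (π i + 1)) 1 t + |haarSeq e i t| - haarSeq e i t) :
    (Submodule.span ℝ (Set.range X ∪ Set.range Y)).topologicalClosure = ⊤ := by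
  classical
  set V := (Submodule.span ℝ (Set.range X ∪ Set.range Y)).topologicalClosure with hVdef
  have hVclosed : IsClosed (V : Set (Lp ℝ 1 (volume.restrict (Set.Ioi (0:ℝ))))) :=
    Submodule.isClosed_topologicalClosure _
  have hXV : ∀ i, X i ∈ V := fun i =>
    Submodule.le_topologicalClosure _ (Submodule.subset_span (Or.inl ⟨i, rfl⟩))
  have hYV : ∀ i, Y i ∈ V := fun i =>
    Submodule.le_topologicalClosure _ (Submodule.subset_span (Or.inr ⟨i, rfl⟩))
  -- the Haar functions belong to `V`
  have key1 : ∀ (j n k : ℕ), 1 ≤ k → k ≤ 2^n → haarLp j n k ∈ V := by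
    intro j n k hk1 hk2
    set i := e.symm (⟨(j, n, k), ⟨hk1, hk2⟩⟩ : HaarIdx) with hi
    have hseq : haarSeq e i = haarFun j n k := by
      unfold haarSeq
      rw [hi]
      exact congrArg (fun x : HaarIdx => haarFun x.1.1 x.1.2.1 x.1.2.2) (e.apply_symm_apply _)
    have hxy : haarLp j n k = (2:ℝ)⁻¹ • (X i - Y i) := by
      apply Lp.ext
      filter_upwards [haarLp_coe j n k, hX i, hY i,
        Lp.coeFn_smul ((2:ℝ)⁻¹) (X i - Y i), Lp.coeFn_sub (X i) (Y i)] with t h1 h2 h3 h4 h5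
      simp only [h1, h4, Pi.smul_apply, h5, Pi.sub_apply, h2, h3, hseq, smul_eq_mul]
      ring
    rw [hxy]
    exact V.smul_mem _ (V.sub_mem (hXV i) (hYV i))
  -- the key pointwise identity for `X i + Y i`
  have keyXY : ∀ (i j n k : ℕ), (e i).1 = (j, n, k) →
      X i + Y i = (4:ℝ) • indI ((π i : ℝ)) ((π i : ℝ)+1)
        + ((2:ℝ)^(n+1)) • indI (hL j n k) (hR j n k) := by
    intro i j n k hjnk
    have hs : haarSeq e i = haarFun j n k := by
      unfold haarSeq; rw [hjnk]
    apply Lp.ext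
    filter_upwards [hX i, hY i, Lp.coeFn_add (X i) (Y i),
      Lp.coeFn_add ((4:ℝ) • indI ((π i : ℝ)) ((π i : ℝ)+1))
        (((2:ℝ)^(n+1)) • indI (hL j n k) (hR j n k)),
      Lp.coeFn_smul (4:ℝ) (indI ((π i : ℝ)) ((π i : ℝ)+1)),
      Lp.coeFn_smul ((2:ℝ)^(n+1)) (indI (hL j n k) (hR j n k)),
      indI_coe ((π i : ℝ)) ((π i : ℝ)+1),
      indI_coe (hL j n k) (hR j n k),
      ae_ne (hM j n k)] with t q1 q2 q3 q4 q5 q6 q7 q8 q9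
    simp only [q3, Pi.add_apply, q1, q2, q4, q5, q6, Pi.smul_apply, q7, q8, hs, smul_eq_mul]
    rw [haarFun_abs j n k q9]
    simp only [Set.indicator_apply, Pi.one_apply]
    ring
  -- indicators of the unit intervals `(m, m+1)` belong to `V`
  have baseV : ∀ m : ℕ, indI (m:ℝ) ((m:ℝ)+1) ∈ V := by
    intro m
    induction m using Nat.strong_induction_on with
    | _ m IH =>
      rcases Nat.eq_zero_or_pos m with rfl | hm
      · have h0 : ((π 0 : ℕ) : ℝ) = 0 := by rw [hπ0]; norm_num
        have hL0 : hL 0 0 1 = 0 := by rw [hL_eq]; norm_num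
        have hR0 : hR 0 0 1 = 1 := by rw [hR_eq]; norm_num
        have hXY := keyXY 0 0 0 1 he
        rw [h0, hL0, hR0, show (0:ℝ)+1 = 1 from by norm_num,
          show ((2:ℝ)^(0+1)) = 2 from by norm_num] at hXY
        have h01 : indI 0 1 = (6:ℝ)⁻¹ • (X 0 + Y 0) := by
          rw [hXY]; module
        rw [Nat.cast_zero, show (0:ℝ)+1 = 1 from by norm_num, h01]
        exact V.smul_mem _ (V.add_mem (hXV 0) (hYV 0))
      · set i := π.symm m with hi
        have hπi : π i = m := π.apply_symm_apply m
        have hipos : 0 < i := by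
          rcases Nat.eq_zero_or_pos i with h0 | h
          · rw [h0] at hπi; rw [hπ0] at hπi; omega
          · exact h
        have hjnk : (e i).1 = ((e i).1.1, (e i).1.2.1, (e i).1.2.2) := rfl
        have hkbound : 1 ≤ (e i).1.2.2 ∧ (e i).1.2.2 ≤ 2^(e i).1.2.1 := (e i).2
        have hjm : (e i).1.1 < m := by
          have := hπ i hipos
          rwa [hπi] at this
        have hbasej : indI ((e i).1.1 : ℝ) (((e i).1.1 : ℝ)+1) ∈ V := IH _ hjm
        have hdy : indI (hL (e i).1.1 (e i).1.2.1 (e i).1.2.2)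
            (hR (e i).1.1 (e i).1.2.1 (e i).1.2.2) ∈ V := by
          rw [hL_eq, hR_eq]
          exact claimB V key1 _ _ _ hkbound.1 hkbound.2 hbasej
        have hXY := keyXY i _ _ _ hjnk
        rw [hπi] at hXY
        have hsolve : indI (m:ℝ) ((m:ℝ)+1)
            = (4:ℝ)⁻¹ • (X i + Y i - ((2:ℝ)^((e i).1.2.1+1)) •
              indI (hL (e i).1.1 (e i).1.2.1 (e i).1.2.2)
                (hR (e i).1.1 (e i).1.2.1 (e i).1.2.2)) := by
          rw [hXY]; module
        rw [hsolve]
        exact V.smul_mem _ (V.sub_mem (V.add_mem (hXV i) (hYV i)) (V.smul_mem _ hdy))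
  -- all dyadic indicators belong to `V`
  have hd : ∀ p n : ℕ, indI ((p:ℝ)/2^n) (((p:ℝ)+1)/2^n) ∈ V := by
    intro p n
    have h2n : 0 < 2^n := by positivity
    set j := p / 2^n with hj
    set r := p % 2^n with hr
    have hpr : 2^n * j + r = p := by rw [hj, hr]; exact Nat.div_add_mod p (2^n)
    have hrlt : r < 2^n := by rw [hr]; exact Nat.mod_lt _ h2n
    have hcb := claimB V key1 n (r+1) j (by omega) (by omega) (baseV j)
    have hp' : (p:ℝ) = 2^n*(j:ℝ) + r := by exact_mod_cast hpr.symm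
    have e1 : (j:ℝ) + (((r+1:ℕ):ℝ)-1)/2^n = (p:ℝ)/2^n := by
      rw [hp']; push_cast; field_simp; ring
    have e2 : (j:ℝ) + ((r+1:ℕ):ℝ)/2^n = ((p:ℝ)+1)/2^n := by
      rw [hp']; push_cast; field_simp; ring
    rwa [e1, e2] at hcb
  exact span_criterion V hVclosed fun a b ha hab => Ioo_mem_of_dyadic V hVclosed hd a b ha hab
end

section
/- Let 1 ≤ p ≤ 2 and let (x_n) be a sequence in L_p(0,∞) with ‖x_n‖_p = 1 and x_n ≥ 0 a.e. for every n, and suppose (x_n) is K-unconditional. Then for every finitely supported scalar sequence (a_n), K^{−1} ‖∑_n a_n x_n‖_p ≤ (∑_n |a_n|^p)^{1/p} ≤ K ‖∑_n a_n x_n‖_p. -/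
open MeasureTheory Filter Topology ENNReal
open NNReal

/-- two-term superadditivity of `t ↦ t^q` for `q ≥ 1` on nonneg reals -/
lemma real_add_rpow {q : ℝ} (hq : 1 ≤ q) {x y : ℝ} (hx : 0 ≤ x) (hy : 0 ≤ y) :
    x ^ q + y ^ q ≤ (x + y) ^ q := by
  have h := NNReal.coe_le_coe.2 (NNReal.add_rpow_le_rpow_add x.toNNReal y.toNNReal hq)
  simpa [NNReal.coe_rpow, Real.coe_toNNReal x hx, Real.coe_toNNReal y hy] using h

/-- finset superadditivity -/
lemma sum_rpow_le_rpow_sum {q : ℝ} (hq : 1 ≤ q) (s : Finset ℕ) (c : ℕ → ℝ)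
    (hc : ∀ n ∈ s, 0 ≤ c n) :
    ∑ n ∈ s, c n ^ q ≤ (∑ n ∈ s, c n) ^ q := by
  classical
  induction s using Finset.induction with
  | empty => simp [Real.zero_rpow (by positivity : q ≠ 0)]
  | insert k t hk ih =>
    rw [Finset.sum_insert hk, Finset.sum_insert hk]
    have h1 : ∑ n ∈ t, c n ^ q ≤ (∑ n ∈ t, c n) ^ q :=
      ih (fun n hn => hc n (Finset.mem_insert_of_mem hn))
    refine le_trans (add_le_add_right h1 _) ?_
    exact real_add_rpow hq (hc k (Finset.mem_insert_self k t))
      (Finset.sum_nonneg fun n hn => hc n (Finset.mem_insert_of_mem hn))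

/-- Clarkson-type inequality in ℝ≥0 -/
lemma clarkNN {q : ℝ} (hq1 : 1 ≤ q) (hq2 : q ≤ 2) (a b c d : ℝ≥0)
    (h : a ^ (2:ℝ) + b ^ (2:ℝ) = 2 * (c ^ (2:ℝ) + d ^ (2:ℝ))) :
    a ^ q + b ^ q ≤ 2 * (c ^ q + d ^ q) := by
  have hq0 : 0 < q := lt_of_lt_of_le one_pos hq1
  have h2q : 1 ≤ 2 / q := (one_le_div hq0).2 hq2
  have h1 : (a ^ q + b ^ q) ^ ((2:ℝ)/q) ≤ 2 ^ ((2:ℝ)/q) * (c ^ (2:ℝ) + d ^ (2:ℝ)) := by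
    have := NNReal.rpow_add_le_mul_rpow_add_rpow (a ^ q) (b ^ q) h2q
    rw [← NNReal.rpow_mul, ← NNReal.rpow_mul, show q * (2/q) = 2 by field_simp] at this
    refine this.trans ?_
    rw [h]
    rw [show ((2:ℝ)/q) = (2/q - 1) + 1 by ring, NNReal.rpow_add two_ne_zero, NNReal.rpow_one]
    ring_nf
    exact le_refl _
  have e1 : ((a ^ q + b ^ q) ^ ((2:ℝ)/q)) ^ (q/2) = a ^ q + b ^ q := by
    rw [← NNReal.rpow_mul, show (2/q) * (q/2) = 1 by field_simp, NNReal.rpow_one]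
  have e2 : (((2:ℝ≥0)) ^ ((2:ℝ)/q)) ^ (q/2) = 2 := by
    rw [← NNReal.rpow_mul, show (2/q) * (q/2) = 1 by field_simp, NNReal.rpow_one]
  have h2 : (c ^ (2:ℝ) + d ^ (2:ℝ)) ^ (q/2) ≤ c ^ q + d ^ q := by
    have h3 := NNReal.rpow_le_rpow (NNReal.rpow_add_rpow_le c d hq0 hq2) (le_of_lt hq0)
    have e3 : ((c ^ (2:ℝ) + d ^ (2:ℝ)) ^ ((1:ℝ)/2)) ^ q = (c ^ (2:ℝ) + d ^ (2:ℝ)) ^ (q/2) := by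
      rw [← NNReal.rpow_mul, show (1:ℝ)/2 * q = q/2 by ring]
    have e4 : ((c ^ q + d ^ q) ^ ((1:ℝ)/q)) ^ q = c ^ q + d ^ q := by
      rw [← NNReal.rpow_mul, show (1:ℝ)/q * q = 1 by field_simp, NNReal.rpow_one]
    rwa [e3, e4] at h3
  calc a ^ q + b ^ q = ((a ^ q + b ^ q) ^ ((2:ℝ)/q)) ^ (q/2) := e1.symm
    _ ≤ ((2:ℝ≥0) ^ ((2:ℝ)/q) * (c ^ (2:ℝ) + d ^ (2:ℝ))) ^ (q/2) :=
        NNReal.rpow_le_rpow h1 (by positivity)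
    _ = 2 * (c ^ (2:ℝ) + d ^ (2:ℝ)) ^ (q/2) := by rw [NNReal.mul_rpow, e2]
    _ ≤ 2 * (c ^ q + d ^ q) := mul_le_mul_right h2 2

/-- Clarkson in ℝ -/
lemma clarksonR {q : ℝ} (hq1 : 1 ≤ q) (hq2 : q ≤ 2) (x y : ℝ) :
    |x + y| ^ q + |x - y| ^ q ≤ 2 * (|x| ^ q + |y| ^ q) := by
  have hpar : ‖x+y‖₊ ^ (2:ℝ) + ‖x-y‖₊ ^ (2:ℝ) = 2 * (‖x‖₊ ^ (2:ℝ) + ‖y‖₊ ^ (2:ℝ)) := by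
    apply NNReal.coe_injective
    push_cast [NNReal.coe_rpow, coe_nnnorm, Real.norm_eq_abs]
    rw [show (2:ℝ) = ((2:ℕ):ℝ) by norm_num]
    rw [Real.rpow_natCast, Real.rpow_natCast, Real.rpow_natCast, Real.rpow_natCast]
    simp only [sq_abs]
    ring
  have h := NNReal.coe_le_coe.2 (clarkNN hq1 hq2 ‖x+y‖₊ ‖x-y‖₊ ‖x‖₊ ‖y‖₊ hpar)
  simpa [NNReal.coe_rpow, coe_nnnorm, Real.norm_eq_abs] using h

/-- Rademacher averaging over subsets -/
lemma rad_sum {q : ℝ} (hq1 : 1 ≤ q) (hq2 : q ≤ 2) (s : Finset ℕ) (c : ℕ → ℝ) :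
    ∑ T ∈ s.powerset, |∑ n ∈ s, (if n ∈ T then c n else -c n)| ^ q
      ≤ 2 ^ s.card * ∑ n ∈ s, |c n| ^ q := by
  classical
  induction s using Finset.induction with
  | empty => simp [Real.zero_rpow (by positivity : q ≠ 0)]
  | insert k t hk ih =>
    rw [Finset.sum_powerset_insert hk]
    have key : ∀ T ∈ t.powerset,
        |∑ n ∈ insert k t, (if n ∈ T then c n else -c n)| ^ q
          + |∑ n ∈ insert k t, (if n ∈ insert k T then c n else -c n)| ^ q
        ≤ 2 * (|∑ n ∈ t, (if n ∈ T then c n else -c n)| ^ q + |c k| ^ q) := by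
      intro T hT
      have hkT : k ∉ T := fun h => hk (Finset.mem_powerset.1 hT h)
      set S := ∑ n ∈ t, (if n ∈ T then c n else -c n) with hS
      have e1 : ∑ n ∈ insert k t, (if n ∈ T then c n else -c n) = S - c k := by
        rw [Finset.sum_insert hk, if_neg hkT]; ring
      have e2 : ∑ n ∈ insert k t, (if n ∈ insert k T then c n else -c n) = S + c k := by
        rw [Finset.sum_insert hk, if_pos (Finset.mem_insert_self k T)]
        have : ∀ n ∈ t, (if n ∈ insert k T then c n else -c n)
            = (if n ∈ T then c n else -c n) := by
          intro n hn
          have : n ≠ k := fun h => hk (h ▸ hn)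
          simp [Finset.mem_insert, this]
        rw [Finset.sum_congr rfl this]; ring
      rw [e1, e2]
      have := clarksonR hq1 hq2 S (c k)
      linarith [this]
    calc ∑ T ∈ t.powerset, |∑ n ∈ insert k t, (if n ∈ T then c n else -c n)| ^ q
          + ∑ T ∈ t.powerset, |∑ n ∈ insert k t, (if n ∈ insert k T then c n else -c n)| ^ q
        = ∑ T ∈ t.powerset, (|∑ n ∈ insert k t, (if n ∈ T then c n else -c n)| ^ q
            + |∑ n ∈ insert k t, (if n ∈ insert k T then c n else -c n)| ^ q) := by
          rw [Finset.sum_add_distrib]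
      _ ≤ ∑ T ∈ t.powerset, 2 * (|∑ n ∈ t, (if n ∈ T then c n else -c n)| ^ q + |c k| ^ q) :=
          Finset.sum_le_sum key
      _ = 2 * (∑ T ∈ t.powerset, |∑ n ∈ t, (if n ∈ T then c n else -c n)| ^ q)
            + 2 ^ t.card * (2 * |c k| ^ q) := by
          simp only [mul_add, Finset.sum_add_distrib, Finset.mul_sum, Finset.sum_const,
            Finset.card_powerset, nsmul_eq_mul]
          push_cast
          ring
      _ ≤ 2 ^ (insert k t).card * ∑ n ∈ insert k t, |c n| ^ q := by
          rw [Finset.card_insert_of_notMem hk, Finset.sum_insert hk, pow_succ]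
          nlinarith [ih]
theorem stmt9_aux {α : Type*} [MeasurableSpace α] (μ : Measure α)
    (p : ℝ≥0∞) [Fact (1 ≤ p)] (hp : p ≤ 2) (K : ℝ)
    (x : ℕ → Lp ℝ p μ)
    (hnorm : ∀ n, ‖x n‖ = 1)
    (hpos : ∀ n, 0 ≤ᵐ[μ] ⇑(x n))
    (huncond : ∀ (s : Finset ℕ) (a ε : ℕ → ℝ), (∀ n, ε n = 1 ∨ ε n = -1) →
      ‖∑ n ∈ s, (ε n * a n) • x n‖ ≤ K * ‖∑ n ∈ s, a n • x n‖)
    (s : Finset ℕ) (a : ℕ → ℝ) :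
    K⁻¹ * ‖∑ n ∈ s, a n • x n‖ ≤ (∑ n ∈ s, |a n| ^ p.toReal) ^ (1 / p.toReal) ∧
    (∑ n ∈ s, |a n| ^ p.toReal) ^ (1 / p.toReal) ≤ K * ‖∑ n ∈ s, a n • x n‖ := by
  classical
  have hp1 : (1:ℝ≥0∞) ≤ p := Fact.out
  have hp0 : p ≠ 0 := by
    intro h; rw [h] at hp1; exact absurd hp1 (by simp)
  have hptop : p ≠ ∞ := by
    intro h; rw [h] at hp; exact absurd hp (by simp)
  set q := p.toReal with hqdef
  have hq1 : 1 ≤ q := by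
    have := ENNReal.toReal_mono hptop hp1
    simpa using this
  have hq2 : q ≤ 2 := by
    have := ENNReal.toReal_mono (by norm_num : (2:ℝ≥0∞) ≠ ∞) hp
    simpa using this
  have hq0 : 0 < q := lt_of_lt_of_le one_pos hq1
  have hqne : q ≠ 0 := ne_of_gt hq0
  -- norm-to-integral formula
  have hnormpow : ∀ f : Lp ℝ p μ, ‖f‖ ^ q = ∫ t, |f t| ^ q ∂μ := by
    intro f
    have h := (Lp.memLp f).eLpNorm_eq_integral_rpow_norm hp0 hptop
    have hint : (0:ℝ) ≤ ∫ t, ‖f t‖ ^ q ∂μ :=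
      integral_nonneg fun t => Real.rpow_nonneg (norm_nonneg _) _
    rw [Lp.norm_def, h, ENNReal.toReal_ofReal (Real.rpow_nonneg hint _),
      ← Real.rpow_mul hint, inv_mul_cancel₀ hqne, Real.rpow_one]
    simp only [Real.norm_eq_abs]
  have hIntf : ∀ f : Lp ℝ p μ, Integrable (fun t => |f t| ^ q) μ := fun f => by
    simpa [Real.norm_eq_abs] using (Lp.memLp f).integrable_norm_rpow hp0 hptop
  have hxint : ∀ n, ∫ t, |x n t| ^ q ∂μ = 1 := fun n => by
    rw [← hnormpow (x n), hnorm n, Real.one_rpow]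
  -- coercion of sums
  have hcoe : ∀ (t : Finset ℕ) (c : ℕ → ℝ),
      ⇑(∑ n ∈ t, c n • x n) =ᵐ[μ] fun w => ∑ n ∈ t, c n * (x n w) := by
    intro t
    induction t using Finset.induction with
    | empty =>
      intro c
      simp only [Finset.sum_empty]
      filter_upwards [Lp.coeFn_zero ℝ p μ] with w hw
      simpa using hw
    | insert k t hk ih =>
      intro c
      rw [Finset.sum_insert hk]
      filter_upwards [Lp.coeFn_add (c k • x k) (∑ n ∈ t, c n • x n),
        Lp.coeFn_smul (c k) (x k), ih c] with w h1 h2 h3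
      rw [h1, Pi.add_apply, h2, Pi.smul_apply, smul_eq_mul, h3, Finset.sum_insert hk]
  have hK1 : (1:ℝ) ≤ K := by
    have h := huncond {0} (fun _ => 1) (fun _ => 1) (fun n => Or.inl rfl)
    simpa [hnorm 0] using h
  have hK0 : (0:ℝ) < K := lt_of_lt_of_le one_pos hK1
  set M := ∑ n ∈ s, |a n| ^ q with hM
  have hMnn : 0 ≤ M := Finset.sum_nonneg fun n _ => Real.rpow_nonneg (abs_nonneg _) _
  have hpos' : ∀ᵐ t ∂μ, ∀ n, (0:ℝ) ≤ x n t := ae_all_iff.2 fun n => hpos n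
  -- Part A : upper bound
  have hGle : ‖∑ n ∈ s, |a n| • x n‖ ≤ K * ‖∑ n ∈ s, a n • x n‖ := by
    have h := huncond s a (fun n => if a n < 0 then -1 else 1)
      (fun n => by by_cases h : a n < 0 <;> simp [h])
    have e : ∀ n ∈ s, ((if a n < 0 then (-1:ℝ) else 1) * a n) • x n = |a n| • x n := by
      intro n _
      congr 1
      by_cases h : a n < 0
      · rw [if_pos h, abs_of_neg h]; ring
      · rw [if_neg h, abs_of_nonneg (not_lt.1 h), one_mul]
    rwa [Finset.sum_congr rfl e] at h
  have hMleG : M ≤ ‖∑ n ∈ s, |a n| • x n‖ ^ q := by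
    rw [hnormpow]
    have hle : (fun t => ∑ n ∈ s, |a n| ^ q * |x n t| ^ q)
        ≤ᵐ[μ] fun t => |(∑ n ∈ s, |a n| • x n : Lp ℝ p μ) t| ^ q := by
      filter_upwards [hcoe s (fun n => |a n|), hpos'] with t h1 h2
      calc ∑ n ∈ s, |a n| ^ q * |x n t| ^ q
          = ∑ n ∈ s, (|a n| * x n t) ^ q := by
            refine Finset.sum_congr rfl fun n hn => ?_
            rw [abs_of_nonneg (h2 n), ← Real.mul_rpow (abs_nonneg _) (h2 n)]
        _ ≤ (∑ n ∈ s, |a n| * x n t) ^ q :=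
            sum_rpow_le_rpow_sum hq1 s _ (fun n hn => mul_nonneg (abs_nonneg _) (h2 n))
        _ = |(∑ n ∈ s, |a n| • x n : Lp ℝ p μ) t| ^ q := by
            rw [h1, abs_of_nonneg (Finset.sum_nonneg fun n hn =>
              mul_nonneg (abs_nonneg _) (h2 n))]
    have h := integral_mono_ae
      (integrable_finset_sum s fun n _ => (hIntf (x n)).const_mul _) (hIntf _) hle
    rw [integral_finset_sum s (fun n _ => (hIntf (x n)).const_mul _)] at h
    simp only [integral_const_mul] at h
    simp only [hxint, mul_one] at h
    exact h
  have hupper : M ^ (1/q) ≤ K * ‖∑ n ∈ s, a n • x n‖ := by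
    have h1 : M ^ (1/q) ≤ (‖∑ n ∈ s, |a n| • x n‖ ^ q) ^ (1/q) :=
      Real.rpow_le_rpow hMnn hMleG (by positivity)
    rw [← Real.rpow_mul (norm_nonneg _), mul_one_div_cancel hqne, Real.rpow_one] at h1
    exact h1.trans hGle
  -- Part B : lower bound
  set F : Finset ℕ → Lp ℝ p μ := fun T => ∑ n ∈ s, (if n ∈ T then a n else -a n) • x n
    with hF
  have claim1 : ∑ T ∈ s.powerset, ‖F T‖ ^ q ≤ 2 ^ s.card * M := by
    have e : ∑ T ∈ s.powerset, ‖F T‖ ^ q = ∫ t, ∑ T ∈ s.powerset, |F T t| ^ q ∂μ := by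
      rw [integral_finset_sum _ (fun T _ => hIntf (F T))]
      exact Finset.sum_congr rfl fun T _ => hnormpow (F T)
    rw [e]
    have hAll : ∀ᵐ t ∂μ, ∀ T ∈ s.powerset,
        (F T) t = ∑ n ∈ s, (if n ∈ T then a n else -a n) * x n t :=
      (ae_ball_iff (s.powerset : Finset (Finset ℕ)).countable_toSet).2
        fun T _ => hcoe s _
    have hle : (fun t => ∑ T ∈ s.powerset, |F T t| ^ q)
        ≤ᵐ[μ] fun t => 2 ^ s.card * ∑ n ∈ s, |a n| ^ q * |x n t| ^ q := by
      filter_upwards [hAll] with t ht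
      have e2 : ∀ T ∈ s.powerset, |F T t| ^ q
          = |∑ n ∈ s, (if n ∈ T then (a n * x n t) else -(a n * x n t))| ^ q := by
        intro T hT
        rw [ht T hT]
        congr 2
        exact Finset.sum_congr rfl fun n _ => by split_ifs <;> ring
      rw [Finset.sum_congr rfl e2]
      refine le_trans (rad_sum hq1 hq2 s (fun n => a n * x n t)) ?_
      refine mul_le_mul_of_nonneg_left (le_of_eq (Finset.sum_congr rfl fun n _ => ?_))
        (by positivity)
      rw [abs_mul, Real.mul_rpow (abs_nonneg _) (abs_nonneg _)]
    refine le_trans (integral_mono_ae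
      (integrable_finset_sum _ fun T _ => hIntf (F T))
      ((integrable_finset_sum s fun n _ => (hIntf (x n)).const_mul _).const_mul _) hle) ?_
    rw [integral_const_mul, integral_finset_sum s (fun n _ => (hIntf (x n)).const_mul _)]
    simp only [integral_const_mul, hxint, mul_one, hM, le_refl]
  have claim2 : ∃ T ∈ s.powerset, ‖F T‖ ^ q ≤ M := by
    apply Finset.exists_le_of_sum_le ⟨∅, Finset.empty_mem_powerset s⟩
    rw [Finset.sum_const, Finset.card_powerset, nsmul_eq_mul]
    push_cast
    exact claim1
  obtain ⟨T, hTmem, hT⟩ := claim2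
  have hFT : ‖F T‖ ≤ M ^ (1/q) := by
    have h := Real.rpow_le_rpow (by positivity) hT (by positivity : (0:ℝ) ≤ 1/q)
    rwa [← Real.rpow_mul (norm_nonneg _), mul_one_div_cancel hqne, Real.rpow_one] at h
  have hrec : ‖∑ n ∈ s, a n • x n‖ ≤ K * ‖F T‖ := by
    have h := huncond s (fun n => (if n ∈ T then (1:ℝ) else -1) * a n)
      (fun n => if n ∈ T then 1 else -1) (fun n => by by_cases h : n ∈ T <;> simp [h])
    have e1 : ∀ n ∈ s, ((if n ∈ T then (1:ℝ) else -1)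
        * ((if n ∈ T then (1:ℝ) else -1) * a n)) • x n = a n • x n := by
      intro n _; congr 1; split_ifs <;> ring
    have e2 : ∀ n ∈ s, ((if n ∈ T then (1:ℝ) else -1) * a n) • x n
        = (if n ∈ T then a n else -a n) • x n := by
      intro n _; congr 1; split_ifs <;> ring
    rw [Finset.sum_congr rfl e1, Finset.sum_congr rfl e2] at h
    exact h
  refine ⟨?_, hupper⟩
  have h : K⁻¹ * ‖∑ n ∈ s, a n • x n‖ ≤ K⁻¹ * (K * ‖F T‖) :=
    mul_le_mul_of_nonneg_left hrec (by positivity)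
  rw [← mul_assoc, inv_mul_cancel₀ (ne_of_gt hK0), one_mul] at h
  exact h.trans hFT


/-- let `1 ≤ p ≤ 2` and let `(x_n)` be a normalized, a.e. non-negative,
`K`-unconditional sequence in `L_p(0,∞)`.  Then for every finitely supported scalar
sequence `(a_n)`,
`K⁻¹ ‖∑ a_n x_n‖_p ≤ (∑ |a_n| ^ p) ^ (1/p) ≤ K ‖∑ a_n x_n‖_p`. -/
theorem stmt9 (p : ℝ≥0∞) [Fact (1 ≤ p)] (hp : p ≤ 2) (K : ℝ)
    (x : ℕ → Lp ℝ p (volume.restrict (Set.Ioi (0 : ℝ))))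
    (hnorm : ∀ n, ‖x n‖ = 1)
    (hpos : ∀ n, 0 ≤ᵐ[volume.restrict (Set.Ioi (0 : ℝ))] ⇑(x n))
    (huncond : ∀ (s : Finset ℕ) (a ε : ℕ → ℝ), (∀ n, ε n = 1 ∨ ε n = -1) →
      ‖∑ n ∈ s, (ε n * a n) • x n‖ ≤ K * ‖∑ n ∈ s, a n • x n‖)
    (s : Finset ℕ) (a : ℕ → ℝ) :
    K⁻¹ * ‖∑ n ∈ s, a n • x n‖ ≤ (∑ n ∈ s, |a n| ^ p.toReal) ^ (1 / p.toReal) ∧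
    (∑ n ∈ s, |a n| ^ p.toReal) ^ (1 / p.toReal) ≤ K * ‖∑ n ∈ s, a n • x n‖ :=
  stmt9_aux _ p hp K x hnorm hpos huncond s a
end

section
/- Let 1 ≤ p < ∞ and let (x_n) be a sequence in L_p(0,∞) with ‖x_n‖_p = 1 and x_n ≥ 0 a.e. for every n, and suppose (x_n) is K-unconditional. Then there exist constants c, C > 0 depending only on K and p such that for every finitely supported scalar sequence (a_n), c·‖ sup_n |a_n| x_n ‖_p ≤ ‖∑_n a_n x_n‖_p ≤ C·‖ sup_n |a_n| x_n ‖_p, where sup_n |a_n| x_n denotes the pointwise supremum. -/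
open MeasureTheory Filter Topology ENNReal

section Stmt11Helpers
open Finset

lemma evensum (k : ℕ) (H : ℕ → ℝ) (h : ∀ j < 2*k+1, Odd j → H j = 0) :
    ∑ j ∈ Finset.range (2*k+1), H j = ∑ r ∈ Finset.range (k+1), H (2*r) := by
  induction k with
  | zero => simp
  | succ k ih =>
    have h1 : 2*(k+1)+1 = (2*k+1) + 1 + 1 := by ring
    rw [h1, Finset.sum_range_succ, Finset.sum_range_succ,
      ih (fun j hj hodd => h j (by omega) hodd), Finset.sum_range_succ,
      h (2*k+1) (by omega) ⟨k, by ring⟩]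
    rw [add_zero, show k+1+1 = (k+1)+1 from rfl, Finset.sum_range_succ _ (k+1),
      ← Finset.sum_range_succ (fun r => H (2*r)) k]
    congr 2

lemma pm_pow (x c : ℝ) (k : ℕ) :
    (x + c)^(2*k) + (x - c)^(2*k)
      = ∑ r ∈ Finset.range (k+1),
          2 * ((Nat.choose (2*k) (2*r) : ℝ) * x^(2*r) * c^(2*k-2*r)) := by
  have hxc : x - c = x + (-c) := by ring
  rw [add_pow, hxc, add_pow, ← Finset.sum_add_distrib]
  have hc : ∀ j ∈ Finset.range (2*k+1),
      x^j * c^(2*k-j) * (Nat.choose (2*k) j : ℝ) + x^j * (-c)^(2*k-j) * (Nat.choose (2*k) j : ℝ)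
      = (1 + (-1:ℝ)^(2*k-j)) * (x^j * c^(2*k-j) * (Nat.choose (2*k) j : ℝ)) := by
    intro j hj
    rw [neg_pow]
    ring
  rw [Finset.sum_congr rfl hc, evensum k _ ?_]
  · refine Finset.sum_congr rfl fun r hr => ?_
    have hrk : r ≤ k := by simpa using Nat.lt_succ_iff.mp (Finset.mem_range.mp hr)
    have : Even (2*k - 2*r) := ⟨k - r, by omega⟩
    rw [this.neg_one_pow]
    ring
  · intro j hj hodd
    have : Odd (2*k - j) := by
      rcases hodd with ⟨m, rfl⟩; exact ⟨k - m - 1, by omega⟩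
    rw [this.neg_one_pow]
    ring

lemma khintchine_sum (s : Finset ℕ) (b : ℕ → ℝ) :
    ∀ k : ℕ, ∑ A ∈ s.powerset, (∑ n ∈ s, (if n ∈ A then (1:ℝ) else -1) * b n)^(2*k)
      ≤ 2^s.card * (2*k).factorial * (∑ n ∈ s, (b n)^2)^k := by
  classical
  induction s using Finset.induction_on with
  | empty =>
    intro k
    rcases Nat.eq_zero_or_pos k with rfl | hk
    · simp
    · simp [zero_pow (by omega : 2*k ≠ 0), zero_pow (by omega : k ≠ 0)]
  | @insert a s ha ih =>
    intro k
    have key : ∀ B ∈ (insert a s).powerset,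
        (∑ n ∈ insert a s, (if n ∈ B then (1:ℝ) else -1) * b n)
        = (if a ∈ B then (1:ℝ) else -1) * b a + ∑ n ∈ s, (if n ∈ B then (1:ℝ) else -1) * b n := by
      intro B _; exact Finset.sum_insert ha
    rw [Finset.sum_powerset_insert ha]
    have e1 : ∀ A ∈ s.powerset,
        (∑ n ∈ insert a s, (if n ∈ A then (1:ℝ) else -1) * b n)^(2*k)
        = ((∑ n ∈ s, (if n ∈ A then (1:ℝ) else -1) * b n) - b a)^(2*k) := by
      intro A hA
      have haA : a ∉ A := fun h => ha (Finset.mem_powerset.mp hA h)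
      rw [Finset.sum_insert ha, if_neg haA]
      ring_nf
    have e2 : ∀ A ∈ s.powerset,
        (∑ n ∈ insert a s, (if n ∈ insert a A then (1:ℝ) else -1) * b n)^(2*k)
        = ((∑ n ∈ s, (if n ∈ A then (1:ℝ) else -1) * b n) + b a)^(2*k) := by
      intro A hA
      rw [Finset.sum_insert ha, if_pos (Finset.mem_insert_self a A)]
      have : ∀ n ∈ s, (if n ∈ insert a A then (1:ℝ) else -1) * b n
          = (if n ∈ A then (1:ℝ) else -1) * b n := by
        intro n hn
        have : n ≠ a := fun h => ha (h ▸ hn)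
        simp [Finset.mem_insert, this]
      rw [Finset.sum_congr rfl this]
      ring_nf
    rw [Finset.sum_congr rfl e1, Finset.sum_congr rfl e2, ← Finset.sum_add_distrib]
    have e3 : ∀ A ∈ s.powerset,
        ((∑ n ∈ s, (if n ∈ A then (1:ℝ) else -1) * b n) - b a)^(2*k)
        + ((∑ n ∈ s, (if n ∈ A then (1:ℝ) else -1) * b n) + b a)^(2*k)
        = ∑ r ∈ Finset.range (k+1),
            2 * ((Nat.choose (2*k) (2*r) : ℝ)
              * (∑ n ∈ s, (if n ∈ A then (1:ℝ) else -1) * b n)^(2*r) * (b a)^(2*k-2*r)) := by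
      intro A _
      rw [add_comm]
      exact pm_pow _ _ k
    rw [Finset.sum_congr rfl e3, Finset.sum_comm]
    -- now bound each r-term using ih
    have step : ∀ r ∈ Finset.range (k+1),
        ∑ A ∈ s.powerset, 2 * ((Nat.choose (2*k) (2*r) : ℝ)
            * (∑ n ∈ s, (if n ∈ A then (1:ℝ) else -1) * b n)^(2*r) * (b a)^(2*k-2*r))
        ≤ 2^(s.card+1) * ((2*k).factorial : ℝ) * ((Nat.choose k r : ℝ)
            * ((b a)^2)^(k-r) * (∑ n ∈ s, (b n)^2)^r) := by
      intro r hr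
      have hrk : r ≤ k := Nat.lt_succ_iff.mp (Finset.mem_range.mp hr)
      have hba : (b a)^(2*k-2*r) = ((b a)^2)^(k-r) := by
        rw [← pow_mul]
        congr 1
        omega
      rw [← Finset.mul_sum, ← Finset.sum_mul, ← Finset.mul_sum]
      have h1 : (0:ℝ) ≤ (Nat.choose (2*k) (2*r) : ℝ) := Nat.cast_nonneg _
      have h2 : (0:ℝ) ≤ (b a)^(2*k-2*r) := by rw [hba]; positivity
      calc 2 * ((Nat.choose (2*k) (2*r) : ℝ)
            * (∑ A ∈ s.powerset, (∑ n ∈ s, (if n ∈ A then (1:ℝ) else -1) * b n)^(2*r))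
            * (b a)^(2*k-2*r))
          ≤ 2 * ((Nat.choose (2*k) (2*r) : ℝ)
            * (2^s.card * ((2*r).factorial : ℝ) * (∑ n ∈ s, (b n)^2)^r)
            * (b a)^(2*k-2*r)) := by
            apply mul_le_mul_of_nonneg_left _ (by norm_num)
            exact mul_le_mul_of_nonneg_right (mul_le_mul_of_nonneg_left (ih r) h1) h2
        _ ≤ 2^(s.card+1) * ((2*k).factorial : ℝ) * ((Nat.choose k r : ℝ)
            * ((b a)^2)^(k-r) * (∑ n ∈ s, (b n)^2)^r) := by
            rw [hba]
            have hnat : (Nat.choose (2*k) (2*r) : ℝ) * ((2*r).factorial : ℝ)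
                ≤ ((2*k).factorial : ℝ) * (Nat.choose k r : ℝ) := by
              have c1 : Nat.choose (2*k) (2*r) * (2*r).factorial ≤ (2*k).factorial := by
                have := Nat.choose_mul_factorial_mul_factorial (by omega : 2*r ≤ 2*k)
                calc Nat.choose (2*k) (2*r) * (2*r).factorial
                    ≤ Nat.choose (2*k) (2*r) * (2*r).factorial * (2*k-2*r).factorial :=
                      Nat.le_mul_of_pos_right _ (Nat.factorial_pos _)
                  _ = (2*k).factorial := this
              have c2 : (1:ℕ) ≤ Nat.choose k r := Nat.one_le_iff_ne_zero.mpr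
                (Nat.pos_iff_ne_zero.mp (Nat.choose_pos hrk))
              calc (Nat.choose (2*k) (2*r) : ℝ) * ((2*r).factorial : ℝ)
                  = ((Nat.choose (2*k) (2*r) * (2*r).factorial : ℕ) : ℝ) := by push_cast; ring
                _ ≤ (((2*k).factorial * Nat.choose k r : ℕ) : ℝ) := by
                    exact_mod_cast le_trans c1 (Nat.le_mul_of_pos_right _ (Nat.choose_pos hrk))
                _ = ((2*k).factorial : ℝ) * (Nat.choose k r : ℝ) := by push_cast; ring
            have hQ : (0:ℝ) ≤ ((b a)^2)^(k-r) := pow_nonneg (sq_nonneg _) _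
            have hW : (0:ℝ) ≤ (∑ n ∈ s, (b n)^2)^r :=
              pow_nonneg (Finset.sum_nonneg fun n _ => sq_nonneg (b n)) r
            calc 2 * ((Nat.choose (2*k) (2*r) : ℝ)
                  * (2^s.card * ((2*r).factorial : ℝ) * (∑ n ∈ s, (b n)^2)^r) * ((b a)^2)^(k-r))
                = 2^(s.card+1) * (((Nat.choose (2*k) (2*r) : ℝ) * ((2*r).factorial : ℝ))
                    * ((∑ n ∈ s, (b n)^2)^r * ((b a)^2)^(k-r))) := by ring
              _ ≤ 2^(s.card+1) * ((((2*k).factorial : ℝ) * (Nat.choose k r : ℝ))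
                    * ((∑ n ∈ s, (b n)^2)^r * ((b a)^2)^(k-r))) := by
                  exact mul_le_mul_of_nonneg_left
                    (mul_le_mul_of_nonneg_right hnat (mul_nonneg hW hQ)) (by positivity)
              _ = 2^(s.card+1) * ((2*k).factorial : ℝ) * ((Nat.choose k r : ℝ)
                    * ((b a)^2)^(k-r) * (∑ n ∈ s, (b n)^2)^r) := by ring
    calc ∑ r ∈ Finset.range (k+1), ∑ A ∈ s.powerset,
          2 * ((Nat.choose (2*k) (2*r) : ℝ)
            * (∑ n ∈ s, (if n ∈ A then (1:ℝ) else -1) * b n)^(2*r) * (b a)^(2*k-2*r))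
        ≤ ∑ r ∈ Finset.range (k+1), 2^(s.card+1) * ((2*k).factorial : ℝ)
            * ((Nat.choose k r : ℝ) * ((b a)^2)^(k-r) * (∑ n ∈ s, (b n)^2)^r) :=
          Finset.sum_le_sum step
      _ = 2^(insert a s).card * ((2*k).factorial : ℝ) * (∑ n ∈ insert a s, (b n)^2)^k := by
          rw [Finset.card_insert_of_notMem ha, Finset.sum_insert ha, ← Finset.mul_sum,
            add_comm ((b a)^2) (∑ n ∈ s, (b n)^2), add_pow]
          congr 1
          exact Finset.sum_congr rfl fun m hm => by ring

lemma pointwise_bound (s : Finset ℕ) (b : ℕ → ℝ) (hb : ∀ n ∈ s, 0 ≤ b n) (k : ℕ)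
    (hk : 1 ≤ k) (pr : ℝ) (hpr1 : 1 ≤ pr) (hpr2 : pr ≤ 2*k)
    (Mt : ℝ) (hM : ∀ n ∈ s, b n ≤ Mt) (hM0 : 0 ≤ Mt) :
    ∑ A ∈ s.powerset, |∑ n ∈ s, (if n ∈ A then (1:ℝ) else -1) * b n| ^ pr
      ≤ 2^s.card * ((2*k).factorial : ℝ) * (Mt * (∑ n ∈ s, b n)) ^ (pr/2) := by
  have hpr0 : 0 < pr := lt_of_lt_of_le one_pos hpr1
  set N : ℝ := 2^s.card with hN
  have hN0 : 0 < N := by positivity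
  set q : ℝ := (2*k : ℝ) / pr with hq
  have h2k0 : (0:ℝ) < 2*k := by positivity
  have hq1 : 1 ≤ q := (le_div_iff₀ hpr0).mpr (by linarith)
  have hq0 : 0 < q := lt_of_lt_of_le one_pos hq1
  set X : Finset ℕ → ℝ := fun A => ∑ n ∈ s, (if n ∈ A then (1:ℝ) else -1) * b n with hX
  set σ2 : ℝ := ∑ n ∈ s, (b n)^2 with hσ2
  have hσ2nn : 0 ≤ σ2 := Finset.sum_nonneg fun n _ => sq_nonneg _
  set f : ℝ := ∑ n ∈ s, b n with hf
  have hfnn : 0 ≤ f := Finset.sum_nonneg hb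
  -- Jensen
  have hw' : ∑ _A ∈ s.powerset, N⁻¹ = 1 := by
    rw [Finset.sum_const, Finset.card_powerset, nsmul_eq_mul]
    push_cast
    rw [hN]
    field_simp
  have jensen : (∑ A ∈ s.powerset, N⁻¹ * |X A| ^ pr) ^ q
      ≤ ∑ A ∈ s.powerset, N⁻¹ * (|X A| ^ pr) ^ q :=
    Real.rpow_arith_mean_le_arith_mean_rpow s.powerset _ _
      (fun _ _ => inv_nonneg.mpr hN0.le) hw'
      (fun A _ => Real.rpow_nonneg (abs_nonneg _) _) hq1
  have hYq : ∀ A, (|X A| ^ pr) ^ q = (X A) ^ (2*k) := by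
    intro A
    rw [← Real.rpow_mul (abs_nonneg _),
      show pr * q = ((2*k : ℕ) : ℝ) by rw [hq]; push_cast; field_simp,
      Real.rpow_natCast, (show Even (2*k) from ⟨k, by ring⟩).pow_abs]
  have key : (∑ A ∈ s.powerset, N⁻¹ * |X A| ^ pr) ^ q ≤ ((2*k).factorial : ℝ) * σ2 ^ k := by
    refine le_trans jensen ?_
    calc ∑ A ∈ s.powerset, N⁻¹ * (|X A| ^ pr) ^ q
        = N⁻¹ * ∑ A ∈ s.powerset, (X A) ^ (2*k) := by
          rw [Finset.mul_sum]
          exact Finset.sum_congr rfl fun A _ => by rw [hYq A]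
      _ ≤ N⁻¹ * (N * ((2*k).factorial : ℝ) * σ2 ^ k) := by
          apply mul_le_mul_of_nonneg_left _ (inv_nonneg.mpr hN0.le)
          exact khintchine_sum s b k
      _ = ((2*k).factorial : ℝ) * σ2 ^ k := by
          field_simp
  set P : ℝ := ∑ A ∈ s.powerset, N⁻¹ * |X A| ^ pr with hP
  have hPnn : 0 ≤ P :=
    Finset.sum_nonneg fun A _ => mul_nonneg (inv_nonneg.mpr hN0.le) (Real.rpow_nonneg (abs_nonneg _) _)
  have hPle : P ≤ ((2*k).factorial : ℝ) * (Mt * f) ^ (pr/2) := by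
    have h1 : P = (P ^ q) ^ (1/q) := by
      rw [← Real.rpow_mul hPnn, mul_one_div, div_self (ne_of_gt hq0), Real.rpow_one]
    rw [h1]
    calc (P ^ q) ^ (1/q) ≤ (((2*k).factorial : ℝ) * σ2 ^ k) ^ (1/q) :=
          Real.rpow_le_rpow (Real.rpow_nonneg hPnn _) key (by positivity)
      _ = ((2*k).factorial : ℝ) ^ (1/q) * (σ2 ^ k) ^ (1/q) :=
          Real.mul_rpow (Nat.cast_nonneg _) (pow_nonneg hσ2nn _)
      _ ≤ ((2*k).factorial : ℝ) * (Mt * f) ^ (pr/2) := by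
          have e1 : ((2*k).factorial : ℝ) ^ (1/q) ≤ ((2*k).factorial : ℝ) := by
            nth_rewrite 2 [← Real.rpow_one ((2*k).factorial : ℝ)]
            apply Real.rpow_le_rpow_of_exponent_le
            · exact_mod_cast Nat.one_le_iff_ne_zero.mpr (Nat.factorial_ne_zero _)
            · rw [div_le_one hq0]; exact hq1
          have e2 : (σ2 ^ k) ^ (1/q) = σ2 ^ (pr/2) := by
            rw [← Real.rpow_natCast σ2 k, ← Real.rpow_mul hσ2nn]
            congr 1
            rw [hq]
            field_simp
          have e3 : σ2 ^ (pr/2) ≤ (Mt * f) ^ (pr/2) := by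
            apply Real.rpow_le_rpow hσ2nn _ (by positivity)
            rw [hσ2, hf, Finset.mul_sum]
            refine Finset.sum_le_sum fun n hn => ?_
            rw [sq]
            exact mul_le_mul_of_nonneg_right (hM n hn) (hb n hn)
          rw [e2]
          exact mul_le_mul e1 e3 (Real.rpow_nonneg hσ2nn _) (Nat.cast_nonneg _)
  calc ∑ A ∈ s.powerset, |X A| ^ pr = N * P := by
        rw [hP, Finset.mul_sum]
        exact Finset.sum_congr rfl fun A _ => by field_simp
    _ ≤ N * (((2*k).factorial : ℝ) * (Mt * f) ^ (pr/2)) := by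
        exact mul_le_mul_of_nonneg_left hPle hN0.le
    _ = 2^s.card * ((2*k).factorial : ℝ) * (Mt * f) ^ (pr/2) := by rw [hN]; ring

lemma sup_facts (s : Finset ℕ) (g : ℕ → ℝ) (hg : ∀ n ∈ s, 0 ≤ g n) :
    (0 ≤ ⨆ n, ⨆ _ : n ∈ s, g n) ∧ (∀ m ∈ s, g m ≤ ⨆ n, ⨆ _ : n ∈ s, g n) ∧
      ((⨆ n, ⨆ _ : n ∈ s, g n) ≤ ∑ n ∈ s, g n) := by
  classical
  set h : ℕ → ℝ := fun n => ⨆ _ : n ∈ s, g n with hh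
  have hsum : 0 ≤ ∑ n ∈ s, g n := Finset.sum_nonneg hg
  have hval : ∀ n ∈ s, h n = g n := by
    intro n hn; rw [hh]; exact ciSup_pos hn
  have hval' : ∀ n, n ∉ s → h n = 0 := by
    intro n hn
    haveI : IsEmpty (n ∈ s : Prop) := ⟨hn⟩
    exact Real.iSup_of_isEmpty _
  have hb : ∀ n, h n ≤ ∑ m ∈ s, g m := by
    intro n
    by_cases hn : n ∈ s
    · rw [hval n hn]; exact Finset.single_le_sum hg hn
    · rw [hval' n hn]; exact hsum
  have hnn : ∀ n, 0 ≤ h n := by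
    intro n
    by_cases hn : n ∈ s
    · rw [hval n hn]; exact hg n hn
    · rw [hval' n hn]
  have hbdd : BddAbove (Set.range h) := ⟨∑ m ∈ s, g m, by
    rintro y ⟨n, rfl⟩; exact hb n⟩
  refine ⟨Real.iSup_nonneg hnn, fun m hm => ?_, Real.iSup_le hb hsum⟩
  rw [← hval m hm]
  exact le_ciSup hbdd m

lemma coeFn_lp_sum {p : ℝ≥0∞} [Fact (1 ≤ p)] {μ : Measure ℝ} (s : Finset ℕ) (c : ℕ → ℝ)
    (x : ℕ → Lp ℝ p μ) :
    (⇑(∑ n ∈ s, c n • x n)) =ᵐ[μ] fun t => ∑ n ∈ s, c n * x n t := by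
  classical
  induction s using Finset.induction_on with
  | empty => simp only [Finset.sum_empty]; exact Lp.coeFn_zero ℝ p μ
  | @insert a s ha ih =>
    simp only [Finset.sum_insert ha]
    filter_upwards [Lp.coeFn_add (c a • x a) (∑ n ∈ s, c n • x n),
      Lp.coeFn_smul (c a) (x a), ih] with t h1 h2 h3
    simp only [h1, Pi.add_apply, h2, Pi.smul_apply, smul_eq_mul, h3]

lemma lp_norm_rpow {p : ℝ≥0∞} [Fact (1 ≤ p)] {μ : Measure ℝ} (hp0 : p ≠ 0) (hp : p ≠ ∞)
    (hpr0 : 0 < p.toReal) (h : Lp ℝ p μ) :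
    ‖h‖ ^ p.toReal = (∫⁻ t, (‖h t‖₊ : ℝ≥0∞) ^ p.toReal ∂μ).toReal := by
  rw [Lp.norm_def, eLpNorm_eq_lintegral_rpow_enorm_toReal hp0 hp]
  simp only [enorm_eq_nnnorm]
  rw [ENNReal.toReal_rpow,
    ← ENNReal.rpow_mul, one_div_mul_cancel hpr0.ne', ENNReal.rpow_one]

lemma lp_lintegral_ne_top {p : ℝ≥0∞} [Fact (1 ≤ p)] {μ : Measure ℝ} (hp0 : p ≠ 0) (hp : p ≠ ∞)
    (hpr0 : 0 < p.toReal) (h : Lp ℝ p μ) :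
    (∫⁻ t, (‖h t‖₊ : ℝ≥0∞) ^ p.toReal ∂μ) ≠ ∞ := by
  have h1 := Lp.eLpNorm_lt_top h
  rw [eLpNorm_eq_lintegral_rpow_enorm_toReal hp0 hp] at h1
  simp only [enorm_eq_nnnorm] at h1
  intro hJ
  rw [hJ, ENNReal.top_rpow_of_pos (by positivity)] at h1
  exact (lt_irrefl _) h1

end Stmt11Helpers

/-- let `1 ≤ p < ∞` and let `(x_n)` be a normalized, a.e. non-negative,
`K`-unconditional sequence in `L_p(0,∞)`.  Then there are constants `c, C > 0` depending
only on `K` and `p` such that for every finitely supported scalar sequence `(a_n)`,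
`c ‖sup_n |a_n| x_n‖_p ≤ ‖∑ a_n x_n‖_p ≤ C ‖sup_n |a_n| x_n‖_p`, where
`sup_n |a_n| x_n` denotes the pointwise supremum (here `S` is an element of `L_p`
represented by that pointwise supremum). -/
theorem stmt11 (p : ℝ≥0∞) [Fact (1 ≤ p)] (hp : p ≠ ∞) (K : ℝ) :
    ∃ c C : ℝ, 0 < c ∧ 0 < C ∧
      ∀ x : ℕ → Lp ℝ p (volume.restrict (Set.Ioi (0 : ℝ))),
        (∀ n, ‖x n‖ = 1) →
        (∀ n, 0 ≤ᵐ[volume.restrict (Set.Ioi (0 : ℝ))] ⇑(x n)) →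
        (∀ (s : Finset ℕ) (a ε : ℕ → ℝ), (∀ n, ε n = 1 ∨ ε n = -1) →
          ‖∑ n ∈ s, (ε n * a n) • x n‖ ≤ K * ‖∑ n ∈ s, a n • x n‖) →
        ∀ (s : Finset ℕ) (a : ℕ → ℝ) (S : Lp ℝ p (volume.restrict (Set.Ioi (0 : ℝ)))),
          (⇑S =ᵐ[volume.restrict (Set.Ioi (0 : ℝ))] fun t => ⨆ n ∈ s, |a n| * x n t) →
          c * ‖S‖ ≤ ‖∑ n ∈ s, a n • x n‖ ∧ ‖∑ n ∈ s, a n • x n‖ ≤ C * ‖S‖ := by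
  classical
  set μ := volume.restrict (Set.Ioi (0 : ℝ)) with hμ
  have hp1 : 1 ≤ p := Fact.out
  have hp0 : p ≠ 0 := by
    intro h; rw [h] at hp1; simp at hp1
  set pr : ℝ := p.toReal with hpr
  have hpr1 : (1:ℝ) ≤ pr := by
    rw [hpr, ← ENNReal.toReal_one]
    exact ENNReal.toReal_mono hp hp1
  have hpr0 : 0 < pr := lt_of_lt_of_le one_pos hpr1
  set k : ℕ := ⌈pr⌉₊ with hk
  have hk1 : 1 ≤ k := by
    rw [hk]
    exact Nat.one_le_iff_ne_zero.mpr (by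
      intro h
      have := Nat.ceil_eq_zero.mp h
      linarith)
  have hprk : pr ≤ 2*k := by
    have h1 : pr ≤ (k:ℝ) := Nat.le_ceil pr
    have h2 : (k:ℝ) ≤ 2*k := by
      have : (0:ℝ) ≤ (k:ℝ) := Nat.cast_nonneg _
      linarith
    linarith
  set Km : ℝ := max K 1 with hKm
  have hKm1 : (1:ℝ) ≤ Km := le_max_right _ _
  have hKm0 : (0:ℝ) < Km := lt_of_lt_of_le one_pos hKm1
  refine ⟨Km⁻¹, Km^(3:ℕ) * (((2*k).factorial : ℝ))^(2:ℕ), by positivity, by positivity, ?_⟩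
  intro x hx1 hxpos hU s a S hS
  set eps : Finset ℕ → ℕ → ℝ := fun B n => if n ∈ B then 1 else -1 with heps
  set sg : ℕ → ℝ := fun n => if 0 ≤ a n then 1 else -1 with hsg
  have hsg_signs : ∀ n, sg n = 1 ∨ sg n = -1 := by
    intro n; by_cases h : 0 ≤ a n <;> simp [hsg, h]
  have hsg_mul : ∀ n, sg n * a n = |a n| := by
    intro n
    by_cases h : 0 ≤ a n
    · simp [hsg, h, abs_of_nonneg h]
    · simp [hsg, h, abs_of_neg (lt_of_not_ge h)]
  set T : Lp ℝ p μ := ∑ n ∈ s, a n • x n with hT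
  set F : Lp ℝ p μ := ∑ n ∈ s, |a n| • x n with hF
  set XB : Finset ℕ → Lp ℝ p μ := fun B => ∑ n ∈ s, (eps B n * |a n|) • x n with hXB
  -- unconditionality consequences
  have hF_le : ‖F‖ ≤ Km * ‖T‖ := by
    have h1 := hU s a sg hsg_signs
    have h2 : ∑ n ∈ s, (sg n * a n) • x n = F := by
      rw [hF]
      exact Finset.sum_congr rfl fun n _ => by rw [hsg_mul n]
    rw [h2] at h1
    calc ‖F‖ ≤ K * ‖T‖ := h1
      _ ≤ Km * ‖T‖ := mul_le_mul_of_nonneg_right (le_max_left _ _) (norm_nonneg _)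
  have hT_le : ∀ B, ‖T‖ ≤ Km * ‖XB B‖ := by
    intro B
    have hsigns : ∀ n, eps B n * sg n = 1 ∨ eps B n * sg n = -1 := by
      intro n
      rcases hsg_signs n with h | h <;> by_cases hB : n ∈ B <;> simp [heps, hB, h]
    have h1 := hU s (fun n => eps B n * |a n|) (fun n => eps B n * sg n) hsigns
    have h2 : ∑ n ∈ s, ((eps B n * sg n) * (eps B n * |a n|)) • x n = T := by
      rw [hT]
      refine Finset.sum_congr rfl fun n _ => ?_
      have he2 : eps B n * eps B n = 1 := by
        by_cases hB : n ∈ B <;> simp [heps, hB]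
      have : (eps B n * sg n) * (eps B n * |a n|) = (eps B n * eps B n) * (sg n * |a n|) := by
        ring
      rw [this, he2, one_mul]
      have h3 : sg n * |a n| = a n := by
        by_cases hn : 0 ≤ a n
        · simp [hsg, hn, abs_of_nonneg hn]
        · simp [hsg, hn, abs_of_neg (lt_of_not_ge hn)]
      rw [h3]
    rw [h2] at h1
    calc ‖T‖ ≤ K * ‖XB B‖ := h1
      _ ≤ Km * ‖XB B‖ := mul_le_mul_of_nonneg_right (le_max_left _ _) (norm_nonneg _)
  -- a.e. facts
  have haeF := coeFn_lp_sum s (fun n => |a n|) x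
  have haeXB : ∀ᵐ t ∂μ, ∀ B : Finset ℕ, B ∈ s.powerset →
      XB B t = ∑ n ∈ s, (eps B n * |a n|) * x n t := by
    rw [ae_all_iff]
    intro B
    by_cases hB : B ∈ s.powerset
    · filter_upwards [coeFn_lp_sum s (fun n => eps B n * |a n|) x] with t h _
      exact h
    · filter_upwards with t h
      exact absurd h hB
  have haepos : ∀ᵐ t ∂μ, ∀ n, 0 ≤ x n t := ae_all_iff.mpr hxpos
  -- J machinery
  set J : Lp ℝ p μ → ℝ≥0∞ := fun h => ∫⁻ t, (‖h t‖₊ : ℝ≥0∞) ^ pr ∂μ with hJ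
  have hnormJ : ∀ h : Lp ℝ p μ, ‖h‖ ^ pr = (J h).toReal := fun h => lp_norm_rpow hp0 hp hpr0 h
  have hJfin : ∀ h : Lp ℝ p μ, J h ≠ ∞ := fun h => lp_lintegral_ne_top hp0 hp hpr0 h
  have hmeas : ∀ h : Lp ℝ p μ, AEMeasurable (fun t => (‖h t‖₊ : ℝ≥0∞) ^ pr) μ :=
    fun h => (Lp.aestronglyMeasurable h).enorm.pow_const pr
  have rpow_cancel : ∀ u v : ℝ, 0 ≤ u → 0 ≤ v → u ^ pr ≤ v ^ pr → u ≤ v := by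
    intro u v hu hv h
    have h2 := Real.rpow_le_rpow (Real.rpow_nonneg hu _) h (by positivity : (0:ℝ) ≤ 1/pr)
    rwa [← Real.rpow_mul hu, ← Real.rpow_mul hv, mul_one_div, div_self hpr0.ne',
      Real.rpow_one, Real.rpow_one] at h2
  -- lower bound
  have hJSF : J S ≤ J F := by
    apply lintegral_mono_ae
    filter_upwards [haepos, haeF, hS] with t h1 h2 h3
    obtain ⟨hM0, _, hMle⟩ := sup_facts s (fun n => |a n| * x n t)
      (fun n _ => mul_nonneg (abs_nonneg _) (h1 n))
    have e1 : |S t| ≤ |F t| := by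
      rw [h3, h2, abs_of_nonneg hM0,
        abs_of_nonneg (Finset.sum_nonneg fun n _ => mul_nonneg (abs_nonneg _) (h1 n))]
      exact hMle
    have e2 : (‖S t‖₊ : ℝ≥0∞) ≤ (‖F t‖₊ : ℝ≥0∞) := by
      rw [← enorm_eq_nnnorm, ← enorm_eq_nnnorm, Real.enorm_eq_ofReal_abs, Real.enorm_eq_ofReal_abs]
      exact ENNReal.ofReal_le_ofReal e1
    exact ENNReal.rpow_le_rpow e2 hpr0.le
  have lower : Km⁻¹ * ‖S‖ ≤ ‖T‖ := by
    have h1 : ‖S‖ ^ pr ≤ ‖F‖ ^ pr := by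
      rw [hnormJ, hnormJ]
      exact ENNReal.toReal_mono (hJfin F) hJSF
    have h2 : ‖S‖ ≤ ‖F‖ := rpow_cancel _ _ (norm_nonneg _) (norm_nonneg _) h1
    rw [inv_mul_le_iff₀ hKm0]
    calc ‖S‖ ≤ ‖F‖ := h2
      _ ≤ Km * ‖T‖ := hF_le
  refine ⟨lower, ?_⟩
  -- upper bound
  set N : ℝ≥0∞ := 2 ^ s.card with hN
  set Ck : ℝ≥0∞ := (((2*k).factorial : ℕ) : ℝ≥0∞) with hCk
  have hNfin : N ≠ ∞ := ENNReal.pow_ne_top ENNReal.ofNat_ne_top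
  have hCkfin : Ck ≠ ∞ := ENNReal.natCast_ne_top _
  have key1 : ∑ B ∈ s.powerset, J (XB B)
      ≤ N * Ck * ((J S) ^ ((1:ℝ)/2) * (J F) ^ ((1:ℝ)/2)) := by
    rw [hJ]
    rw [← lintegral_finset_sum' _ (fun B _ => hmeas (XB B))]
    have hae_bound : ∀ᵐ t ∂μ, ∑ B ∈ s.powerset, (‖XB B t‖₊ : ℝ≥0∞) ^ pr
        ≤ N * Ck * ((‖S t‖₊ : ℝ≥0∞) ^ (pr/2) * (‖F t‖₊ : ℝ≥0∞) ^ (pr/2)) := by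
      filter_upwards [haepos, haeF, hS, haeXB] with t h1 h2 h3 h4
      obtain ⟨hM0, hMub, hMle⟩ := sup_facts s (fun n => |a n| * x n t)
        (fun n _ => mul_nonneg (abs_nonneg _) (h1 n))
      have hft0 : 0 ≤ F t := by
        rw [h2]; exact Finset.sum_nonneg fun n _ => mul_nonneg (abs_nonneg _) (h1 n)
      have main := pointwise_bound s (fun n => |a n| * x n t)
        (fun n _ => mul_nonneg (abs_nonneg _) (h1 n)) k hk1 pr hpr1 hprk
        (⨆ n, ⨆ _ : n ∈ s, |a n| * x n t) hMub hM0
      have hXBt : ∀ B ∈ s.powerset,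
          XB B t = ∑ n ∈ s, (if n ∈ B then (1:ℝ) else -1) * (|a n| * x n t) := by
        intro B hB
        rw [h4 B hB]
        exact Finset.sum_congr rfl fun n _ => by rw [heps]; ring
      calc ∑ B ∈ s.powerset, (‖XB B t‖₊ : ℝ≥0∞) ^ pr
          = ENNReal.ofReal (∑ B ∈ s.powerset, |XB B t| ^ pr) := by
            rw [ENNReal.ofReal_sum_of_nonneg (fun B _ => Real.rpow_nonneg (abs_nonneg _) _)]
            exact Finset.sum_congr rfl fun B _ => by
              rw [← enorm_eq_nnnorm, Real.enorm_eq_ofReal_abs,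
                ENNReal.ofReal_rpow_of_nonneg (abs_nonneg _) hpr0.le]
        _ ≤ ENNReal.ofReal (2 ^ s.card * ((2*k).factorial : ℝ)
              * ((⨆ n, ⨆ _ : n ∈ s, |a n| * x n t) * (F t)) ^ (pr/2)) := by
            apply ENNReal.ofReal_le_ofReal
            rw [h2]
            refine le_trans (le_of_eq ?_) main
            exact Finset.sum_congr rfl fun B hB => by rw [hXBt B hB]
        _ = N * Ck * ((‖S t‖₊ : ℝ≥0∞) ^ (pr/2) * (‖F t‖₊ : ℝ≥0∞) ^ (pr/2)) := by
            have eS : (‖S t‖₊ : ℝ≥0∞) ^ (pr/2)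
                = ENNReal.ofReal ((⨆ n, ⨆ _ : n ∈ s, |a n| * x n t) ^ (pr/2)) := by
              rw [← enorm_eq_nnnorm, Real.enorm_eq_ofReal_abs,
                show |S t| = (⨆ n, ⨆ _ : n ∈ s, |a n| * x n t) by rw [h3]; exact abs_of_nonneg hM0,
                ENNReal.ofReal_rpow_of_nonneg hM0 (by positivity)]
            have eF : (‖F t‖₊ : ℝ≥0∞) ^ (pr/2) = ENNReal.ofReal ((F t) ^ (pr/2)) := by
              rw [← enorm_eq_nnnorm, Real.enorm_eq_ofReal_abs, abs_of_nonneg hft0,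
                ENNReal.ofReal_rpow_of_nonneg hft0 (by positivity)]
            rw [eS, eF, Real.mul_rpow hM0 hft0,
              ENNReal.ofReal_mul (by positivity : (0:ℝ) ≤ 2 ^ s.card * ((2*k).factorial : ℝ)),
              ENNReal.ofReal_mul (by positivity : (0:ℝ) ≤ (2:ℝ) ^ s.card),
              ENNReal.ofReal_mul (Real.rpow_nonneg hM0 _)]
            congr 2
            · rw [hN, ENNReal.ofReal_pow (by norm_num : (0:ℝ) ≤ 2)]
              norm_num
            · rw [hCk, ENNReal.ofReal_natCast]
    calc ∫⁻ t, ∑ B ∈ s.powerset, (‖XB B t‖₊ : ℝ≥0∞) ^ pr ∂μ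
        ≤ ∫⁻ t, N * Ck * ((‖S t‖₊ : ℝ≥0∞) ^ (pr/2) * (‖F t‖₊ : ℝ≥0∞) ^ (pr/2)) ∂μ :=
          lintegral_mono_ae hae_bound
      _ = N * Ck * ∫⁻ t, (‖S t‖₊ : ℝ≥0∞) ^ (pr/2) * (‖F t‖₊ : ℝ≥0∞) ^ (pr/2) ∂μ :=
          lintegral_const_mul' _ _ (ENNReal.mul_ne_top hNfin hCkfin)
      _ ≤ N * Ck * ((J S) ^ ((1:ℝ)/2) * (J F) ^ ((1:ℝ)/2)) := by
          apply mul_le_mul_right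
          have hconj : (2:ℝ).HolderConjugate 2 := Real.holderConjugate_iff.mpr ⟨one_lt_two, by norm_num⟩
          have hh := ENNReal.lintegral_mul_le_Lp_mul_Lq μ hconj
            ((Lp.aestronglyMeasurable S).enorm.pow_const (pr/2))
            ((Lp.aestronglyMeasurable F).enorm.pow_const (pr/2))
          simp only [Pi.mul_apply, ← ENNReal.rpow_mul,
            div_mul_cancel₀ pr (two_ne_zero)] at hh
          rw [hJ]
          exact hh
  -- assemble the upper bound
  by_cases hT0 : ‖T‖ = 0
  · rw [hT0]; positivity
  have hT0' : 0 < ‖T‖ := lt_of_le_of_ne (norm_nonneg _) (Ne.symm hT0)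
  have hfac1 : (1:ℝ) ≤ ((2*k).factorial : ℝ) := by
    exact_mod_cast Nat.one_le_iff_ne_zero.mpr (Nat.factorial_ne_zero _)
  have stepA : (2:ℝ) ^ s.card * ‖T‖ ^ pr ≤ Km ^ pr * (∑ B ∈ s.powerset, J (XB B)).toReal := by
    rw [ENNReal.toReal_sum (fun B _ => hJfin _), Finset.mul_sum]
    have hB : ∀ B ∈ s.powerset, ‖T‖ ^ pr ≤ Km ^ pr * (J (XB B)).toReal := by
      intro B _
      rw [← hnormJ]
      calc ‖T‖ ^ pr ≤ (Km * ‖XB B‖) ^ pr :=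
            Real.rpow_le_rpow (norm_nonneg _) (hT_le B) hpr0.le
        _ = Km ^ pr * ‖XB B‖ ^ pr := Real.mul_rpow hKm0.le (norm_nonneg _)
    calc (2:ℝ) ^ s.card * ‖T‖ ^ pr = ∑ _B ∈ s.powerset, ‖T‖ ^ pr := by
          rw [Finset.sum_const, Finset.card_powerset, nsmul_eq_mul]
          push_cast
          ring
      _ ≤ ∑ B ∈ s.powerset, Km ^ pr * (J (XB B)).toReal := Finset.sum_le_sum hB
  have stepB : (∑ B ∈ s.powerset, J (XB B)).toReal
      ≤ (2:ℝ) ^ s.card * ((2*k).factorial : ℝ) * (‖S‖ ^ (pr/2) * ‖F‖ ^ (pr/2)) := by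
    have hfin : N * Ck * ((J S) ^ ((1:ℝ)/2) * (J F) ^ ((1:ℝ)/2)) ≠ ∞ := by
      apply ENNReal.mul_ne_top (ENNReal.mul_ne_top hNfin hCkfin)
      exact ENNReal.mul_ne_top (ENNReal.rpow_ne_top_of_nonneg (by norm_num) (hJfin S))
        (ENNReal.rpow_ne_top_of_nonneg (by norm_num) (hJfin F))
    have h1 := ENNReal.toReal_mono hfin key1
    rw [ENNReal.toReal_mul, ENNReal.toReal_mul, ENNReal.toReal_mul,
      ← ENNReal.toReal_rpow, ← ENNReal.toReal_rpow] at h1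
    have eN : N.toReal = (2:ℝ) ^ s.card := by rw [hN]; simp
    have eCk : Ck.toReal = ((2*k).factorial : ℝ) := by rw [hCk]; simp
    have eS : (J S).toReal ^ ((1:ℝ)/2) = ‖S‖ ^ (pr/2) := by
      rw [← hnormJ, ← Real.rpow_mul (norm_nonneg _), mul_one_div]
    have eF : (J F).toReal ^ ((1:ℝ)/2) = ‖F‖ ^ (pr/2) := by
      rw [← hnormJ, ← Real.rpow_mul (norm_nonneg _), mul_one_div]
    rwa [eN, eCk, eS, eF] at h1
  have comb : ‖T‖ ^ pr ≤ Km ^ pr * ((2*k).factorial : ℝ) * (‖S‖ ^ (pr/2) * ‖F‖ ^ (pr/2)) := by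
    have h2 : (2:ℝ) ^ s.card * ‖T‖ ^ pr
        ≤ (2:ℝ) ^ s.card * (Km ^ pr * ((2*k).factorial : ℝ) * (‖S‖ ^ (pr/2) * ‖F‖ ^ (pr/2))) := by
      calc (2:ℝ) ^ s.card * ‖T‖ ^ pr ≤ Km ^ pr * (∑ B ∈ s.powerset, J (XB B)).toReal := stepA
        _ ≤ Km ^ pr * ((2:ℝ) ^ s.card * ((2*k).factorial : ℝ) * (‖S‖^(pr/2) * ‖F‖^(pr/2))) :=
            mul_le_mul_of_nonneg_left stepB (Real.rpow_nonneg hKm0.le _)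
        _ = (2:ℝ) ^ s.card * (Km ^ pr * ((2*k).factorial : ℝ) * (‖S‖^(pr/2)*‖F‖^(pr/2))) := by
            ring
    exact le_of_mul_le_mul_left h2 (by positivity)
  have hFb : ‖F‖ ^ (pr/2) ≤ Km^(pr/2) * ‖T‖^(pr/2) := by
    rw [← Real.mul_rpow hKm0.le (norm_nonneg _)]
    exact Real.rpow_le_rpow (norm_nonneg _) hF_le (by positivity)
  have comb2 : ‖T‖^(pr/2) * ‖T‖^(pr/2)
      ≤ (Km ^ pr * ((2*k).factorial : ℝ) * Km^(pr/2) * ‖S‖^(pr/2)) * ‖T‖^(pr/2) := by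
    calc ‖T‖^(pr/2) * ‖T‖^(pr/2) = ‖T‖ ^ pr := by
          rw [← Real.rpow_add hT0']
          norm_num
      _ ≤ Km ^ pr * ((2*k).factorial : ℝ) * (‖S‖ ^ (pr/2) * ‖F‖ ^ (pr/2)) := comb
      _ ≤ Km ^ pr * ((2*k).factorial : ℝ) * (‖S‖ ^ (pr/2) * (Km^(pr/2) * ‖T‖^(pr/2))) := by
          apply mul_le_mul_of_nonneg_left _ (by positivity)
          exact mul_le_mul_of_nonneg_left hFb (Real.rpow_nonneg (norm_nonneg _) _)
      _ = (Km ^ pr * ((2*k).factorial : ℝ) * Km^(pr/2) * ‖S‖^(pr/2)) * ‖T‖^(pr/2) := by ring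
  have comb3 : ‖T‖^(pr/2) ≤ (Km ^ (pr + pr/2) * ((2*k).factorial : ℝ)) * ‖S‖^(pr/2) := by
    have h5 := le_of_mul_le_mul_right comb2 (Real.rpow_pos_of_pos hT0' (pr/2))
    calc ‖T‖^(pr/2) ≤ Km ^ pr * ((2*k).factorial : ℝ) * Km^(pr/2) * ‖S‖^(pr/2) := h5
      _ = (Km ^ (pr + pr/2) * ((2*k).factorial : ℝ)) * ‖S‖^(pr/2) := by
          rw [Real.rpow_add hKm0]
          ring
  have hhalf : pr/2 * (2/pr) = 1 := by
    field_simp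
  have h6 : ‖T‖ ≤ ((Km ^ (pr + pr/2) * ((2*k).factorial : ℝ)) * ‖S‖^(pr/2)) ^ (2/pr) := by
    have h7 := Real.rpow_le_rpow (Real.rpow_nonneg (norm_nonneg _) _) comb3
      (by positivity : (0:ℝ) ≤ 2/pr)
    rwa [← Real.rpow_mul (norm_nonneg T), hhalf, Real.rpow_one] at h7
  calc ‖T‖ ≤ ((Km ^ (pr + pr/2) * ((2*k).factorial : ℝ)) * ‖S‖^(pr/2)) ^ (2/pr) := h6
    _ = (Km ^ (pr+pr/2))^(2/pr) * ((2*k).factorial : ℝ)^(2/pr) * ‖S‖ := by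
        rw [Real.mul_rpow (mul_nonneg (Real.rpow_nonneg hKm0.le _) (by positivity))
            (Real.rpow_nonneg (norm_nonneg _) _),
          Real.mul_rpow (Real.rpow_nonneg hKm0.le _) (by positivity),
          ← Real.rpow_mul (norm_nonneg S), hhalf, Real.rpow_one]
    _ ≤ Km^(3:ℕ) * (((2*k).factorial : ℝ))^(2:ℕ) * ‖S‖ := by
        apply mul_le_mul_of_nonneg_right _ (norm_nonneg _)
        have e1 : (Km ^ (pr+pr/2))^(2/pr) = Km ^ (3:ℝ) := by
          rw [← Real.rpow_mul hKm0.le]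
          congr 1
          field_simp
          ring
        have e2 : ((2*k).factorial : ℝ)^(2/pr) ≤ ((2*k).factorial : ℝ)^(2:ℝ) := by
          apply Real.rpow_le_rpow_of_exponent_le hfac1
          rw [div_le_iff₀ hpr0]
          nlinarith
        rw [e1]
        calc Km^(3:ℝ) * ((2*k).factorial : ℝ)^(2/pr)
            ≤ Km^(3:ℝ) * ((2*k).factorial : ℝ)^(2:ℝ) :=
              mul_le_mul_of_nonneg_left e2 (Real.rpow_nonneg hKm0.le _)
          _ = Km^(3:ℕ) * (((2*k).factorial : ℝ))^(2:ℕ) := by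
              rw [← Real.rpow_natCast Km 3, ← Real.rpow_natCast (((2*k).factorial : ℝ)) 2]
              norm_num
end

section
/- Let 1 < p < ∞ and let (f_n, g_n) be an unconditionally quasibasic sequence in L_p(0,1) with each f_n ≥ 0 a.e. If (y_n) is a sequence in the closed linear span [f_n] of {f_n} with ‖y_n‖_p = 1 for all n and y_n → 0 weakly, then ‖y_n‖_{L1} → 0 as n → ∞. -/
open MeasureTheory Filter Topology ENNReal

set_option linter.unusedSectionVars false
set_option linter.unusedVariables false
set_option linter.unnecessarySimpa false


theorem hasSum_bdd_partial {E : Type*} [NormedAddCommGroup E] (t : ℕ → E) (a : E)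
    (h : HasSum t a) : ∃ C, ∀ F : Finset ℕ, ‖∑ n ∈ F, t n‖ ≤ C := by
  rw [HasSum, SummationFilter.unconditional_filter, Metric.tendsto_atTop] at h
  obtain ⟨F₀, hF₀⟩ := h 1 one_pos
  refine ⟨‖a‖ + 1 + ∑ n ∈ F₀, ‖t n‖, fun F => ?_⟩
  have h1 : ∑ n ∈ F, t n = ∑ n ∈ F ∪ F₀, t n - ∑ n ∈ F₀ \ F, t n := by
    rw [← Finset.union_sdiff_self_eq_union, Finset.sum_union Finset.disjoint_sdiff]
    abel
  have h2 : dist (∑ n ∈ F ∪ F₀, t n) a < 1 := hF₀ _ Finset.subset_union_right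
  have h3 : ‖∑ n ∈ F ∪ F₀, t n‖ ≤ ‖a‖ + 1 := by
    have := norm_sub_norm_le (∑ n ∈ F ∪ F₀, t n) a
    rw [← dist_eq_norm] at this
    linarith
  calc ‖∑ n ∈ F, t n‖ = ‖∑ n ∈ F ∪ F₀, t n - ∑ n ∈ F₀ \ F, t n‖ := by rw [← h1]
    _ ≤ ‖∑ n ∈ F ∪ F₀, t n‖ + ‖∑ n ∈ F₀ \ F, t n‖ := norm_sub_le _ _
    _ ≤ (‖a‖ + 1) + ∑ n ∈ F₀ \ F, ‖t n‖ := add_le_add h3 (norm_sum_le _ _)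
    _ ≤ (‖a‖ + 1) + ∑ n ∈ F₀, ‖t n‖ :=
        add_le_add le_rfl (Finset.sum_le_sum_of_subset_of_nonneg Finset.sdiff_subset
          (fun i _ _ => norm_nonneg _))


theorem schur_aux (a : ℕ → ℕ → ℝ)
    (hsum : ∀ k, Summable fun n => |a k n|)
    (hw : ∀ b : ℕ → ℝ, (∀ n, |b n| ≤ 1) →
      Tendsto (fun k => ∑' n, b n * a k n) atTop (𝓝 0)) :
    Tendsto (fun k => ∑' n, |a k n|) atTop (𝓝 0) := by
  classical
  set s : ℕ → ℝ := fun k => ∑' n, |a k n| with hs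
  by_contra hcon
  rw [Metric.tendsto_atTop] at hcon
  push_neg at hcon
  obtain ⟨δ, hδ, hfreq⟩ := hcon
  have hsnn : ∀ k, 0 ≤ s k := fun k => tsum_nonneg fun n => abs_nonneg _
  have hfreq' : ∀ M, ∃ k ≥ M, δ ≤ s k := by
    intro M
    obtain ⟨k, hk1, hk2⟩ := hfreq M
    exact ⟨k, hk1, by rwa [Real.dist_eq, sub_zero, abs_of_nonneg (hsnn k)] at hk2⟩
  -- coordinates tend to zero
  have hcoord : ∀ n, Tendsto (fun k => a k n) atTop (𝓝 0) := by
    intro n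
    have h := hw (fun m => if m = n then 1 else 0) (by intro m; by_cases h : m = n <;> simp [h])
    have heq : ∀ k, ∑' m, (if m = n then (1:ℝ) else 0) * a k m = a k n := by
      intro k
      rw [tsum_eq_single n (by intro m hm; simp [hm])]
      simp
    simpa only [heq] using h
  have hfin : ∀ F : Finset ℕ, Tendsto (fun k => ∑ n ∈ F, |a k n|) atTop (𝓝 0) := by
    intro F
    have h : Tendsto (fun k => ∑ n ∈ F, |a k n|) atTop (𝓝 (∑ n ∈ F, (0:ℝ))) :=
      tendsto_finset_sum F fun n _ => by simpa using (hcoord n).abs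
    simpa using h
  -- gliding hump construction
  have key : ∀ q : ℕ × ℕ, ∃ q' : ℕ × ℕ, q.1 < q'.1 ∧ q.2 < q'.2 ∧ δ ≤ s q'.1 ∧
      (∑ n ∈ Finset.range (q.2+1), |a q'.1 n|) < δ/8 ∧
      s q'.1 - δ/8 < ∑ n ∈ Finset.range (q'.2+1), |a q'.1 n| := by
    rintro ⟨k₀, N₀⟩
    have h1 := hfin (Finset.range (N₀+1))
    rw [Metric.tendsto_atTop] at h1
    obtain ⟨M, hM⟩ := h1 (δ/8) (by linarith)
    obtain ⟨K, hK1, hK2⟩ := hfreq' (max M (k₀+1))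
    have hsmall : ∑ n ∈ Finset.range (N₀+1), |a K n| < δ/8 := by
      have h := hM K (le_trans (le_max_left _ _) hK1)
      rwa [Real.dist_eq, sub_zero,
        abs_of_nonneg (Finset.sum_nonneg fun n _ => abs_nonneg _)] at h
    have h2 : Tendsto (fun m => ∑ n ∈ Finset.range m, |a K n|) atTop (𝓝 (s K)) :=
      (hsum K).hasSum.tendsto_sum_nat
    have h3 : ∀ᶠ m in atTop, s K - δ/8 < ∑ n ∈ Finset.range m, |a K n| :=
      h2.eventually (eventually_gt_nhds (by linarith : s K - δ/8 < s K))
    obtain ⟨m₀, hm₀⟩ := h3.exists_forall_of_atTop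
    refine ⟨(K, max m₀ (N₀+1)), ?_, ?_, hK2, hsmall, ?_⟩
    · exact lt_of_lt_of_le (Nat.lt_succ_self k₀) (le_trans (le_max_right _ _) hK1)
    · exact lt_of_lt_of_le (Nat.lt_succ_self N₀) (le_max_right _ _)
    · exact hm₀ _ (le_trans (le_max_left _ _) (Nat.le_succ _))
  choose step hstep using key
  set P : ℕ → ℕ × ℕ := fun i => step^[i] (0, 0) with hP
  have hPsucc : ∀ i, P (i+1) = step (P i) := fun i => Function.iterate_succ_apply' step i _
  set k : ℕ → ℕ := fun i => (P i).1 with hkdef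
  set N : ℕ → ℕ := fun i => (P i).2 with hNdef
  have hk : StrictMono k := strictMono_nat_of_lt_succ fun i => by
    rw [hkdef]; simp only; rw [hPsucc]; exact (hstep (P i)).1
  have hN : StrictMono N := strictMono_nat_of_lt_succ fun i => by
    rw [hNdef]; simp only; rw [hPsucc]; exact (hstep (P i)).2.1
  have hA : ∀ i, δ ≤ s (k (i+1)) := fun i => by
    rw [hkdef]; simp only; rw [hPsucc]; exact (hstep (P i)).2.2.1
  have hB : ∀ i, ∑ n ∈ Finset.range (N i + 1), |a (k (i+1)) n| < δ/8 := fun i => by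
    rw [hkdef, hNdef]; simp only; rw [hPsucc]; exact (hstep (P i)).2.2.2.1
  have hC : ∀ i, s (k (i+1)) - δ/8 < ∑ n ∈ Finset.range (N (i+1) + 1), |a (k (i+1)) n| :=
    fun i => by
    rw [hkdef, hNdef]; simp only; rw [hPsucc]; exact (hstep (P i)).2.2.2.2
  -- define the sign pattern
  have hNex : ∀ n, ∃ i, n ≤ N i := fun n => ⟨n, hN.le_apply⟩
  set b : ℕ → ℝ := fun n =>
    if N 0 < n then (if 0 ≤ a (k (Nat.find (hNex n))) n then 1 else -1) else 0 with hbdef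
  have hb : ∀ n, |b n| ≤ 1 := by
    intro n; rw [hbdef]; simp only
    split
    · split <;> simp
    · simp
  have hfind : ∀ i n, N i < n → n ≤ N (i+1) → Nat.find (hNex n) = i + 1 := by
    intro i n h1 h2
    rw [Nat.find_eq_iff]
    refine ⟨h2, fun j hj hle => ?_⟩
    have : N j ≤ N i := hN.monotone (Nat.lt_succ_iff.1 hj)
    omega
  -- lower bound along the subsequence
  have hlow : ∀ i, δ/2 ≤ ∑' n, b n * a (k (i+1)) n := by
    intro i
    set K := k (i+1) with hK
    set F : Finset ℕ := Finset.range (N (i+1) + 1) \ Finset.range (N i + 1) with hF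
    have hsub : Finset.range (N i + 1) ⊆ Finset.range (N (i+1) + 1) :=
      Finset.range_subset_range.2 (by have := hN (by omega : i < i + 1); omega)
    have hFsum : ∑ n ∈ F, |a K n| =
        ∑ n ∈ Finset.range (N (i+1) + 1), |a K n| - ∑ n ∈ Finset.range (N i + 1), |a K n| :=
      Finset.sum_sdiff_eq_sub hsub
    have hblock : s K - δ/4 ≤ ∑ n ∈ F, |a K n| := by
      rw [hFsum]; linarith [hB i, hC i]
    have hmemF : ∀ n ∈ F, N i < n ∧ n ≤ N (i+1) := by
      intro n hn
      rw [hF, Finset.mem_sdiff, Finset.mem_range, Finset.mem_range] at hn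
      omega
    have hbF : ∀ n ∈ F, b n * a K n = |a K n| := by
      intro n hn
      obtain ⟨h1, h2⟩ := hmemF n hn
      have hN0 : N 0 < n := lt_of_le_of_lt (hN.monotone (Nat.zero_le i)) h1
      rw [hbdef]; simp only [hN0, if_pos, hfind i n h1 h2, ← hK]
      split
      · rw [one_mul, abs_of_nonneg ‹_›]
      · rw [neg_one_mul, abs_of_neg (lt_of_not_ge ‹_›)]
    have habs : ∀ n, |b n * a K n| ≤ |a K n| := by
      intro n
      rw [abs_mul]
      calc |b n| * |a K n| ≤ 1 * |a K n| := by
            exact mul_le_mul_of_nonneg_right (hb n) (abs_nonneg _)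
        _ = |a K n| := one_mul _
    have hsabs : Summable fun n => |b n * a K n| :=
      Summable.of_nonneg_of_le (fun n => abs_nonneg _) habs (hsum K)
    have hsummable : Summable fun n => b n * a K n := hsabs.of_abs
    have hsplit : (∑ n ∈ F, b n * a K n) + ∑' (n : ↥(↑F : Set ℕ)ᶜ), b n * a K n
        = ∑' n, b n * a K n := by
      rw [← Finset.tsum_subtype F (fun n => b n * a K n)]
      exact Summable.tsum_add_tsum_compl (hsummable.subtype _) (hsummable.subtype _)
    have hsplitabs : (∑ n ∈ F, |a K n|) + ∑' (n : ↥(↑F : Set ℕ)ᶜ), |a K n| = s K := by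
      rw [← Finset.tsum_subtype F (fun n => |a K n|)]
      exact Summable.tsum_add_tsum_compl ((hsum K).subtype _) ((hsum K).subtype _)
    have htail : |∑' (n : ↥(↑F : Set ℕ)ᶜ), b n * a K n| ≤ δ/4 := by
      have h1 : |∑' (n : ↥(↑F : Set ℕ)ᶜ), b n * a K n| ≤
          ∑' (n : ↥(↑F : Set ℕ)ᶜ), |b n * a K n| := by
        have hs' : Summable fun n : ↥(↑F : Set ℕ)ᶜ => ‖b ↑n * a K ↑n‖ := by
          have := hsabs.subtype ((↑F : Set ℕ)ᶜ)
          simp only [Function.comp_def, Real.norm_eq_abs] at this ⊢; exact this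
        simpa only [Real.norm_eq_abs] using
          norm_tsum_le_tsum_norm (f := fun n : ↥(↑F : Set ℕ)ᶜ => b n * a K n) hs'
      have h2 : ∑' (n : ↥(↑F : Set ℕ)ᶜ), |b n * a K n| ≤
          ∑' (n : ↥(↑F : Set ℕ)ᶜ), |a K n| :=
        Summable.tsum_le_tsum (fun n => habs n) (hsabs.subtype _) ((hsum K).subtype _)
      have h3 : ∑' (n : ↥(↑F : Set ℕ)ᶜ), |a K n| ≤ δ/4 := by
        have : ∑ n ∈ F, |a K n| + ∑' (n : ↥(↑F : Set ℕ)ᶜ), |a K n| = s K := hsplitabs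
        linarith [hblock]
      linarith
    have hFsum2 : ∑ n ∈ F, b n * a K n = ∑ n ∈ F, |a K n| := Finset.sum_congr rfl hbF
    have := hsplit
    rw [hFsum2] at this
    have hge : s K - δ/2 ≤ ∑' n, b n * a K n := by
      rw [← this]
      have := abs_le.1 htail
      linarith
    linarith [hA i]
  -- contradiction with weak nullity
  have htendb := hw b hb
  have hksub : Tendsto (fun i => k (i+1)) atTop atTop :=
    hk.tendsto_atTop.comp (tendsto_add_atTop_nat 1)
  have htend2 : Tendsto (fun i => ∑' n, b n * a (k (i+1)) n) atTop (𝓝 0) :=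
    htendb.comp hksub
  have : δ/2 ≤ (0:ℝ) := le_of_tendsto_of_tendsto' tendsto_const_nhds htend2 hlow
  linarith


section helpers
variable {α : Type*} [MeasurableSpace α] {μ : Measure α} {p : ℝ≥0∞} [Fact (1 ≤ p)]

theorem lp_integrable [IsFiniteMeasure μ] (u : Lp ℝ p μ) : Integrable (⇑u) μ :=
  memLp_one_iff_integrable.1 ((Lp.memLp u).mono_exponent Fact.out)

theorem lp_int_abs_le [IsProbabilityMeasure μ] (u : Lp ℝ p μ) : ∫ t, |u t| ∂μ ≤ ‖u‖ := by
  have h1 : eLpNorm (⇑u) 1 μ ≤ eLpNorm (⇑u) p μ :=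
    eLpNorm_le_eLpNorm_of_exponent_le Fact.out (Lp.aestronglyMeasurable u)
  have h2 : ∫ t, |u t| ∂μ = (eLpNorm (⇑u) 1 μ).toReal := by
    simp_rw [← Real.norm_eq_abs]
    rw [integral_norm_eq_lintegral_enorm (Lp.aestronglyMeasurable u),
      eLpNorm_one_eq_lintegral_enorm]
  rw [h2, Lp.norm_def]
  exact ENNReal.toReal_mono (Lp.eLpNorm_ne_top u) h1

theorem lp_coeFn_sum (v : ℕ → Lp ℝ p μ) (b : ℕ → ℝ) (F : Finset ℕ) :
    (⇑(∑ n ∈ F, b n • v n : Lp ℝ p μ)) =ᵐ[μ] fun t => ∑ n ∈ F, b n * v n t := by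
  classical
  induction F using Finset.induction_on with
  | empty => simp only [Finset.sum_empty]; exact Lp.coeFn_zero ℝ p μ
  | insert m s h ih =>
    rw [Finset.sum_insert h]
    have h1 := Lp.coeFn_add (b m • v m) (∑ n ∈ s, b n • v n)
    have h2 := Lp.coeFn_smul (b m) (v m)
    filter_upwards [h1, h2, ih] with t ht1 ht2 ht3
    simp only [ht1, Pi.add_apply, ht2, Pi.smul_apply, smul_eq_mul, ht3,
      Finset.sum_insert h]
end helpers


set_option maxHeartbeats 1000000 in
theorem stmt14_aux {α : Type*} [MeasurableSpace α] {μ : Measure α} [IsProbabilityMeasure μ]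
    {p : ℝ≥0∞} [Fact (1 ≤ p)]
    (f : ℕ → Lp ℝ p μ) (g : ℕ → StrongDual ℝ (Lp ℝ p μ))
    (hpos : ∀ n, 0 ≤ᵐ[μ] ⇑(f n))
    (hqb : ∀ x ∈ (Submodule.span ℝ (Set.range f)).topologicalClosure,
      HasSum (fun n => g n x • f n) x)
    (y : ℕ → Lp ℝ p μ)
    (hy : ∀ n, y n ∈ (Submodule.span ℝ (Set.range f)).topologicalClosure)
    (hwnull : ∀ φ : StrongDual ℝ (Lp ℝ p μ), Tendsto (fun n => φ (y n)) atTop (𝓝 0)) :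
    Tendsto (fun n => ∫ t, |y n t| ∂μ) atTop (𝓝 0) := by
  classical
  set S : Submodule ℝ (Lp ℝ p μ) := (Submodule.span ℝ (Set.range f)).topologicalClosure with hS
  haveI : CompleteSpace ↥S :=
    IsClosed.completeSpace_coe (hs := Submodule.isClosed_topologicalClosure _)
  -- the partial-sum operators
  set T : Finset ℕ → ↥S →L[ℝ] (Lp ℝ p μ) :=
    fun F => ∑ n ∈ F, ((g n).comp (Submodule.subtypeL S)).smulRight (f n) with hT
  have hTapply : ∀ (F : Finset ℕ) (x : ↥S), T F x = ∑ n ∈ F, g n ↑x • f n := by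
    intro F x
    rw [hT]
    simp [ContinuousLinearMap.sum_apply]
  -- uniform boundedness
  have hptw : ∀ x : ↥S, ∃ C, ∀ F : Finset ℕ, ‖T F x‖ ≤ C := by
    intro x
    obtain ⟨C, hC⟩ := hasSum_bdd_partial _ _ (hqb ↑x x.2)
    exact ⟨C, fun F => by rw [hTapply]; exact hC F⟩
  obtain ⟨K, hK⟩ := banach_steinhaus hptw
  -- the ℓ¹ coefficients
  set c : ℕ → ℝ := fun n => ∫ t, f n t ∂μ with hc
  have hcnn : ∀ n, 0 ≤ c n := fun n => integral_nonneg_of_ae (hpos n)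
  have hintf : ∀ n, Integrable (⇑(f n)) μ := fun n => lp_integrable (f n)
  have habsf : ∀ n, ∫ t, |f n t| ∂μ = c n := by
    intro n
    rw [hc]
    exact integral_congr_ae ((hpos n).mono fun t ht => abs_of_nonneg ht)
  -- integral of a finite combination
  have hintsum : ∀ (b : ℕ → ℝ) (F : Finset ℕ),
      ∫ t, (∑ n ∈ F, b n • f n : Lp ℝ p μ) t ∂μ = ∑ n ∈ F, b n * c n := by
    intro b F
    rw [integral_congr_ae (lp_coeFn_sum f b F), integral_finset_sum _
      (fun n _ => (hintf n).const_mul (b n))]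
    exact Finset.sum_congr rfl fun n _ => integral_const_mul (b n) _
  -- key finite bound
  have hkey : ∀ (x : ↥S) (F : Finset ℕ), ∑ n ∈ F, |g n ↑x| * c n ≤ 2 * K * ‖x‖ := by
    intro x F
    have hsplit : ∑ n ∈ F, |g n ↑x| * c n =
        (∑ n ∈ F.filter fun n => 0 ≤ g n ↑x, g n ↑x * c n) +
          ∑ n ∈ F.filter fun n => ¬ 0 ≤ g n ↑x, -(g n ↑x) * c n := by
      rw [← Finset.sum_filter_add_sum_filter_not F (fun n => 0 ≤ g n ↑x)
        (fun n => |g n ↑x| * c n)]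
      congr 1
      · exact Finset.sum_congr rfl fun n hn => by
          rw [abs_of_nonneg (Finset.mem_filter.1 hn).2]
      · exact Finset.sum_congr rfl fun n hn => by
          rw [abs_of_neg (lt_of_not_ge (Finset.mem_filter.1 hn).2)]
    have hbound : ∀ G : Finset ℕ, |∑ n ∈ G, g n ↑x * c n| ≤ K * ‖x‖ := by
      intro G
      have h1 : ∑ n ∈ G, g n ↑x * c n = ∫ t, (T G x) t ∂μ := by
        rw [hTapply]
        exact (hintsum (fun n => g n ↑x) G).symm
      have h2 : |∫ t, (T G x) t ∂μ| ≤ ∫ t, |(T G x) t| ∂μ := by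
        simpa [Real.norm_eq_abs] using norm_integral_le_integral_norm (μ := μ) (⇑(T G x))
      have h3 : ∫ t, |(T G x) t| ∂μ ≤ ‖T G x‖ := lp_int_abs_le _
      have h4 : ‖T G x‖ ≤ K * ‖x‖ := le_trans ((T G).le_opNorm x)
        (mul_le_mul_of_nonneg_right (hK G) (norm_nonneg x))
      rw [h1]
      exact le_trans h2 (le_trans h3 h4)
    rw [hsplit]
    have e1 := abs_le.1 (hbound (F.filter fun n => 0 ≤ g n ↑x))
    have e2 := abs_le.1 (hbound (F.filter fun n => ¬ 0 ≤ g n ↑x))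
    have e3 : ∑ n ∈ F.filter (fun n => ¬ 0 ≤ g n ↑x), -(g n ↑x) * c n =
        -∑ n ∈ F.filter (fun n => ¬ 0 ≤ g n ↑x), g n ↑x * c n := by
      rw [← Finset.sum_neg_distrib]
      exact Finset.sum_congr rfl fun n _ => by ring
    rw [e3]
    linarith [e1.2, e2.1]
  -- summability of the coefficients
  have hsummable : ∀ x : ↥S, Summable fun n => |g n ↑x| * c n := fun x =>
    summable_of_sum_le (fun n => mul_nonneg (abs_nonneg _) (hcnn n)) (hkey x)
  have htsum_le : ∀ x : ↥S, ∑' n, |g n ↑x| * c n ≤ 2 * K * ‖x‖ := fun x =>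
    Summable.tsum_le_of_sum_le (hsummable x) (hkey x)
  -- L1 bound via tails
  have hL1 : ∀ x : ↥S, ∫ t, |(↑x : Lp ℝ p μ) t| ∂μ ≤ ∑' n, |g n ↑x| * c n := by
    intro x
    refine le_of_forall_pos_le_add fun ε hε => ?_
    have hhs := hqb ↑x x.2
    rw [HasSum, SummationFilter.unconditional_filter, Metric.tendsto_atTop] at hhs
    obtain ⟨F, hF⟩ := hhs ε hε
    have hdist := hF F le_rfl
    set u : Lp ℝ p μ := ↑x - T F x with hu
    have hunorm : ‖u‖ < ε := by
      rw [hu, hTapply, norm_sub_rev]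
      rw [dist_eq_norm] at hdist
      exact hdist
    have hae : ∀ᵐ t ∂μ, |(↑x : Lp ℝ p μ) t| ≤ |u t| + |(T F x) t| := by
      filter_upwards [Lp.coeFn_sub (↑x : Lp ℝ p μ) (T F x)] with t ht
      have h : (↑x : Lp ℝ p μ) t = u t + (T F x) t := by
        rw [hu, ht]
        simp
      rw [h]
      exact abs_add_le _ _
    have hint1 : ∫ t, |(↑x : Lp ℝ p μ) t| ∂μ ≤ ∫ t, (|u t| + |(T F x) t|) ∂μ :=
      integral_mono_ae (lp_integrable _).abs ((lp_integrable u).abs.add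
        (lp_integrable (T F x)).abs) hae
    rw [integral_add (lp_integrable u).abs (lp_integrable (T F x)).abs] at hint1
    have hint2 : ∫ t, |(T F x) t| ∂μ ≤ ∑ n ∈ F, |g n ↑x| * c n := by
      have hco : (⇑(T F x)) =ᵐ[μ] fun t => ∑ n ∈ F, g n ↑x * f n t := by
        rw [hTapply]
        exact lp_coeFn_sum f (fun n => g n ↑x) F
      have h5 : ∫ t, |(T F x) t| ∂μ ≤ ∫ t, ∑ n ∈ F, |g n ↑x| * |f n t| ∂μ := by
        refine integral_mono_ae (lp_integrable _).abs ?_ ?_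
        · exact integrable_finset_sum _ fun n _ => ((hintf n).abs.const_mul _)
        · filter_upwards [hco] with t ht
          rw [ht]
          exact le_trans (Finset.abs_sum_le_sum_abs _ _)
            (le_of_eq (Finset.sum_congr rfl fun n _ => abs_mul _ _))
      rw [integral_finset_sum _ (fun n _ => ((hintf n).abs.const_mul _))] at h5
      refine le_trans h5 (le_of_eq (Finset.sum_congr rfl fun n _ => ?_))
      rw [integral_const_mul, habsf n]
    have hsum_le_tsum : ∑ n ∈ F, |g n ↑x| * c n ≤ ∑' n, |g n ↑x| * c n :=
      Summable.sum_le_tsum F (fun n _ => mul_nonneg (abs_nonneg _) (hcnn n)) (hsummable x)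
    have hintu : ∫ t, |u t| ∂μ ≤ ε := le_trans (lp_int_abs_le u) (le_of_lt hunorm)
    linarith
  -- weak-null transfer to the ℓ¹ coefficients, then Schur
  have habs_sb : ∀ (b : ℕ → ℝ), (∀ n, |b n| ≤ 1) → ∀ x : ↥S,
      Summable fun n => |b n * (g n ↑x * c n)| := by
    intro b hb x
    refine Summable.of_nonneg_of_le (fun n => abs_nonneg _) (fun n => ?_) (hsummable x)
    calc |b n * (g n ↑x * c n)| = |b n| * |g n ↑x * c n| := abs_mul _ _
      _ ≤ 1 * |g n ↑x * c n| := mul_le_mul_of_nonneg_right (hb n) (abs_nonneg _)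
      _ = |g n ↑x| * c n := by rw [one_mul, abs_mul, abs_of_nonneg (hcnn n)]
  have hschur : Tendsto (fun k => ∑' n, |g n (y k) * c n|) atTop (𝓝 0) := by
    apply schur_aux
    · intro k
      have h := hsummable ⟨y k, hy k⟩
      refine h.congr fun n => ?_
      rw [abs_mul, abs_of_nonneg (hcnn n)]
    · intro b hb
      have hsb : ∀ x : ↥S, Summable fun n => b n * (g n ↑x * c n) := fun x =>
        (habs_sb b hb x).of_abs
      set L : ↥S →ₗ[ℝ] ℝ :=
        { toFun := fun x => ∑' n, b n * (g n ↑x * c n)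
          map_add' := by
            intro x₁ x₂
            have h : ∀ n, b n * (g n ↑(x₁ + x₂) * c n)
                = b n * (g n ↑x₁ * c n) + b n * (g n ↑x₂ * c n) := by
              intro n
              have hg : g n ↑(x₁ + x₂) = g n ↑x₁ + g n ↑x₂ := by
                rw [Submodule.coe_add, map_add]
              rw [hg]; ring
            simp only [h]
            exact Summable.tsum_add (hsb x₁) (hsb x₂)
          map_smul' := by
            intro r x₀
            have h : ∀ n, b n * (g n ↑(r • x₀) * c n) = r * (b n * (g n ↑x₀ * c n)) := by
              intro n
              have hg : g n ↑(r • x₀) = r * g n ↑x₀ := by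
                rw [Submodule.coe_smul]
                simpa using (g n).map_smul r (↑x₀ : Lp ℝ p μ)
              rw [hg]; ring
            simp only [h, RingHom.id_apply, smul_eq_mul]
            exact tsum_mul_left } with hLdef
      have hLbound : ∀ x : ↥S, ‖L x‖ ≤ (2 * K) * ‖x‖ := by
        intro x
        have h1 : ‖L x‖ ≤ ∑' n, |b n * (g n ↑x * c n)| := by
          have := norm_tsum_le_tsum_norm (f := fun n => b n * (g n ↑x * c n))
            (by simpa only [Real.norm_eq_abs] using habs_sb b hb x)
          simp only [Real.norm_eq_abs] at this ⊢; exact this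
        have h2 : ∑' n, |b n * (g n ↑x * c n)| ≤ ∑' n, |g n ↑x| * c n := by
          refine Summable.tsum_le_tsum (fun n => ?_) (habs_sb b hb x) (hsummable x)
          calc |b n * (g n ↑x * c n)| = |b n| * |g n ↑x * c n| := abs_mul _ _
            _ ≤ 1 * |g n ↑x * c n| := mul_le_mul_of_nonneg_right (hb n) (abs_nonneg _)
            _ = |g n ↑x| * c n := by rw [one_mul, abs_mul, abs_of_nonneg (hcnn n)]
        exact le_trans h1 (le_trans h2 (htsum_le x))
      set φb : ↥S →L[ℝ] ℝ := L.mkContinuous (2 * K) hLbound with hφb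
      obtain ⟨Φ, hΦ, -⟩ := exists_extension_norm_eq S φb
      have h := hwnull Φ
      have heq : ∀ k, Φ (y k) = ∑' n, b n * (g n (y k) * c n) := fun k =>
        hΦ ⟨y k, hy k⟩
      simp only [heq] at h
      exact h
  -- conclusion
  have hfinal : ∀ k, ∫ t, |y k t| ∂μ ≤ ∑' n, |g n (y k) * c n| := by
    intro k
    have h1 := hL1 ⟨y k, hy k⟩
    refine le_trans h1 (le_of_eq (tsum_congr fun n => ?_))
    rw [abs_mul, abs_of_nonneg (hcnn n)]
  exact squeeze_zero (fun k => integral_nonneg fun t => abs_nonneg _) hfinal hschur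

/-- let `1 < p < ∞` and let `(f_n, g_n)` be an unconditionally quasibasic
sequence in `L_p(0,1)` with each `f_n ≥ 0` a.e.  If `(y_n)` is a normalized weakly null
sequence in the closed linear span of `{f_n}`, then `‖y_n‖_{L₁} → 0`. -/
theorem stmt14 (p : ℝ≥0∞) [Fact (1 ≤ p)] (hp1 : 1 < p) (hp2 : p ≠ ∞)
    (f : ℕ → Lp ℝ p (volume.restrict (Set.Ioo (0 : ℝ) 1)))
    (g : ℕ → StrongDual ℝ (Lp ℝ p (volume.restrict (Set.Ioo (0 : ℝ) 1))))
    (hpos : ∀ n, 0 ≤ᵐ[volume.restrict (Set.Ioo (0 : ℝ) 1)] ⇑(f n))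
    (hqb : ∀ x ∈ (Submodule.span ℝ (Set.range f)).topologicalClosure,
      HasSum (fun n => g n x • f n) x)
    (y : ℕ → Lp ℝ p (volume.restrict (Set.Ioo (0 : ℝ) 1)))
    (hy : ∀ n, y n ∈ (Submodule.span ℝ (Set.range f)).topologicalClosure)
    (hynorm : ∀ n, ‖y n‖ = 1)
    (hwnull : ∀ φ : StrongDual ℝ (Lp ℝ p (volume.restrict (Set.Ioo (0 : ℝ) 1))),
      Tendsto (fun n => φ (y n)) atTop (𝓝 0)) :
    Tendsto (fun n => ∫ t, |y n t| ∂(volume.restrict (Set.Ioo (0 : ℝ) 1))) atTop (𝓝 0) := by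
  haveI : IsProbabilityMeasure (volume.restrict (Set.Ioo (0 : ℝ) 1)) :=
    ⟨by simp [Real.volume_Ioo]⟩
  exact stmt14_aux f g hpos hqb y hy hwnull
end

section
/- Let (f_n, g_n) be an unconditionally quasibasic sequence in L_1(0,1) with each f_n ≥ 0 a.e. and ‖f_n‖_1 = 1. Then there is a constant K such that for every y in the closed linear span [f_n], ‖y‖_1 ≤ ‖∑_n |⟨g_n, y⟩| f_n‖_1 ≤ K ‖y‖_1; consequently the map y ↦ (⟨g_n, y⟩)_{n} is an isomorphic embedding of [f_n] into ℓ_1. -/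
open MeasureTheory Filter Topology ENNReal

set_option maxHeartbeats 1000000

/-- let `(f_n, g_n)` be an unconditionally quasibasic sequence in `L₁(0,1)`
with each `f_n ≥ 0` a.e. and `‖f_n‖₁ = 1`.  Then there is a constant `K` with
`‖y‖₁ ≤ ‖∑ |⟨g_n, y⟩| f_n‖₁ ≤ K ‖y‖₁` for all `y` in the closed linear span `[f_n]`;
consequently `y ↦ (⟨g_n, y⟩)ₙ` is an isomorphic embedding of `[f_n]` into `ℓ₁`. -/
theorem stmt17
    (f : ℕ → Lp ℝ 1 (volume.restrict (Set.Ioo (0 : ℝ) 1)))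
    (g : ℕ → StrongDual ℝ (Lp ℝ 1 (volume.restrict (Set.Ioo (0 : ℝ) 1))))
    (hnorm : ∀ n, ‖f n‖ = 1)
    (hpos : ∀ n, 0 ≤ᵐ[volume.restrict (Set.Ioo (0 : ℝ) 1)] ⇑(f n))
    (hqb : ∀ x ∈ (Submodule.span ℝ (Set.range f)).topologicalClosure,
      HasSum (fun n => g n x • f n) x) :
    ∃ K : ℝ,
      (∀ y ∈ (Submodule.span ℝ (Set.range f)).topologicalClosure,
        Summable (fun n => |g n y| • f n) ∧
        ‖y‖ ≤ ‖∑' n, |g n y| • f n‖ ∧ ‖∑' n, |g n y| • f n‖ ≤ K * ‖y‖) ∧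
      ∃ (T : (Submodule.span ℝ (Set.range f)).topologicalClosure →L[ℝ]
          lp (fun _ : ℕ => ℝ) 1) (c : ℝ), 0 < c ∧
        (∀ (y : (Submodule.span ℝ (Set.range f)).topologicalClosure) (n : ℕ),
          (T y : ∀ _ : ℕ, ℝ) n = g n (y : Lp ℝ 1 (volume.restrict (Set.Ioo (0 : ℝ) 1)))) ∧
        ∀ y : (Submodule.span ℝ (Set.range f)).topologicalClosure, c * ‖y‖ ≤ ‖T y‖ := by
  set M := (Submodule.span ℝ (Set.range f)).topologicalClosure with hMdef
  haveI : CompleteSpace M := (Submodule.isClosed_topologicalClosure _).completeSpace_coe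
  -- the integral functional
  set Φ : Lp ℝ 1 (volume.restrict (Set.Ioo (0 : ℝ) 1)) →L[ℝ] ℝ := L1.integralCLM with hΦdef
  have hΦle : ∀ h : Lp ℝ 1 (volume.restrict (Set.Ioo (0 : ℝ) 1)), Φ h ≤ ‖h‖ := by
    intro h
    calc Φ h ≤ ‖Φ h‖ := le_abs_self _
    _ ≤ ‖Φ‖ * ‖h‖ := Φ.le_opNorm h
    _ ≤ 1 * ‖h‖ := by
        gcongr
        exact L1.norm_Integral_le_one
    _ = ‖h‖ := one_mul _
  have hΦeq : ∀ h : Lp ℝ 1 (volume.restrict (Set.Ioo (0 : ℝ) 1)), (0 ≤ᵐ[volume.restrict (Set.Ioo (0 : ℝ) 1)] ⇑h) → Φ h = ‖h‖ := by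
    intro h hh
    have h1 : Φ h = ∫ a, h a ∂(volume.restrict (Set.Ioo (0 : ℝ) 1)) := by
      rw [hΦdef, ← L1.integral_eq h, L1.integral_eq_integral]
    rw [h1, L1.norm_eq_integral_norm]
    refine integral_congr_ae ?_
    filter_upwards [hh] with a ha
    exact (Real.norm_of_nonneg ha).symm
  have hΦf : ∀ n, Φ (f n) = 1 := fun n => (hΦeq (f n) (hpos n)).trans (hnorm n)
  -- norm of a single term
  have hns : ∀ (b : ℝ) (n : ℕ), ‖b • f n‖ = |b| := by
    intro b n
    rw [norm_smul, hnorm n, mul_one, Real.norm_eq_abs]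
  -- Lemma A : norm of nonneg finite combinations
  have normsum : ∀ (F : Finset ℕ) (c : ℕ → ℝ), (∀ n ∈ F, 0 ≤ c n) →
      ‖∑ n ∈ F, c n • f n‖ = ∑ n ∈ F, c n := by
    intro F c hc
    have hPhiSum : Φ (∑ n ∈ F, c n • f n) = ∑ n ∈ F, c n := by
      rw [map_sum]
      refine Finset.sum_congr rfl fun n hn => ?_
      rw [Φ.map_smul, hΦf, smul_eq_mul, mul_one]
    refine le_antisymm ?_ ?_
    · calc ‖∑ n ∈ F, c n • f n‖ ≤ ∑ n ∈ F, ‖c n • f n‖ := norm_sum_le _ _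
      _ = ∑ n ∈ F, c n := by
          refine Finset.sum_congr rfl fun n hn => ?_
          rw [hns, abs_of_nonneg (hc n hn)]
    · rw [← hPhiSum]
      exact hΦle _
  -- Step 1 : summability of coefficients
  have hsummA : ∀ y ∈ M, Summable (fun n => |g n y|) := by
    intro y hy
    have hsum : Summable (fun n => g n y • f n) := (hqb y hy).summable
    obtain ⟨s, hs⟩ := (summable_iff_vanishing.mp hsum) (Metric.ball 0 1)
      (Metric.ball_mem_nhds 0 one_pos)
    set B : ℝ := (∑ n ∈ s, |g n y|) + 1 with hBdef
    have hB : ∀ F : Finset ℕ, ‖∑ n ∈ F, g n y • f n‖ ≤ B := by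
      intro F
      have hsplit : ∑ n ∈ F, g n y • f n
          = (∑ n ∈ F ∩ s, g n y • f n) + ∑ n ∈ F \ s, g n y • f n := by
        rw [Finset.sum_inter_add_sum_sdiff]
      rw [hsplit]
      have h1 : ‖∑ n ∈ F ∩ s, g n y • f n‖ ≤ ∑ n ∈ s, |g n y| := by
        calc ‖∑ n ∈ F ∩ s, g n y • f n‖ ≤ ∑ n ∈ F ∩ s, ‖g n y • f n‖ := norm_sum_le _ _
        _ = ∑ n ∈ F ∩ s, |g n y| := Finset.sum_congr rfl fun n _ => hns _ n
        _ ≤ ∑ n ∈ s, |g n y| :=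
            Finset.sum_le_sum_of_subset_of_nonneg (Finset.inter_subset_right)
              (fun n _ _ => abs_nonneg _)
      have h2 : ‖∑ n ∈ F \ s, g n y • f n‖ ≤ 1 := by
        have := hs (F \ s) (Finset.sdiff_disjoint)
        rw [Metric.mem_ball, dist_zero_right] at this
        exact this.le
      calc ‖(∑ n ∈ F ∩ s, g n y • f n) + ∑ n ∈ F \ s, g n y • f n‖
          ≤ ‖∑ n ∈ F ∩ s, g n y • f n‖ + ‖∑ n ∈ F \ s, g n y • f n‖ := norm_add_le _ _
      _ ≤ (∑ n ∈ s, |g n y|) + 1 := add_le_add h1 h2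
    refine summable_of_sum_le (c := B + B) (fun n => abs_nonneg _) (fun F => ?_)
    have hFsplit : ∑ n ∈ F, |g n y|
        = (∑ n ∈ F.filter (fun n => 0 ≤ g n y), g n y)
          + ∑ n ∈ F.filter (fun n => ¬ 0 ≤ g n y), (- g n y) := by
      rw [← Finset.sum_filter_add_sum_filter_not F (fun n => 0 ≤ g n y)]
      congr 1
      · exact Finset.sum_congr rfl fun n hn => abs_of_nonneg (Finset.mem_filter.mp hn).2
      · refine Finset.sum_congr rfl fun n hn => ?_
        exact abs_of_neg (lt_of_not_ge (Finset.mem_filter.mp hn).2)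
    have hp : ∑ n ∈ F.filter (fun n => 0 ≤ g n y), g n y ≤ B := by
      rw [← normsum _ _ (fun n hn => (Finset.mem_filter.mp hn).2)]
      exact hB _
    have hq : ∑ n ∈ F.filter (fun n => ¬ 0 ≤ g n y), (- g n y) ≤ B := by
      rw [← normsum _ (fun n => - g n y)
        (fun n hn => neg_nonneg.mpr (le_of_lt (lt_of_not_ge (Finset.mem_filter.mp hn).2)))]
      have hneg : (∑ n ∈ F.filter (fun n => ¬ 0 ≤ g n y), (- g n y) • f n)
          = - ∑ n ∈ F.filter (fun n => ¬ 0 ≤ g n y), g n y • f n := by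
        rw [← Finset.sum_neg_distrib]
        exact Finset.sum_congr rfl fun n _ => neg_smul _ _
      rw [hneg, norm_neg]
      exact hB _
    rw [hFsplit]; exact add_le_add hp hq
  -- Step 2 : Banach-Steinhaus
  have hsgn1 : ∀ b : Bool, |(if b then (1:ℝ) else -1)| = 1 := by
    intro b; cases b <;> norm_num
  set T : (Finset ℕ × (ℕ → Bool)) → M →L[ℝ] Lp ℝ 1 (volume.restrict (Set.Ioo (0 : ℝ) 1)) := fun p =>
    ∑ n ∈ p.1, (if p.2 n then (1:ℝ) else -1) • (((g n).comp M.subtypeL).smulRight (f n))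
    with hTdef
  have hTapp : ∀ p (x : M),
      T p x = ∑ n ∈ p.1, ((if p.2 n then (1:ℝ) else -1) * g n (x : Lp ℝ 1 (volume.restrict (Set.Ioo (0 : ℝ) 1)))) • f n := by
    intro p x
    rw [hTdef]
    simp only [ContinuousLinearMap.sum_apply, ContinuousLinearMap.smul_apply,
      ContinuousLinearMap.smulRight_apply, ContinuousLinearMap.comp_apply,
      Submodule.subtypeL_apply]
    exact Finset.sum_congr rfl fun n _ => (mul_smul _ _ _).symm
  have hpt : ∀ x : M, ∃ Cx : ℝ, ∀ p, ‖T p x‖ ≤ Cx := by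
    intro x
    refine ⟨∑' n, |g n (x : Lp ℝ 1 (volume.restrict (Set.Ioo (0 : ℝ) 1)))|, fun p => ?_⟩
    rw [hTapp]
    calc ‖∑ n ∈ p.1, ((if p.2 n then (1:ℝ) else -1) * g n (x : Lp ℝ 1 (volume.restrict (Set.Ioo (0 : ℝ) 1)))) • f n‖
        ≤ ∑ n ∈ p.1, ‖((if p.2 n then (1:ℝ) else -1) * g n (x : Lp ℝ 1 (volume.restrict (Set.Ioo (0 : ℝ) 1)))) • f n‖ :=
          norm_sum_le _ _
    _ = ∑ n ∈ p.1, |g n (x : Lp ℝ 1 (volume.restrict (Set.Ioo (0 : ℝ) 1)))| := by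
        refine Finset.sum_congr rfl fun n _ => ?_
        rw [hns, abs_mul, hsgn1, one_mul]
    _ ≤ ∑' n, |g n (x : Lp ℝ 1 (volume.restrict (Set.Ioo (0 : ℝ) 1)))| :=
        Summable.sum_le_tsum p.1 (fun n _ => abs_nonneg _) (hsummA _ x.2)
  obtain ⟨C, hC⟩ := banach_steinhaus hpt
  -- Step 3 : uniform coefficient bound
  have hCoef : ∀ y (hy : y ∈ M), ∑' n, |g n y| ≤ C * ‖y‖ := by
    intro y hy
    refine Summable.tsum_le_of_sum_le (hsummA y hy) (fun F => ?_)
    have h1 : ∑ n ∈ F, |g n y| = ‖T (F, fun n => decide (0 ≤ g n y)) (⟨y, hy⟩ : M)‖ := by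
      rw [hTapp]
      have hcoe : ((⟨y, hy⟩ : M) : Lp ℝ 1 (volume.restrict (Set.Ioo (0 : ℝ) 1))) = y := rfl
      rw [show (∑ n ∈ F, ((if decide (0 ≤ g n y) then (1:ℝ) else -1)
            * g n (((⟨y, hy⟩ : M) : Lp ℝ 1 (volume.restrict (Set.Ioo (0 : ℝ) 1))))) • f n) = ∑ n ∈ F, |g n y| • f n from
        Finset.sum_congr rfl fun n _ => by
          rw [hcoe]
          by_cases h : 0 ≤ g n y
          · simp [h, abs_of_nonneg h]
          · simp [h, abs_of_neg (lt_of_not_ge h)]]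
      exact (normsum F _ (fun n _ => abs_nonneg _)).symm
    rw [h1]
    calc ‖T (F, fun n => decide (0 ≤ g n y)) (⟨y, hy⟩ : M)‖
        ≤ ‖T (F, fun n => decide (0 ≤ g n y))‖ * ‖(⟨y, hy⟩ : M)‖ :=
          (T _).le_opNorm _
    _ ≤ C * ‖(⟨y, hy⟩ : M)‖ := mul_le_mul_of_nonneg_right (hC _) (norm_nonneg _)
    _ = C * ‖y‖ := rfl
  -- Step 4 : summability and the norm identity for the modulus series
  have hnMod : ∀ y : Lp ℝ 1 (volume.restrict (Set.Ioo (0 : ℝ) 1)), (fun n => ‖|g n y| • f n‖) = fun n => |g n y| := by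
    intro y; funext n; rw [hns, abs_abs]
  have hsummMod : ∀ y ∈ M, Summable (fun n => |g n y| • f n) := by
    intro y hy
    refine Summable.of_norm ?_
    rw [hnMod]
    exact hsummA y hy
  have htsumNorm : ∀ y ∈ M, ‖∑' n, |g n y| • f n‖ = ∑' n, |g n y| := by
    intro y hy
    refine le_antisymm ?_ ?_
    · calc ‖∑' n, |g n y| • f n‖ ≤ ∑' n, ‖|g n y| • f n‖ :=
          norm_tsum_le_tsum_norm (by rw [hnMod]; exact hsummA y hy)
      _ = ∑' n, |g n y| := by rw [hnMod]
    · have h2 : Φ (∑' n, |g n y| • f n) = ∑' n, |g n y| := by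
        rw [Φ.map_tsum (hsummMod y hy)]
        refine tsum_congr fun n => ?_
        rw [Φ.map_smul, hΦf, smul_eq_mul, mul_one]
      rw [← h2]
      exact hΦle _
  have hlow : ∀ y ∈ M, ‖y‖ ≤ ∑' n, |g n y| := by
    intro y hy
    have h1 := (hqb y hy).tsum_eq
    calc ‖y‖ = ‖∑' n, g n y • f n‖ := by rw [h1]
    _ ≤ ∑' n, ‖g n y • f n‖ := norm_tsum_le_tsum_norm (by
        have he : (fun n => ‖g n y • f n‖) = fun n => |g n y| := by funext n; rw [hns]
        rw [he]; exact hsummA y hy)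
    _ = ∑' n, |g n y| := tsum_congr fun n => hns _ n
  refine ⟨C, fun y hy => ⟨hsummMod y hy, ?_, ?_⟩, ?_⟩
  · rw [htsumNorm y hy]; exact hlow y hy
  · rw [htsumNorm y hy]; exact hCoef y hy
  -- the embedding into ℓ₁
  · have hmem : ∀ y : M, Memℓp (fun n => g n (y : Lp ℝ 1 (volume.restrict (Set.Ioo (0 : ℝ) 1)))) 1 := by
      intro y
      refine memℓp_gen ?_
      have he : (fun n => ‖g n (y : Lp ℝ 1 (volume.restrict (Set.Ioo (0 : ℝ) 1)))‖ ^ (1 : ℝ≥0∞).toReal)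
          = fun n => |g n (y : Lp ℝ 1 (volume.restrict (Set.Ioo (0 : ℝ) 1)))| := by
        funext n; simp [Real.norm_eq_abs]
      rw [he]
      exact hsummA _ y.2
    set Tlin : M →ₗ[ℝ] lp (fun _ : ℕ => ℝ) 1 :=
      { toFun := fun y => ⟨fun n => g n (y : Lp ℝ 1 (volume.restrict (Set.Ioo (0 : ℝ) 1))), hmem y⟩
        map_add' := by
          intro y z
          apply Subtype.ext
          funext n
          simp only [lp.coeFn_add, Pi.add_apply]
          simp
        map_smul' := by
          intro c y
          apply Subtype.ext
          funext n
          simp only [lp.coeFn_smul, Pi.smul_apply]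
          simp } with hTlindef
    have hTlinNorm : ∀ y : M, ‖Tlin y‖ = ∑' n, |g n (y : Lp ℝ 1 (volume.restrict (Set.Ioo (0 : ℝ) 1)))| := by
      intro y
      rw [lp.norm_eq_tsum_rpow (by norm_num) (Tlin y)]
      have h1 : (1 : ℝ≥0∞).toReal = 1 := rfl
      simp only [h1, Real.rpow_one, one_div_one]
      exact tsum_congr fun n => Real.norm_eq_abs _
    refine ⟨LinearMap.mkContinuous Tlin C (fun y => ?_), 1, one_pos, fun y n => rfl, fun y => ?_⟩
    · rw [hTlinNorm y]
      exact hCoef _ y.2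
    · rw [one_mul, LinearMap.mkContinuous_apply, hTlinNorm y]
      exact hlow _ y.2
end
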